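/- arXiv:1012.2811 — 9 statements merged into one kernel-verified Lean document; each statement's English description precedes it below -/
import Mathlib

section
/- Let $D$ be a linear subspace of $\ell^\infty(\Omega)$ and $E : D \to \mathbb{R}$ a map. Then $E$ is coherent (i.e., for all $n \ge 1$, reals $c_1,\dots,c_n$ and $X_1,\dots,X_n \in D$, $\sup_{\omega \in \Omega} \sum_{i=1}^n c_i (X_i(\omega) - E(X_i)) \ge 0$) if and only if $E$ is linear and internal (i.e., $\inf X \le E(X) \le \sup X$ for all $X \in D$). -/
open MeasureTheory Set

namespace FAP

variable {Ω : Type*}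

/-- A finitely additive probability on the power set of `Ω`. -/
def IsFAP (P : Set Ω → ℝ) : Prop :=
  P univ = 1 ∧ (∀ A : Set Ω, 0 ≤ P A) ∧
    ∀ A B : Set Ω, Disjoint A B → P (A ∪ B) = P A + P B

/-- A finitely additive probability on the σ-field of a measurable space `Ω`. -/
def IsFAPm [MeasurableSpace Ω] (P : Set Ω → ℝ) : Prop :=
  P univ = 1 ∧ (∀ A : Set Ω, MeasurableSet A → 0 ≤ P A) ∧
    ∀ A B : Set Ω, MeasurableSet A → MeasurableSet B → Disjoint A B →
      P (A ∪ B) = P A + P B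

/-- The finitely additive integral of a bounded function `X` with respect to a
finitely additive probability `P`, defined via the layer-cake formula
(which agrees with the uniform-limit-of-simple-functions definition). -/
noncomputable def faIntegral (P : Set Ω → ℝ) (X : Ω → ℝ) : ℝ :=
  (∫ t in Ioi (0 : ℝ), P {ω | t < X ω}) -
    (∫ t in Iio (0 : ℝ), (1 - P {ω | t < X ω}))

/-- `P` is absolutely continuous with respect to the (countably additive) measure `P₀`. -/
def AC [MeasurableSpace Ω] (P : Set Ω → ℝ) (P₀ : Measure Ω) : Prop :=
  ∀ A : Set Ω, MeasurableSet A → P₀ A = 0 → P A = 0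

/-- `P` and `P₀` have the same null sets. -/
def EquivP [MeasurableSpace Ω] (P : Set Ω → ℝ) (P₀ : Measure Ω) : Prop :=
  ∀ A : Set Ω, MeasurableSet A → (P A = 0 ↔ P₀ A = 0)

/-- `P` is pure: the only countably additive measure `Γ` with `0 ≤ Γ ≤ P` is `Γ = 0`. -/
def IsPure [MeasurableSpace Ω] (P : Set Ω → ℝ) : Prop :=
  ∀ Γ : Measure Ω, (∀ A : Set Ω, MeasurableSet A → Γ A ≤ ENNReal.ofReal (P A)) → Γ = 0

/-- The essential supremum `inf {a : P₀(X > a) = 0}` of a random variable `X`. -/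
noncomputable def essSupR [MeasurableSpace Ω] (P₀ : Measure Ω) (X : Ω → ℝ) : ℝ :=
  sInf {a : ℝ | P₀ {ω | a < X ω} = 0}

end FAP

open FAP

/-- E on a linear subspace D of bounded functions is coherent iff
it is linear and internal. -/
theorem stmt0 {Ω : Type*} [Nonempty Ω]
    (D : Submodule ℝ (Ω → ℝ))
    (hbdd : ∀ X ∈ D, ∃ M : ℝ, ∀ ω, |X ω| ≤ M)
    (E : (Ω → ℝ) → ℝ) :
    (∀ (n : ℕ), 1 ≤ n → ∀ (c : Fin n → ℝ) (X : Fin n → (Ω → ℝ)),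
        (∀ i, X i ∈ D) →
        0 ≤ ⨆ ω : Ω, ∑ i, c i * (X i ω - E (X i)))
    ↔ ((∀ X ∈ D, ∀ Y ∈ D, E (X + Y) = E X + E Y) ∧
       (∀ (c : ℝ), ∀ X ∈ D, E (c • X) = c * E X) ∧
       (∀ X ∈ D, (⨅ ω : Ω, X ω) ≤ E X ∧ E X ≤ ⨆ ω : Ω, X ω)) := by
  constructor
  · intro hcoh
    refine ⟨?_, ?_, ?_⟩
    · intro X hX Y hY
      have hmem : ∀ i, (![X, Y, X + Y] : Fin 3 → (Ω → ℝ)) i ∈ D := by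
        intro i; fin_cases i <;> simp [hX, hY, D.add_mem hX hY]
      have h1 := hcoh 3 (by norm_num) ![1, 1, -1] ![X, Y, X + Y] hmem
      have h2 := hcoh 3 (by norm_num) ![-1, -1, 1] ![X, Y, X + Y] hmem
      have e1 : ∀ ω : Ω, ∑ i, (![(1:ℝ), 1, -1]) i * ((![X, Y, X + Y]) i ω
          - E ((![X, Y, X + Y]) i)) = E (X + Y) - E X - E Y := by
        intro ω; simp [Fin.sum_univ_three]; ring
      have e2 : ∀ ω : Ω, ∑ i, (![(-1:ℝ), -1, 1]) i * ((![X, Y, X + Y]) i ω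
          - E ((![X, Y, X + Y]) i)) = E X + E Y - E (X + Y) := by
        intro ω; simp [Fin.sum_univ_three]; ring
      simp only [e1, ciSup_const] at h1
      simp only [e2, ciSup_const] at h2
      linarith
    · intro c X hX
      have hmem : ∀ i, (![c • X, X] : Fin 2 → (Ω → ℝ)) i ∈ D := by
        intro i; fin_cases i <;> simp [hX, D.smul_mem c hX]
      have h1 := hcoh 2 (by norm_num) ![1, -c] ![c • X, X] hmem
      have h2 := hcoh 2 (by norm_num) ![-1, c] ![c • X, X] hmem
      have e1 : ∀ ω : Ω, ∑ i, (![(1:ℝ), -c]) i * ((![c • X, X]) i ω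
          - E ((![c • X, X]) i)) = c * E X - E (c • X) := by
        intro ω; simp [Fin.sum_univ_two]; ring
      have e2 : ∀ ω : Ω, ∑ i, (![(-1:ℝ), c]) i * ((![c • X, X]) i ω
          - E ((![c • X, X]) i)) = E (c • X) - c * E X := by
        intro ω; simp [Fin.sum_univ_two]; ring
      simp only [e1, ciSup_const] at h1
      simp only [e2, ciSup_const] at h2
      linarith
    · intro X hX
      obtain ⟨M, hM⟩ := hbdd X hX
      have hba : BddAbove (Set.range X) := ⟨M, by rintro _ ⟨ω, rfl⟩; exact (abs_le.1 (hM ω)).2⟩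
      have hbb : BddBelow (Set.range X) := ⟨-M, by rintro _ ⟨ω, rfl⟩; exact (abs_le.1 (hM ω)).1⟩
      have hmem : ∀ i, (![X] : Fin 1 → (Ω → ℝ)) i ∈ D := by
        intro i; fin_cases i <;> simp [hX]
      have h1 := hcoh 1 le_rfl ![1] ![X] hmem
      have h2 := hcoh 1 le_rfl ![-1] ![X] hmem
      have e1 : ∀ ω : Ω, ∑ i, (![(1:ℝ)]) i * ((![X]) i ω - E ((![X]) i)) = X ω - E X := by
        intro ω; simp [Fin.sum_univ_one]
      have e2 : ∀ ω : Ω, ∑ i, (![(-1:ℝ)]) i * ((![X]) i ω - E ((![X]) i)) = E X - X ω := by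
        intro ω; simp [Fin.sum_univ_one, neg_sub]
      simp only [e1] at h1
      simp only [e2] at h2
      have hs1 : (⨆ ω, (X ω - E X)) ≤ (⨆ ω, X ω) - E X :=
        ciSup_le fun ω => by have := le_ciSup hba ω; linarith
      have hs2 : (⨆ ω, (E X - X ω)) ≤ E X - ⨅ ω, X ω :=
        ciSup_le fun ω => by have := ciInf_le hbb ω; linarith
      constructor <;> linarith
  · rintro ⟨hadd, hsmul, hint⟩ n hn c X hX
    have hE0 : E 0 = 0 := by
      have := hsmul 0 0 D.zero_mem
      simpa using this
    have key : ∀ s : Finset (Fin n), E (∑ i ∈ s, c i • X i) = ∑ i ∈ s, c i * E (X i) := by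
      intro s
      induction s using Finset.induction with
      | empty => simpa using hE0
      | @insert a s hi ih =>
        rw [Finset.sum_insert hi, Finset.sum_insert hi,
          hadd _ (D.smul_mem _ (hX _)) _ (Submodule.sum_mem _ fun i _ => D.smul_mem _ (hX i)),
          hsmul _ _ (hX _), ih]
    set Y : Ω → ℝ := ∑ i, c i • X i with hYdef
    have hY : Y ∈ D := Submodule.sum_mem _ fun i _ => D.smul_mem _ (hX i)
    have hEY : E Y = ∑ i, c i * E (X i) := key Finset.univ
    have hval : ∀ ω : Ω, ∑ i, c i * (X i ω - E (X i)) = Y ω - E Y := by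
      intro ω
      have hYω : Y ω = ∑ i, c i * X i ω := by
        simp [hYdef, Finset.sum_apply]
      rw [hYω, hEY, ← Finset.sum_sub_distrib]
      exact Finset.sum_congr rfl fun i _ => by ring
    obtain ⟨M, hM⟩ := hbdd Y hY
    have hba : BddAbove (Set.range fun ω => Y ω - E Y) :=
      ⟨M - E Y, by rintro _ ⟨ω, rfl⟩; have := (abs_le.1 (hM ω)).2; simpa using by linarith⟩
    simp only [hval]
    have h2 : (⨆ ω, Y ω) ≤ E Y + ⨆ ω, (Y ω - E Y) :=
      ciSup_le fun ω => by have := le_ciSup hba ω; linarith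
    have h3 : E Y ≤ ⨆ ω, Y ω := (hint Y hY).2
    linarith
end

section
/- A map $E : D \to \mathbb{R}$ on a set $D \subset \ell^\infty(\Omega)$ is coherent if and only if there exists a finitely additive probability $P$ on $\mathcal{P}(\Omega)$ such that $E(X) = \int X \, dP$ for every $X \in D$. -/
set_option maxHeartbeats 1000000


open MeasureTheory Set

open FAP
namespace Stmt2Aux

variable {Ω : Type*} {P : Set Ω → ℝ}

lemma fap_empty (hP : IsFAP P) : P ∅ = 0 := by
  have h := hP.2.2 ∅ ∅ (disjoint_bot_left)
  simp at h
  linarith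

lemma fap_mono (hP : IsFAP P) {A B : Set Ω} (h : A ⊆ B) : P A ≤ P B := by
  have h2 := hP.2.2 A (B \ A) disjoint_sdiff_self_right
  rw [Set.union_diff_cancel h] at h2
  have := hP.2.1 (B \ A)
  linarith

lemma fap_le_one (hP : IsFAP P) (A : Set Ω) : P A ≤ 1 := by
  have := fap_mono hP (Set.subset_univ A)
  rw [hP.1] at this; exact this

lemma fap_sum (hP : IsFAP P) {ι : Type*} [DecidableEq ι] (F : Finset ι) (B : ι → Set Ω)
    (hd : ∀ x ∈ F, ∀ y ∈ F, x ≠ y → Disjoint (B x) (B y)) :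
    P (⋃ x ∈ F, B x) = ∑ x ∈ F, P (B x) := by
  induction F using Finset.induction_on with
  | empty => simpa using fap_empty hP
  | @insert a s ha ih =>
    rw [Finset.sum_insert ha, ← ih (fun x hx y hy hxy => hd x (Finset.mem_insert_of_mem hx) y
      (Finset.mem_insert_of_mem hy) hxy)]
    have hdisj : Disjoint (B a) (⋃ x ∈ s, B x) := by
      apply Set.disjoint_iUnion₂_right.2
      intro x hx
      exact hd a (Finset.mem_insert_self a s) x (Finset.mem_insert_of_mem hx)
        (fun h => ha (h ▸ hx))
    rw [Finset.set_biUnion_insert, hP.2.2 _ _ hdisj]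

lemma simple_nonneg (hP : IsFAP P) {ι : Type*} [Fintype ι] [DecidableEq ι]
    (c : ι → ℝ) (A : ι → Set Ω)
    (h : ∀ ω, 0 ≤ ∑ i, c i * (A i).indicator (fun _ => (1:ℝ)) ω) :
    0 ≤ ∑ i, c i * P (A i) := by
  classical
  set Atom : (ι → Bool) → Set Ω := fun s => {ω | ∀ i, ω ∈ A i ↔ s i = true} with hAtom
  have hdisj : ∀ s ∈ (Finset.univ : Finset (ι → Bool)), ∀ t ∈ (Finset.univ : Finset (ι → Bool)),
      s ≠ t → Disjoint (Atom s) (Atom t) := by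
    intro s _ t _ hst
    rw [Set.disjoint_left]
    intro ω hs ht
    apply hst
    funext i
    rw [← Bool.coe_iff_coe, ← hs i, ← ht i]
  have hcover : ∀ i, A i = ⋃ s ∈ Finset.univ.filter (fun s : ι → Bool => s i = true), Atom s := by
    intro i
    ext ω
    simp only [Set.mem_iUnion, Finset.mem_filter, Finset.mem_univ, true_and]
    constructor
    · intro hω
      exact ⟨fun j => decide (ω ∈ A j), by simp [hω], fun j => by simp⟩
    · rintro ⟨s, hsi, hωs⟩
      exact (hωs i).2 hsi
  have hPA : ∀ i, P (A i) = ∑ s ∈ Finset.univ.filter (fun s : ι → Bool => s i = true),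
      P (Atom s) := by
    intro i
    rw [hcover i, fap_sum hP _ _ (fun x hx y hy => hdisj x (Finset.mem_univ x) y (Finset.mem_univ y))]
  calc (0:ℝ) ≤ ∑ s : ι → Bool, (∑ i, if s i = true then c i else 0) * P (Atom s) := by
        apply Finset.sum_nonneg
        intro s _
        rcases Set.eq_empty_or_nonempty (Atom s) with hs | ⟨ω, hω⟩
        · rw [hs, fap_empty hP, mul_zero]
        · apply mul_nonneg _ (hP.2.1 _)
          have := h ω
          calc (0:ℝ) ≤ ∑ i, c i * (A i).indicator (fun _ => (1:ℝ)) ω := h ω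
            _ = ∑ i, if s i = true then c i else 0 := by
              apply Finset.sum_congr rfl
              intro i _
              rw [Set.indicator_apply]
              by_cases hi : s i = true
              · rw [if_pos ((hω i).2 hi), if_pos hi, mul_one]
              · rw [if_neg (fun hmem => hi ((hω i).1 hmem)), if_neg hi, mul_zero]
    _ = ∑ s : ι → Bool, ∑ i, if s i = true then c i * P (Atom s) else 0 := by
        apply Finset.sum_congr rfl
        intro s _
        rw [Finset.sum_mul]
        apply Finset.sum_congr rfl
        intro i _
        split_ifs <;> simp
    _ = ∑ i, ∑ s : ι → Bool, if s i = true then c i * P (Atom s) else 0 := Finset.sum_comm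
    _ = ∑ i, c i * P (A i) := by
        apply Finset.sum_congr rfl
        intro i _
        rw [hPA i, ← Finset.sum_filter, Finset.mul_sum]


lemma F_int (hP : IsFAP P) (X : Ω → ℝ) (u v : ℝ) :
    IntegrableOn (fun t => P {ω | t < X ω}) (Ioc u v) := by
  have hanti : Antitone (fun t => P {ω | t < X ω}) := by
    intro s t hst
    exact fap_mono hP (fun ω (h : t < X ω) => lt_of_le_of_lt hst h)
  apply Measure.integrableOn_of_bounded (measure_Ioc_lt_top.ne)
    hanti.measurable.aestronglyMeasurable (M := 1)
  filter_upwards with t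
  rw [Real.norm_eq_abs, abs_le]
  exact ⟨by linarith [hP.2.1 {ω | t < X ω}], fap_le_one hP _⟩

lemma layercake (hP : IsFAP P) (X : Ω → ℝ) (a b : ℝ) (ha : a < 0) (hb : 0 < b)
    (hXa : ∀ ω, a < X ω) (hXb : ∀ ω, X ω ≤ b) :
    faIntegral P X = a + ∫ t in Ioc a b, P {ω | t < X ω} := by
  set F : ℝ → ℝ := fun t => P {ω | t < X ω} with hF
  have hanti : Antitone F := by
    intro s t hst
    exact fap_mono hP (fun ω (h : t < X ω) => lt_of_le_of_lt hst h)
  have hF0 : ∀ t, b ≤ t → F t = 0 := by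
    intro t ht
    have : {ω | t < X ω} = (∅ : Set Ω) := by
      ext ω; simp only [Set.mem_setOf_eq, Set.mem_empty_iff_false, iff_false, not_lt]
      exact (hXb ω).trans ht
    rw [hF]; simp only; rw [this, fap_empty hP]
  have hF1 : ∀ t, t ≤ a → F t = 1 := by
    intro t ht
    have : {ω | t < X ω} = (univ : Set Ω) := by
      ext ω; simp only [Set.mem_setOf_eq, Set.mem_univ, iff_true]
      exact lt_of_le_of_lt ht (hXa ω)
    rw [hF]; simp only; rw [this, hP.1]
  have hint : ∀ u v : ℝ, IntegrableOn F (Ioc u v) := F_int hP X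
  -- positive part
  have h1 : ∫ t in Ioi (0:ℝ), F t = ∫ t in Ioc 0 b, F t := by
    rw [← Set.Ioc_union_Ioi_eq_Ioi hb.le,
      setIntegral_union (Set.Ioc_disjoint_Ioi le_rfl) measurableSet_Ioi (hint 0 b)]
    · have : ∫ t in Ioi b, F t = 0 := by
        rw [setIntegral_congr_fun measurableSet_Ioi (g := fun _ => (0:ℝ))
          (fun t ht => hF0 t (le_of_lt ht))]
        simp
      rw [this, add_zero]
    · rw [IntegrableOn, integrable_congr (g := fun _ => (0:ℝ))]
      · exact integrable_zero _ _ _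
      · filter_upwards [ae_restrict_mem measurableSet_Ioi] with t ht
        exact hF0 t (le_of_lt ht)
  -- negative part
  have h2 : ∫ t in Iio (0:ℝ), (1 - F t) = -a - ∫ t in Ioc a 0, F t := by
    have hio : Iio (0:ℝ) = Iio a ∪ Ico a 0 := (Set.Iio_union_Ico_eq_Iio ha.le).symm
    have hzero : IntegrableOn (fun t => 1 - F t) (Iio a) (volume) := by
      rw [IntegrableOn, integrable_congr (g := fun _ => (0:ℝ))]
      · exact integrable_zero _ _ _
      · filter_upwards [ae_restrict_mem measurableSet_Iio] with t ht
        show (1:ℝ) - F t = 0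
        rw [hF1 t (le_of_lt ht)]; ring
    have hico : IntegrableOn (fun t => 1 - F t) (Ico a 0) (volume) := by
      have h' : IntegrableOn (fun t => 1 - F t) (Ioo a 0) volume :=
        IntegrableOn.mono_set
          (((integrable_const 1).sub (hint a 0)).congr
            (by filter_upwards with t; simp [Pi.sub_apply])) Set.Ioo_subset_Ioc_self
      exact (integrableOn_Ico_iff_integrableOn_Ioo (by simp)).2 h'
    have hdis : Disjoint (Iio a) (Ico a 0) := by
      rw [Set.disjoint_left]
      intro x hx hx2
      exact (not_lt.2 hx2.1) hx
    rw [hio, setIntegral_union hdis measurableSet_Ico hzero hico]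
    have hza : ∫ t in Iio a, (1 - F t) = 0 := by
      rw [setIntegral_congr_fun measurableSet_Iio (g := fun _ => (0:ℝ))]
      · simp
      · intro t ht
        show (1:ℝ) - F t = 0
        rw [hF1 t (le_of_lt ht)]; ring
    rw [hza, zero_add, integral_Ico_eq_integral_Ioo, ← integral_Ioc_eq_integral_Ioo,
      integral_sub (integrable_const 1) (hint a 0), setIntegral_const]
    rw [measureReal_def, Real.volume_Ioc, ENNReal.toReal_ofReal (by linarith), smul_eq_mul, mul_one]
    ring
  rw [faIntegral, h1, h2]
  have h3 : ∫ t in Ioc a b, F t = (∫ t in Ioc a 0, F t) + ∫ t in Ioc 0 b, F t := by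
    rw [← setIntegral_union (Set.Ioc_disjoint_Ioc_of_le le_rfl) measurableSet_Ioc (hint a 0) (hint 0 b),
      Set.Ioc_union_Ioc_eq_Ioc ha.le hb.le]
  rw [h3]; ring

lemma sum_Ioc (f : ℝ → ℝ) (u : ℕ → ℝ) (hu : Monotone u) (K : ℕ)
    (hint : ∀ i j : ℕ, IntegrableOn f (Ioc (u i) (u j))) :
    ∫ t in Ioc (u 0) (u K), f t = ∑ k ∈ Finset.range K, ∫ t in Ioc (u k) (u (k+1)), f t := by
  induction K with
  | zero => simp
  | succ K ih =>
    rw [Finset.sum_range_succ, ← ih,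
      ← setIntegral_union (Set.Ioc_disjoint_Ioc_of_le le_rfl) measurableSet_Ioc (hint 0 K) (hint K (K+1)),
      Set.Ioc_union_Ioc_eq_Ioc (hu (Nat.zero_le K)) (hu (Nat.le_succ K))]

lemma grid (hP : IsFAP P) (X : Ω → ℝ) (a b : ℝ) (ha : a < 0) (hb : 0 < b)
    (hXa : ∀ ω, a < X ω) (hXb : ∀ ω, X ω ≤ b) (K : ℕ) (hK : 0 < K) :
    a + ∑ k ∈ Finset.range K, ((b-a)/K) * P {ω | a + ((k:ℝ)+1) * ((b-a)/K) < X ω}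
        ≤ faIntegral P X ∧
    faIntegral P X ≤
      a + (∑ k ∈ Finset.range K, ((b-a)/K) * P {ω | a + ((k:ℝ)+1) * ((b-a)/K) < X ω})
        + (b-a)/K := by
  set F : ℝ → ℝ := fun t => P {ω | t < X ω} with hF
  set δ : ℝ := (b-a)/K with hδ
  have hδpos : 0 < δ := div_pos (by linarith) (by exact_mod_cast hK)
  set u : ℕ → ℝ := fun k => a + k * δ with hu
  have hu0 : u 0 = a := by simp [hu]
  have huK : u K = b := by
    rw [hu]; simp only; rw [hδ]
    field_simp
    ring
  have humono : Monotone u := by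
    intro i j hij
    simp only [hu]
    have : (i:ℝ) ≤ j := by exact_mod_cast hij
    nlinarith
  have hanti : Antitone F := by
    intro s t hst
    exact fap_mono hP (fun ω (h : t < X ω) => lt_of_le_of_lt hst h)
  have hint : ∀ i j : ℕ, IntegrableOn F (Ioc (u i) (u j)) := fun i j => F_int hP X _ _
  have hlc : faIntegral P X = a + ∫ t in Ioc a b, F t := layercake hP X a b ha hb hXa hXb
  have hsplit : ∫ t in Ioc a b, F t = ∑ k ∈ Finset.range K, ∫ t in Ioc (u k) (u (k+1)), F t := by
    rw [← hu0, ← huK, sum_Ioc F u humono K hint]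
  have hvol : ∀ k : ℕ, (volume (Ioc (u k) (u (k+1)))).toReal = δ := by
    intro k
    rw [Real.volume_Ioc, ENNReal.toReal_ofReal (by nlinarith [humono (Nat.le_succ k)] : (0:ℝ) ≤ u (k+1) - u k)]
    simp only [hu]
    push_cast; ring
  have hlow : ∀ k : ℕ, δ * F (u (k+1)) ≤ ∫ t in Ioc (u k) (u (k+1)), F t := by
    intro k
    have := setIntegral_mono_on (f := fun _ => F (u (k+1))) (g := F) (s := Ioc (u k) (u (k+1)))
      (integrable_const _) (hint k (k+1)) measurableSet_Ioc (fun x hx => hanti hx.2)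
    rw [setIntegral_const, measureReal_def, hvol k, smul_eq_mul] at this
    exact this
  have hup : ∀ k : ℕ, (∫ t in Ioc (u k) (u (k+1)), F t) ≤ δ * F (u k) := by
    intro k
    have := setIntegral_mono_on (f := F) (g := fun _ => F (u k)) (s := Ioc (u k) (u (k+1)))
      (hint k (k+1)) (integrable_const _) measurableSet_Ioc (fun x hx => hanti hx.1.le)
    rw [setIntegral_const, measureReal_def, hvol k, smul_eq_mul] at this
    exact this
  have hsum_eq : ∀ k ∈ Finset.range K, ((b-a)/K) * P {ω | a + ((k:ℝ)+1) * ((b-a)/K) < X ω}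
      = δ * F (u (k+1)) := by
    intro k _
    rw [hδ]
    congr 2
    simp only [hu, hδ]
    push_cast; ring_nf
  rw [Finset.sum_congr rfl hsum_eq]
  have htele : ∑ k ∈ Finset.range K, δ * F (u k)
      = (∑ k ∈ Finset.range K, δ * F (u (k+1))) + δ := by
    have h1 : ∑ k ∈ Finset.range K, (δ * F (u k) - δ * F (u (k+1))) = δ * F (u 0) - δ * F (u K) :=
      Finset.sum_range_sub' (fun k => δ * F (u k)) K
    have h2 : F (u 0) = 1 := by
      rw [hu0, hF]
      simp only
      have : {ω | a < X ω} = (univ : Set Ω) := by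
        ext ω; simpa using hXa ω
      rw [this, hP.1]
    have h3 : F (u K) = 0 := by
      rw [huK, hF]
      simp only
      have : {ω | b < X ω} = (∅ : Set Ω) := by
        ext ω; simpa using hXb ω
      rw [this, fap_empty hP]
    rw [Finset.sum_sub_distrib, h2, h3] at h1
    linarith
  constructor
  · rw [hlc, hsplit]
    have : ∑ k ∈ Finset.range K, δ * F (u (k+1))
        ≤ ∑ k ∈ Finset.range K, ∫ t in Ioc (u k) (u (k+1)), F t :=
      Finset.sum_le_sum (fun k _ => hlow k)
    linarith
  · rw [hlc, hsplit]
    have : ∑ k ∈ Finset.range K, (∫ t in Ioc (u k) (u (k+1)), F t)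
        ≤ ∑ k ∈ Finset.range K, δ * F (u k) :=
      Finset.sum_le_sum (fun k _ => hup k)
    rw [hδ] at htele ⊢
    linarith [htele]
lemma indsum (X : Ω → ℝ) (a δ : ℝ) (hδ : 0 < δ) (K : ℕ) (hK : 0 < K) (ω : Ω)
    (hXa : a < X ω) (hXb : X ω ≤ a + K * δ) :
    a + ∑ k ∈ Finset.range K,
        δ * ({ω' | a + ((k:ℝ)+1) * δ < X ω'}.indicator (fun _ => (1:ℝ)) ω) ≤ X ω ∧
    X ω ≤ a + (∑ k ∈ Finset.range K,
        δ * ({ω' | a + ((k:ℝ)+1) * δ < X ω'}.indicator (fun _ => (1:ℝ)) ω)) + δ := by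
  classical
  set Q : ℕ → Prop := fun k => a + k * δ < X ω with hQ
  have hQ0 : Q 0 := by simpa [hQ] using hXa
  set m : ℕ := Nat.findGreatest Q K with hm
  have hmK : m ≤ K := Nat.findGreatest_le K
  have hmspec : Q m := Nat.findGreatest_spec (Nat.zero_le K) hQ0
  have hnot : ∀ j, m < j → j ≤ K → ¬ Q j := fun j h1 h2 => Nat.findGreatest_is_greatest h1 h2
  have hmltK : m < K := by
    rcases lt_or_eq_of_le hmK with h | h
    · exact h
    · exfalso
      rw [h] at hmspec
      exact absurd hXb (not_le.2 hmspec)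
  have hiff : ∀ k, k < K → ((a + ((k:ℝ)+1) * δ < X ω) ↔ k < m) := by
    intro k hk
    constructor
    · intro hlt
      by_contra hge
      push_neg at hge
      apply hnot (k+1) (Nat.lt_succ_of_le hge) hk
      simpa [hQ] using hlt
    · intro hlt
      have h1 : (k:ℝ) + 1 ≤ m := by exact_mod_cast Nat.succ_le_of_lt hlt
      have : a + ((k:ℝ)+1) * δ ≤ a + m * δ := by nlinarith
      exact lt_of_le_of_lt this hmspec
  have hsum : ∑ k ∈ Finset.range K,
      δ * ({ω' | a + ((k:ℝ)+1) * δ < X ω'}.indicator (fun _ => (1:ℝ)) ω) = m * δ := by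
    have : ∀ k ∈ Finset.range K,
        δ * ({ω' | a + ((k:ℝ)+1) * δ < X ω'}.indicator (fun _ => (1:ℝ)) ω)
          = if k < m then δ else 0 := by
      intro k hk
      rw [Set.indicator_apply]
      simp only [Set.mem_setOf_eq]
      by_cases h : k < m
      · rw [if_pos ((hiff k (Finset.mem_range.1 hk)).2 h), if_pos h, mul_one]
      · rw [if_neg (fun hmem => h ((hiff k (Finset.mem_range.1 hk)).1 hmem)), if_neg h, mul_zero]
    rw [Finset.sum_congr rfl this]
    have hfilter : (Finset.range K).filter (fun k => k < m) = Finset.range m := by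
      ext k
      simp only [Finset.mem_filter, Finset.mem_range]
      exact ⟨fun h => h.2, fun h => ⟨lt_of_lt_of_le h hmK, h⟩⟩
    rw [Finset.sum_ite, Finset.sum_const_zero, add_zero, hfilter, Finset.sum_const,
      Finset.card_range, nsmul_eq_mul]
  rw [hsum]
  constructor
  · linarith [hmspec]
  · have := hnot (m+1) (Nat.lt_succ_self m) hmltK
    simp only [hQ, not_lt] at this
    push_cast at this
    linarith

lemma nonneg_of_forall_div (B s : ℝ) (h : ∀ K : ℕ, 0 < K → -(B/K) ≤ s) : 0 ≤ s := by
  by_contra hs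
  push_neg at hs
  have hB : 0 ≤ B := by
    have := h 1 Nat.one_pos
    simp at this
    linarith
  obtain ⟨K, hKgt⟩ := exists_nat_gt (B / (-s))
  have hKpos : 0 < K := by
    have h0 : (0:ℝ) ≤ B / (-s) := div_nonneg hB (by linarith)
    have h1 : (0:ℝ) < K := lt_of_le_of_lt h0 hKgt
    exact_mod_cast h1
  have hKR : (0:ℝ) < K := by exact_mod_cast hKpos
  have : B < K * (-s) := by
    rw [div_lt_iff₀ (by linarith : (0:ℝ) < -s)] at hKgt
    linarith
  have h2 : B / K < -s := by
    rw [div_lt_iff₀ hKR]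
    linarith
  have := h K hKpos
  linarith

lemma eq_of_forall_abs_div (B x : ℝ) (h : ∀ K : ℕ, 0 < K → |x| ≤ B/K) : x = 0 := by
  have h0 : 0 ≤ -|x| := nonneg_of_forall_div B (-|x|) (fun K hK => by
    have := h K hK; linarith)
  have h1 : |x| ≤ 0 := by linarith
  exact abs_eq_zero.1 (le_antisymm h1 (abs_nonneg x))

lemma le_csSup_of_bdd {f : Ω → ℝ} [Nonempty Ω] (M : ℝ) (h : ∀ ω, f ω ≤ M) (ω : Ω) :
    f ω ≤ ⨆ ω', f ω' :=
  le_ciSup ⟨M, by rintro r ⟨ω', rfl⟩; exact h ω'⟩ ω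

lemma bdd_add {f g : Ω → ℝ} (hf : ∃ M, ∀ ω, |f ω| ≤ M) (hg : ∃ M, ∀ ω, |g ω| ≤ M) :
    ∃ M, ∀ ω, |f ω + g ω| ≤ M := by
  obtain ⟨M1, h1⟩ := hf
  obtain ⟨M2, h2⟩ := hg
  exact ⟨M1 + M2, fun ω => (abs_add_le _ _).trans (add_le_add (h1 ω) (h2 ω))⟩

end Stmt2Aux

open Stmt2Aux

/-- E : D → ℝ is coherent iff it is represented by a finitely
additive probability on the power set of Ω. -/
theorem stmt2 {Ω : Type*} [Nonempty Ω]
    (D : Set (Ω → ℝ)) (hbdd : ∀ X ∈ D, ∃ M : ℝ, ∀ ω, |X ω| ≤ M)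
    (E : (Ω → ℝ) → ℝ) :
    (∀ (n : ℕ), 1 ≤ n → ∀ (c : Fin n → ℝ) (X : Fin n → (Ω → ℝ)),
        (∀ i, X i ∈ D) →
        0 ≤ ⨆ ω : Ω, ∑ i, c i * (X i ω - E (X i)))
    ↔ ∃ P : Set Ω → ℝ, FAP.IsFAP P ∧ ∀ X ∈ D, E X = FAP.faIntegral P X := by
  classical
  constructor
  · -- coherence → representation
    intro coh
    set V : Submodule ℝ (Ω → ℝ) :=
      { carrier := {X | ∃ M : ℝ, ∀ ω, |X ω| ≤ M}
        add_mem' := fun hf hg => bdd_add hf hg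
        zero_mem' := ⟨0, fun ω => by simp⟩
        smul_mem' := by
          rintro r X ⟨M, h⟩
          refine ⟨|r| * M, fun ω => ?_⟩
          have : |(r • X) ω| = |r| * |X ω| := by
            simp [abs_mul]
          rw [this]
          exact mul_le_mul_of_nonneg_left (h ω) (abs_nonneg r) } with hV
    set C : Set (Ω → ℝ) := {Z | ∃ (m : ℕ) (d : Fin m → ℝ) (Y : Fin m → (Ω → ℝ)),
      (∀ i, Y i ∈ D) ∧ Z = fun ω => ∑ i, d i * (Y i ω - E (Y i))} with hC
    have hC0 : (0 : Ω → ℝ) ∈ C := by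
      refine ⟨0, Fin.elim0, Fin.elim0, fun i => i.elim0, ?_⟩
      funext ω; simp
    have hCadd : ∀ Z1 ∈ C, ∀ Z2 ∈ C, Z1 + Z2 ∈ C := by
      rintro Z1 ⟨m1, d1, Y1, hY1, rfl⟩ Z2 ⟨m2, d2, Y2, hY2, rfl⟩
      refine ⟨m1 + m2, Fin.append d1 d2, Fin.append Y1 Y2, ?_, ?_⟩
      · intro i
        refine Fin.addCases (fun j => ?_) (fun j => ?_) i
        · rw [Fin.append_left]; exact hY1 j
        · rw [Fin.append_right]; exact hY2 j
      · funext ω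
        rw [Pi.add_apply, Fin.sum_univ_add]
        simp only [Fin.append_left, Fin.append_right]
    have hCsmul : ∀ (r : ℝ), ∀ Z ∈ C, r • Z ∈ C := by
      rintro r Z ⟨m, d, Y, hY, rfl⟩
      refine ⟨m, fun i => r * d i, Y, hY, ?_⟩
      funext ω
      rw [Pi.smul_apply, smul_eq_mul, Finset.mul_sum]
      exact Finset.sum_congr rfl fun i _ => by ring
    have hCbdd : ∀ Z ∈ C, ∃ M, ∀ ω, |Z ω| ≤ M := by
      rintro Z ⟨m, d, Y, hY, rfl⟩
      choose MY hMY using fun i => hbdd (Y i) (hY i)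
      refine ⟨∑ i, |d i| * (MY i + |E (Y i)|), fun ω => ?_⟩
      refine (Finset.abs_sum_le_sum_abs _ _).trans (Finset.sum_le_sum fun i _ => ?_)
      rw [abs_mul]
      refine mul_le_mul_of_nonneg_left ?_ (abs_nonneg _)
      calc |Y i ω - E (Y i)| = |Y i ω + -(E (Y i))| := by rw [sub_eq_add_neg]
        _ ≤ |Y i ω| + |-(E (Y i))| := abs_add_le _ _
        _ ≤ MY i + |E (Y i)| := by rw [abs_neg]; exact add_le_add_left (hMY i ω) _
    have hCsup : ∀ Z ∈ C, 0 ≤ ⨆ ω, Z ω := by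
      rintro Z ⟨m, d, Y, hY, rfl⟩
      rcases Nat.eq_zero_or_pos m with hm | hm
      · subst hm
        have : (fun ω => ∑ i : Fin 0, d i * (Y i ω - E (Y i))) = fun _ : Ω => (0:ℝ) := by
          funext ω; simp
        rw [this, ciSup_const]
      · exact coh m hm d Y hY
    have hsupd : ∀ (f : Ω → ℝ), (∃ M, ∀ ω, |f ω| ≤ M) → ∀ ω, f ω ≤ ⨆ ω', f ω' := by
      rintro f ⟨M, hM⟩ ω
      exact le_csSup_of_bdd M (fun ω' => (abs_le.1 (hM ω')).2) ω
    set SSet : ↥V → Set ℝ := fun Y => (fun Z => ⨆ ω, ((Y : Ω → ℝ) ω + Z ω)) '' C with hSSet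
    set NN : ↥V → ℝ := fun Y => sInf (SSet Y) with hNN
    have hne : ∀ Y, (SSet Y).Nonempty := fun Y => ⟨_, ⟨0, hC0, rfl⟩⟩
    have hYbdd : ∀ Y : ↥V, ∃ M, ∀ ω, |(Y : Ω → ℝ) ω| ≤ M := fun Y => Y.2
    have hbl : ∀ (Y : ↥V) (M : ℝ), (∀ ω, |(Y : Ω → ℝ) ω| ≤ M) → ∀ r ∈ SSet Y, -M ≤ r := by
      rintro Y M hM r ⟨Z, hZ, rfl⟩
      have hZbdd := hCbdd Z hZ
      have h1 : ∀ ω, Z ω ≤ (⨆ ω', ((Y : Ω → ℝ) ω' + Z ω')) + M := by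
        intro ω
        have h2 := hsupd (fun ω => (Y : Ω → ℝ) ω + Z ω) (bdd_add (hYbdd Y) hZbdd) ω
        have h3 := (abs_le.1 (hM ω)).1
        linarith
      have h2 : (⨆ ω, Z ω) ≤ (⨆ ω', ((Y : Ω → ℝ) ω' + Z ω')) + M := ciSup_le h1
      have h3 := hCsup Z hZ
      linarith
    have hbddB : ∀ Y : ↥V, BddBelow (SSet Y) := by
      intro Y
      obtain ⟨M, hM⟩ := hYbdd Y
      exact ⟨-M, fun r hr => hbl Y M hM r hr⟩
    have NN_le : ∀ (Y : ↥V), ∀ Z ∈ C, NN Y ≤ ⨆ ω, ((Y : Ω → ℝ) ω + Z ω) :=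
      fun Y Z hZ => csInf_le (hbddB Y) ⟨Z, hZ, rfl⟩
    have NAdd : ∀ Y1 Y2 : ↥V, NN (Y1 + Y2) ≤ NN Y1 + NN Y2 := by
      intro Y1 Y2
      have step : ∀ r1 ∈ SSet Y1, ∀ r2 ∈ SSet Y2, NN (Y1 + Y2) ≤ r1 + r2 := by
        rintro r1 ⟨Z1, hZ1, rfl⟩ r2 ⟨Z2, hZ2, rfl⟩
        refine (NN_le (Y1 + Y2) (Z1 + Z2) (hCadd Z1 hZ1 Z2 hZ2)).trans (ciSup_le fun ω => ?_)
        have a1 := hsupd (fun ω => (Y1 : Ω → ℝ) ω + Z1 ω) (bdd_add (hYbdd Y1) (hCbdd Z1 hZ1)) ω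
        have a2 := hsupd (fun ω => (Y2 : Ω → ℝ) ω + Z2 ω) (bdd_add (hYbdd Y2) (hCbdd Z2 hZ2)) ω
        simp only [Submodule.coe_add, Pi.add_apply]
        linarith
      have h1 : ∀ r2 ∈ SSet Y2, NN (Y1 + Y2) - r2 ≤ NN Y1 := by
        intro r2 hr2
        refine le_csInf (hne Y1) fun r1 hr1 => ?_
        linarith [step r1 hr1 r2 hr2]
      have h2 : NN (Y1 + Y2) - NN Y1 ≤ NN Y2 :=
        le_csInf (hne Y2) fun r2 hr2 => by linarith [h1 r2 hr2]
      linarith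
    have NN_smul_le : ∀ (r : ℝ), 0 < r → ∀ Y : ↥V, NN (r • Y) ≤ r * NN Y := by
      intro r hr Y
      have hstep : ∀ t ∈ SSet Y, NN (r • Y) ≤ r * t := by
        rintro t ⟨Z, hZ, rfl⟩
        refine (NN_le (r • Y) (r • Z) (hCsmul r Z hZ)).trans (ciSup_le fun ω => ?_)
        have h1 := hsupd (fun ω => (Y : Ω → ℝ) ω + Z ω) (bdd_add (hYbdd Y) (hCbdd Z hZ)) ω
        have h2 : ((r • Y : ↥V) : Ω → ℝ) ω + (r • Z) ω = r * ((Y : Ω → ℝ) ω + Z ω) := by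
          simp [mul_add]
        rw [h2]
        calc r * ((Y : Ω → ℝ) ω + Z ω) ≤ r * (⨆ ω', ((Y : Ω → ℝ) ω' + Z ω')) :=
              mul_le_mul_of_nonneg_left h1 hr.le
          _ = r * ⨆ ω', ((Y : Ω → ℝ) ω' + Z ω') := rfl
      have h3 : NN (r • Y) / r ≤ NN Y := by
        refine le_csInf (hne Y) fun t ht => ?_
        rw [div_le_iff₀ hr]
        calc NN (r • Y) ≤ r * t := hstep t ht
          _ = t * r := mul_comm _ _
      rw [div_le_iff₀ hr] at h3
      calc NN (r • Y) ≤ NN Y * r := h3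
        _ = r * NN Y := mul_comm _ _
    have NHom : ∀ r : ℝ, 0 < r → ∀ Y : ↥V, NN (r • Y) = r * NN Y := by
      intro r hr Y
      refine le_antisymm (NN_smul_le r hr Y) ?_
      have h2 := NN_smul_le r⁻¹ (inv_pos.2 hr) (r • Y)
      rw [smul_smul, inv_mul_cancel₀ hr.ne', one_smul] at h2
      have h3 := mul_le_mul_of_nonneg_left h2 hr.le
      rw [← mul_assoc, mul_inv_cancel₀ hr.ne', one_mul] at h3
      exact h3
    have hNN0 : 0 ≤ NN 0 := by
      refine le_csInf (hne 0) ?_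
      rintro r ⟨Z, hZ, rfl⟩
      have := hCsup Z hZ
      have heq : (fun ω => ((0 : ↥V) : Ω → ℝ) ω + Z ω) = fun ω => Z ω := by
        funext ω; simp
      calc (0:ℝ) ≤ ⨆ ω, Z ω := this
        _ = ⨆ ω, (((0 : ↥V) : Ω → ℝ) ω + Z ω) := by rw [heq]
    obtain ⟨g, -, hgle⟩ := exists_extension_of_le_sublinear
      (⟨⊥, 0⟩ : ↥V →ₗ.[ℝ] ℝ) NN NHom NAdd
      (by
        intro x
        have hx : (x : ↥V) = 0 := (Submodule.mem_bot ℝ).1 x.2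
        show (0:ℝ) ≤ NN ↑x
        rw [hx]
        exact hNN0)
    have hgsup : ∀ Y : ↥V, g Y ≤ ⨆ ω, (Y : Ω → ℝ) ω := by
      intro Y
      refine (hgle Y).trans ((NN_le Y 0 hC0).trans_eq ?_)
      exact iSup_congr fun ω => by simp
    -- values on D
    have hgD : ∀ (X : Ω → ℝ) (hXD : X ∈ D) (hXV : X ∈ V), g ⟨X, hXV⟩ = E X := by
      intro X hXD hXV
      have hXbdd : ∃ M, ∀ ω, |X ω| ≤ M := hXV
      have h1 : g ⟨X, hXV⟩ ≤ E X := by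
        refine (hgle _).trans ?_
        refine (NN_le ⟨X, hXV⟩ (fun ω => ∑ i : Fin 1, (-1 : ℝ) * (X ω - E X))
          ⟨1, fun _ => (-1 : ℝ), fun _ => X, fun _ => hXD, rfl⟩).trans_eq ?_
        have : ∀ ω : Ω, ((⟨X, hXV⟩ : ↥V) : Ω → ℝ) ω + (∑ i : Fin 1, (-1 : ℝ) * (X ω - E X)) = E X := by
          intro ω; simp
        rw [iSup_congr this, ciSup_const]
      have h2 : E X ≤ g ⟨X, hXV⟩ := by
        have h3 : g (-⟨X, hXV⟩) ≤ -(E X) := by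
          refine (hgle _).trans ?_
          refine (NN_le (-⟨X, hXV⟩) (fun ω => ∑ i : Fin 1, (1 : ℝ) * (X ω - E X))
            ⟨1, fun _ => (1 : ℝ), fun _ => X, fun _ => hXD, rfl⟩).trans_eq ?_
          have : ∀ ω : Ω, ((-⟨X, hXV⟩ : ↥V) : Ω → ℝ) ω + (∑ i : Fin 1, (1 : ℝ) * (X ω - E X)) = -(E X) := by
            intro ω; simp; ring
          rw [iSup_congr this, ciSup_const]
        rw [map_neg] at h3
        linarith
      linarith
    -- the constant one
    have honeV : (fun _ : Ω => (1:ℝ)) ∈ V := ⟨1, fun ω => by simp⟩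
    set vone : ↥V := ⟨fun _ => (1:ℝ), honeV⟩ with hvone
    have hg1 : g vone = 1 := by
      have h1 : g vone ≤ 1 := by
        refine (hgsup vone).trans_eq ?_
        rw [hvone]
        exact ciSup_const
      have h2 : g (-vone) ≤ -1 := by
        refine (hgsup (-vone)).trans_eq ?_
        have : ∀ ω : Ω, ((-vone : ↥V) : Ω → ℝ) ω = -1 := fun ω => by simp [hvone]
        rw [iSup_congr this, ciSup_const]
      rw [map_neg] at h2
      linarith
    -- indicators
    have hindV : ∀ A : Set Ω, (fun ω => A.indicator (fun _ => (1:ℝ)) ω) ∈ V := by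
      intro A
      refine ⟨1, fun ω => ?_⟩
      by_cases h : ω ∈ A <;> simp [h]
    set vind : Set Ω → ↥V := fun A => ⟨fun ω => A.indicator (fun _ => (1:ℝ)) ω, hindV A⟩ with hvind
    set P : Set Ω → ℝ := fun A => g (vind A) with hPdef
    have hPfap : IsFAP P := by
      refine ⟨?_, ?_, ?_⟩
      · have : vind univ = vone := by
          apply Subtype.ext
          funext ω
          simp [hvind, hvone]
        rw [hPdef]; simp only; rw [this, hg1]
      · intro A
        have h1 : g (-(vind A)) ≤ 0 := by
          refine (hgsup _).trans (ciSup_le fun ω => ?_)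
          have : ((-(vind A) : ↥V) : Ω → ℝ) ω = -(A.indicator (fun _ => (1:ℝ)) ω) := by
            simp [hvind]
          rw [this, Set.indicator_apply]
          split_ifs <;> simp
        rw [map_neg] at h1
        simp only [hPdef]
        linarith
      · intro A B hAB
        have : vind (A ∪ B) = vind A + vind B := by
          apply Subtype.ext
          funext ω
          have := Set.indicator_union_of_disjoint hAB (fun _ => (1:ℝ))
          simp only [hvind, Submodule.coe_add, Pi.add_apply]
          rw [this]
        simp only [hPdef]
        rw [this, map_add]
    refine ⟨P, hPfap, ?_⟩
    intro X hXD
    obtain ⟨M, hM⟩ := hbdd X hXD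
    have hXV : X ∈ V := ⟨M, hM⟩
    rw [← hgD X hXD hXV]
    have hM0 : 0 ≤ M := le_trans (abs_nonneg _) (hM (Classical.arbitrary Ω))
    have key : ∀ K : ℕ, 0 < K →
        |g ⟨X, hXV⟩ - faIntegral P X| ≤ (M + 1 - -(M + 1)) / K := by
      intro K hK
      have ha : -(M+1) < 0 := by linarith
      have hb : 0 < M+1 := by linarith
      have hXa : ∀ ω, -(M+1) < X ω := fun ω => by
        have := (abs_le.1 (hM ω)).1; linarith
      have hXb : ∀ ω, X ω ≤ M+1 := fun ω => by
        have := (abs_le.1 (hM ω)).2; linarith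
      obtain ⟨hgrid1, hgrid2⟩ := grid hPfap X (-(M+1)) (M+1) ha hb hXa hXb K hK
      have hδpos : 0 < (M + 1 - -(M + 1)) / (K:ℝ) :=
        div_pos (by linarith) (by exact_mod_cast hK)
      have hKδ : -(M+1) + K * ((M + 1 - -(M + 1)) / (K:ℝ)) = M+1 := by
        have hKne : (K:ℝ) ≠ 0 := by
          have : (0:ℝ) < K := by exact_mod_cast hK
          linarith
        field_simp
        ring
      have hbound := fun ω => indsum X (-(M+1)) ((M + 1 - -(M + 1)) / (K:ℝ)) hδpos K hK ω
        (hXa ω) (by rw [hKδ]; exact hXb ω)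
      -- the simple function inside V
      set SV : ↥V := (-(M+1)) • vone + ∑ k ∈ Finset.range K,
        ((M + 1 - -(M + 1)) / (K:ℝ)) • vind {ω | -(M+1) + ((k:ℝ)+1) * ((M + 1 - -(M + 1)) / (K:ℝ)) < X ω}
        with hSV
      have hSVapp : ∀ ω, ((SV : ↥V) : Ω → ℝ) ω = -(M+1) + ∑ k ∈ Finset.range K,
          ((M + 1 - -(M + 1)) / (K:ℝ)) *
            ({ω' | -(M+1) + ((k:ℝ)+1) * ((M + 1 - -(M + 1)) / (K:ℝ)) < X ω'}.indicator
              (fun _ => (1:ℝ)) ω) := by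
        intro ω
        rw [hSV]
        push_cast [Submodule.coe_add, Submodule.coe_smul, Submodule.coe_sum, Pi.add_apply,
          Pi.smul_apply, Finset.sum_apply, smul_eq_mul]
        simp [hvone, hvind]
      have hgSV : g SV = -(M+1) + ∑ k ∈ Finset.range K,
          ((M + 1 - -(M + 1)) / (K:ℝ)) *
            P {ω | -(M+1) + ((k:ℝ)+1) * ((M + 1 - -(M + 1)) / (K:ℝ)) < X ω} := by
        rw [hSV, map_add, _root_.map_smul, _root_.map_sum, smul_eq_mul, hg1, mul_one]
        simp only [_root_.map_smul, smul_eq_mul, hPdef]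
      have hgle1 : g SV ≤ g ⟨X, hXV⟩ := by
        have h1 := hgsup (SV - ⟨X, hXV⟩)
        have h2 : (⨆ ω, ((SV - ⟨X, hXV⟩ : ↥V) : Ω → ℝ) ω) ≤ 0 := by
          refine ciSup_le fun ω => ?_
          have h3 := (hbound ω).1
          have h4 : ((SV - ⟨X, hXV⟩ : ↥V) : Ω → ℝ) ω = ((SV : ↥V) : Ω → ℝ) ω - X ω := by
            simp
          rw [h4, hSVapp ω]
          linarith
        rw [map_sub] at h1
        linarith
      have hgle2 : g ⟨X, hXV⟩ ≤ g SV + (M + 1 - -(M + 1)) / (K:ℝ) := by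
        have h1 := hgsup (⟨X, hXV⟩ - SV)
        have h2 : (⨆ ω, ((⟨X, hXV⟩ - SV : ↥V) : Ω → ℝ) ω) ≤ (M + 1 - -(M + 1)) / (K:ℝ) := by
          refine ciSup_le fun ω => ?_
          have h3 := (hbound ω).2
          have h4 : ((⟨X, hXV⟩ - SV : ↥V) : Ω → ℝ) ω = X ω - ((SV : ↥V) : Ω → ℝ) ω := by
            simp
          rw [h4, hSVapp ω]
          linarith
        rw [map_sub] at h1
        linarith
      rw [hgSV] at hgle1 hgle2
      rw [abs_le]
      constructor <;> linarith
    have := eq_of_forall_abs_div _ _ key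
    linarith [this]
  · -- representation → coherence
    rintro ⟨P, hP, hrep⟩ n hn c X hX
    choose M hM using fun i => hbdd (X i) (hX i)
    have hMnn : ∀ i, 0 ≤ M i := fun i => le_trans (abs_nonneg _) (hM i (Classical.arbitrary Ω))
    have hai : ∀ i, -(M i + 1) < 0 := fun i => by have := hMnn i; linarith
    have hbi : ∀ i, (0:ℝ) < M i + 1 := fun i => by have := hMnn i; linarith
    have hXai : ∀ i ω, -(M i + 1) < X i ω := fun i ω => by
      have := (abs_le.1 (hM i ω)).1; linarith
    have hXbi : ∀ i ω, X i ω ≤ M i + 1 := fun i ω => by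
      have := (abs_le.1 (hM i ω)).2; linarith
    have hWbd : ∀ ω, (∑ i, c i * (X i ω - E (X i))) ≤ ∑ i, |c i| * (M i + |E (X i)|) := by
      intro ω
      refine Finset.sum_le_sum fun i _ => ?_
      calc c i * (X i ω - E (X i)) ≤ |c i * (X i ω - E (X i))| := le_abs_self _
        _ = |c i| * |X i ω - E (X i)| := abs_mul _ _
        _ ≤ |c i| * (M i + |E (X i)|) := by
            refine mul_le_mul_of_nonneg_left ?_ (abs_nonneg _)
            calc |X i ω - E (X i)| = |X i ω + -(E (X i))| := by rw [sub_eq_add_neg]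
              _ ≤ |X i ω| + |-(E (X i))| := abs_add_le _ _
              _ ≤ M i + |E (X i)| := by rw [abs_neg]; exact add_le_add_left (hM i ω) _
    have hle : ∀ ω, (∑ i, c i * (X i ω - E (X i))) ≤ ⨆ ω', ∑ i, c i * (X i ω' - E (X i)) :=
      le_csSup_of_bdd _ hWbd
    refine nonneg_of_forall_div (∑ i, 4 * |c i| * (M i + 1)) _ (fun K hK => ?_)
    have hKR : (0:ℝ) < K := by exact_mod_cast hK
    -- grid data
    have hδpos : ∀ i : Fin n, 0 < (M i + 1 - -(M i + 1)) / (K:ℝ) :=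
      fun i => div_pos (by have := hMnn i; linarith) hKR
    have hgrid := fun i => grid hP (X i) (-(M i + 1)) (M i + 1) (hai i) (hbi i)
      (hXai i) (hXbi i) K hK
    have hKδ : ∀ i : Fin n, -(M i + 1) + K * ((M i + 1 - -(M i + 1)) / (K:ℝ)) = M i + 1 := by
      intro i
      field_simp
      ring
    have hbound := fun (i : Fin n) ω => indsum (X i) (-(M i + 1))
      ((M i + 1 - -(M i + 1)) / (K:ℝ)) (hδpos i) K hK ω (hXai i ω)
      (by rw [hKδ i]; exact hXbi i ω)
    -- abbreviations
    set s : ℝ := ⨆ ω, ∑ i, c i * (X i ω - E (X i)) with hs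
    set δ : Fin n → ℝ := fun i => (M i + 1 - -(M i + 1)) / (K:ℝ) with hδ
    set A : Fin n → ℕ → Set Ω :=
      fun i k => {ω | -(M i + 1) + ((k:ℝ)+1) * ((M i + 1 - -(M i + 1)) / (K:ℝ)) < X i ω} with hA
    set L : Fin n → ℝ := fun i => -(M i + 1) + ∑ k ∈ Finset.range K, δ i * P (A i k) with hL
    have hEgrid : ∀ i, L i ≤ E (X i) ∧ E (X i) ≤ L i + δ i := by
      intro i
      rw [hrep (X i) (hX i)]
      exact hgrid i
    -- simple positivity
    set q : ℝ := s + (∑ i, c i * E (X i)) - (∑ i, c i * (-(M i + 1))) + (∑ i, |c i| * δ i)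
      with hq
    have hsimple : 0 ≤ q * P univ +
        ∑ p : Fin n × Fin K, (-(c p.1 * δ p.1)) * P (A p.1 (p.2 : ℕ)) := by
      have h := simple_nonneg hP (ι := Option (Fin n × Fin K))
        (c := fun o => o.elim q (fun p => -(c p.1 * δ p.1)))
        (A := fun o => o.elim univ (fun p => A p.1 (p.2 : ℕ)))
        (by
          intro ω
          rw [Fintype.sum_option]
          simp only [Option.elim]
          have huniv : (univ : Set Ω).indicator (fun _ => (1:ℝ)) ω = 1 := by simp
          rw [huniv, mul_one]
          have hsum2 : ∑ p : Fin n × Fin K,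
              (-(c p.1 * δ p.1)) * ((A p.1 (p.2 : ℕ)).indicator (fun _ => (1:ℝ)) ω)
              = ∑ i, (-(c i)) * (∑ k ∈ Finset.range K,
                  δ i * ((A i k).indicator (fun _ => (1:ℝ)) ω)) := by
            rw [Fintype.sum_prod_type]
            refine Finset.sum_congr rfl fun i _ => ?_
            rw [Finset.mul_sum, ← Fin.sum_univ_eq_sum_range
              (fun k => (-(c i)) * (δ i * ((A i k).indicator (fun _ => (1:ℝ)) ω)))]
            refine Finset.sum_congr rfl fun k _ => by ring
          rw [hsum2]
          -- pointwise inequality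
          have hptwise : ∀ i : Fin n,
              c i * (∑ k ∈ Finset.range K, δ i * ((A i k).indicator (fun _ => (1:ℝ)) ω))
                ≤ c i * (X i ω - -(M i + 1)) + |c i| * δ i := by
            intro i
            have h1 := (hbound i ω).1
            have h2 := (hbound i ω).2
            rcases le_or_gt 0 (c i) with hc | hc
            · have habs : |c i| = c i := abs_of_nonneg hc
              rw [habs]
              nlinarith
            · have habs : |c i| = -(c i) := abs_of_neg hc
              rw [habs]
              nlinarith
          have hW := hle ω
          have hexp : ∀ i : Fin n, c i * (X i ω - E (X i))
              = c i * (X i ω - -(M i + 1)) + c i * (-(M i + 1)) - c i * E (X i) := by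
            intro i; ring
          have hsum3 : ∑ i, c i * (X i ω - -(M i + 1))
              = (∑ i, c i * (X i ω - E (X i))) - (∑ i, c i * (-(M i + 1)))
                + (∑ i, c i * E (X i)) := by
            rw [← Finset.sum_sub_distrib, ← Finset.sum_add_distrib]
            exact Finset.sum_congr rfl fun i _ => by ring
          have htotal : ∑ i, c i * (∑ k ∈ Finset.range K,
              δ i * ((A i k).indicator (fun _ => (1:ℝ)) ω)) ≤ q := by
            calc ∑ i, c i * (∑ k ∈ Finset.range K, δ i * ((A i k).indicator (fun _ => (1:ℝ)) ω))
                ≤ ∑ i, (c i * (X i ω - -(M i + 1)) + |c i| * δ i) :=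
                  Finset.sum_le_sum fun i _ => hptwise i
              _ = (∑ i, c i * (X i ω - -(M i + 1))) + (∑ i, |c i| * δ i) :=
                  Finset.sum_add_distrib
              _ ≤ q := by
                  rw [hsum3, hq]
                  have : (∑ i, c i * (X i ω - E (X i))) ≤ s := hW
                  linarith
          have : ∑ i, (-(c i)) * (∑ k ∈ Finset.range K,
              δ i * ((A i k).indicator (fun _ => (1:ℝ)) ω))
              = -(∑ i, c i * (∑ k ∈ Finset.range K,
                  δ i * ((A i k).indicator (fun _ => (1:ℝ)) ω))) := by
            rw [← Finset.sum_neg_distrib]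
            exact Finset.sum_congr rfl fun i _ => by ring
          rw [this]
          linarith)
      rw [Fintype.sum_option] at h
      simpa using h
    -- conclude
    rw [hP.1, mul_one] at hsimple
    have hsum4 : ∑ p : Fin n × Fin K, (-(c p.1 * δ p.1)) * P (A p.1 (p.2 : ℕ))
        = -(∑ i, c i * (L i - -(M i + 1))) := by
      rw [← Finset.sum_neg_distrib, Fintype.sum_prod_type]
      refine Finset.sum_congr rfl fun i _ => ?_
      have hLi : L i - -(M i + 1) = ∑ k ∈ Finset.range K, δ i * P (A i k) := by
        simp only [hL]
        ring
      rw [hLi, Finset.mul_sum, ← Finset.sum_neg_distrib,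
        ← Fin.sum_univ_eq_sum_range (fun k => -(c i * (δ i * P (A i k)))) K]
      exact Finset.sum_congr rfl fun k _ => by ring
    rw [hsum4] at hsimple
    -- hsimple : 0 ≤ q - ∑ i, c i * (L i - -(M i + 1))
    have hEL : ∀ i, c i * E (X i) ≤ c i * L i + |c i| * δ i := by
      intro i
      obtain ⟨h1, h2⟩ := hEgrid i
      rcases le_or_gt 0 (c i) with hc | hc
      · have habs : |c i| = c i := abs_of_nonneg hc
        rw [habs]; nlinarith
      · have habs : |c i| = -(c i) := abs_of_neg hc
        rw [habs]; nlinarith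
    have hsumEL : ∑ i, c i * E (X i) ≤ (∑ i, c i * L i) + (∑ i, |c i| * δ i) := by
      calc ∑ i, c i * E (X i) ≤ ∑ i, (c i * L i + |c i| * δ i) :=
            Finset.sum_le_sum fun i _ => hEL i
        _ = _ := Finset.sum_add_distrib
    have hsplitL : ∑ i, c i * (L i - -(M i + 1))
        = (∑ i, c i * L i) - (∑ i, c i * (-(M i + 1))) := by
      rw [← Finset.sum_sub_distrib]
      exact Finset.sum_congr rfl fun i _ => by ring
    have hδval : ∑ i, |c i| * δ i = (∑ i, 4 * |c i| * (M i + 1)) / (2 * K) := by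
      rw [Finset.sum_div]
      refine Finset.sum_congr rfl fun i _ => ?_
      rw [hδ]
      field_simp
      ring
    have hfinal : -(2 * (∑ i, |c i| * δ i)) ≤ s := by
      rw [hq] at hsimple
      rw [hsplitL] at hsimple
      linarith [hsumEL]
    rw [hδval] at hfinal
    have : -((∑ i, 4 * |c i| * (M i + 1)) / K) ≤ -((∑ i, 4 * |c i| * (M i + 1)) / (2*K) * 2) := by
      have : (∑ i, 4 * |c i| * (M i + 1)) / (2*K) * 2 = (∑ i, 4 * |c i| * (M i + 1)) / K := by
        field_simp
      rw [this]
    linarith [hfinal]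
end

section
/- Let $P$ be a finitely additive probability on a $\sigma$-field $\mathcal{A}$ with $P \ll P_0$ where $P_0$ is a countably additive probability on $\mathcal{A}$. Then $P$ is pure (i.e., the only countably additive measure $\Gamma$ on $\mathcal{A}$ with $0 \le \Gamma \le P$ is $\Gamma = 0$) if and only if there exists a countable partition $H_1, H_2, \dots$ of $\Omega$ with $H_n \in \mathcal{A}$ and $P(H_n) = 0$ for all $n$. -/
open MeasureTheory Set

open scoped ENNReal

namespace FAP2
open FAP

section basics
variable [MeasurableSpace Ω] {P : Set Ω → ℝ} (hP : IsFAPm P)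

include hP

lemma P_empty : P ∅ = 0 := by
  have := hP.2.2 ∅ ∅ MeasurableSet.empty MeasurableSet.empty (disjoint_bot_left)
  simp at this
  linarith

lemma P_mono {A B : Set Ω} (hA : MeasurableSet A) (hB : MeasurableSet B)
    (hAB : A ⊆ B) : P A ≤ P B := by
  have hd : Disjoint A (B \ A) := disjoint_sdiff_right.mono_left le_rfl
  have h := hP.2.2 A (B \ A) hA (hB.diff hA) hd
  rw [Set.union_diff_cancel hAB] at h
  have := hP.2.1 (B \ A) (hB.diff hA)
  linarith

lemma P_biUnion {m : ℕ} {g : ℕ → Set Ω} (hg : ∀ k, MeasurableSet (g k))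
    (hd : ∀ i j, i ≠ j → Disjoint (g i) (g j)) :
    P (⋃ k ∈ Finset.range m, g k) = ∑ k ∈ Finset.range m, P (g k) := by
  induction m with
  | zero => simpa using P_empty hP
  | succ m ih =>
      have hmeas : MeasurableSet (⋃ k ∈ Finset.range m, g k) :=
        MeasurableSet.biUnion (Finset.range m).countable_toSet (fun k _ => hg k)
      have hdisj : Disjoint (⋃ k ∈ Finset.range m, g k) (g m) := by
        refine Set.disjoint_iUnion_left.2 fun i => Set.disjoint_iUnion_left.2 fun hi => ?_
        exact hd i m (by simp at hi; omega)
      have hstep : (⋃ k ∈ Finset.range (m + 1), g k) =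
          (⋃ k ∈ Finset.range m, g k) ∪ g m := by
        ext x
        simp only [Finset.mem_range, Nat.lt_succ_iff_lt_or_eq, mem_iUnion, mem_union]
        constructor
        · rintro ⟨i, hi | rfl, hx⟩
          exacts [Or.inl ⟨i, hi, hx⟩, Or.inr hx]
        · rintro (⟨i, hi, hx⟩ | hx)
          exacts [⟨i, Or.inl hi, hx⟩, ⟨m, Or.inr rfl, hx⟩]
      rw [hstep, hP.2.2 _ _ hmeas (hg m) hdisj, ih, Finset.sum_range_succ]

end basics

variable {Ω : Type*} [MeasurableSpace Ω]

/-- Admissible approximating sequences. -/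
def Adm (s : Set Ω) (A : ℕ → Set Ω) : Prop :=
  (∀ n, MeasurableSet (A n)) ∧ Monotone A ∧ (⋃ n, A n) = s

noncomputable def gam (P : Set Ω → ℝ) (s : Set Ω) : ℝ≥0∞ :=
  ⨅ (A : ℕ → Set Ω) (_ : Adm s A), ⨆ n, ENNReal.ofReal (P (A n))

variable {P : Set Ω → ℝ}

lemma gam_le_of_adm {s : Set Ω} {A : ℕ → Set Ω} (h : Adm s A) :
    gam P s ≤ ⨆ n, ENNReal.ofReal (P (A n)) := iInf₂_le A h

lemma adm_const {s : Set Ω} (hs : MeasurableSet s) : Adm s (fun _ => s) :=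
  ⟨fun _ => hs, monotone_const, iUnion_const s⟩

lemma gam_le {s : Set Ω} (hs : MeasurableSet s) : gam P s ≤ ENNReal.ofReal (P s) := by
  simpa using gam_le_of_adm (P := P) (adm_const hs)

lemma gam_empty (hP : IsFAPm P) : gam P (∅ : Set Ω) = 0 := by
  have := gam_le (P := P) (MeasurableSet.empty (α := Ω))
  rw [P_empty hP] at this
  simpa using this

lemma adm_subset {s : Set Ω} {A : ℕ → Set Ω} (h : Adm s A) (n : ℕ) : A n ⊆ s :=
  h.2.2 ▸ subset_iUnion A n

lemma adm_inter {s t : Set Ω} {A : ℕ → Set Ω} (h : Adm t A) (hst : s ⊆ t)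
    (hs : MeasurableSet s) : Adm s (fun n => A n ∩ s) :=
  ⟨fun n => (h.1 n).inter hs, fun _ _ hnm => inter_subset_inter_left _ (h.2.1 hnm),
    by rw [← iUnion_inter, h.2.2, inter_eq_right.2 hst]⟩

lemma gam_mono (hP : IsFAPm P) {s t : Set Ω} (hs : MeasurableSet s)
    (ht : MeasurableSet t) (hst : s ⊆ t) : gam P s ≤ gam P t := by
  refine le_iInf₂ fun A hA => ?_
  refine le_trans (gam_le_of_adm (adm_inter hA hst hs)) ?_
  exact iSup_mono fun n => ENNReal.ofReal_le_ofReal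
    (P_mono hP ((hA.1 n).inter hs) (hA.1 n) Set.inter_subset_left)

variable {Ω : Type*} [MeasurableSpace Ω] {P : Set Ω → ℝ}

lemma ofRealP_mono (hP : IsFAPm P) {A : ℕ → Set Ω} (hA : ∀ n, MeasurableSet (A n))
    (hmono : Monotone A) {s : Set Ω} (hs : MeasurableSet s) :
    Monotone fun n => ENNReal.ofReal (P (A n ∩ s)) := fun n m hnm =>
  ENNReal.ofReal_le_ofReal (P_mono hP ((hA n).inter hs) ((hA m).inter hs)
    (inter_subset_inter_left _ (hmono hnm)))

lemma gam_superadd_pair (hP : IsFAPm P) {s t : Set Ω} (hs : MeasurableSet s)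
    (ht : MeasurableSet t) (hd : Disjoint s t) :
    gam P s + gam P t ≤ gam P (s ∪ t) := by
  refine le_iInf₂ fun B hB => ?_
  have h1 : gam P s ≤ ⨆ n, ENNReal.ofReal (P (B n ∩ s)) :=
    gam_le_of_adm (adm_inter hB subset_union_left hs)
  have h2 : gam P t ≤ ⨆ n, ENNReal.ofReal (P (B n ∩ t)) :=
    gam_le_of_adm (adm_inter hB subset_union_right ht)
  refine le_trans (add_le_add h1 h2) ?_
  rw [ENNReal.iSup_add_iSup_of_monotone (ofRealP_mono hP hB.1 hB.2.1 hs)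
    (ofRealP_mono hP hB.1 hB.2.1 ht)]
  refine iSup_mono fun n => ?_
  have hadd : P (B n ∩ s) + P (B n ∩ t) = P (B n) := by
    have := hP.2.2 (B n ∩ s) (B n ∩ t) ((hB.1 n).inter hs) ((hB.1 n).inter ht)
      (hd.mono inter_subset_right inter_subset_right)
    rw [← Set.inter_union_distrib_left,
      inter_eq_left.2 (adm_subset hB n)] at this
    linarith
  rw [← ENNReal.ofReal_add (hP.2.1 _ ((hB.1 n).inter hs)) (hP.2.1 _ ((hB.1 n).inter ht)), hadd]

lemma biUnion_range_succ (g : ℕ → Set Ω) (m : ℕ) :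
    (⋃ k ∈ Finset.range (m + 1), g k) = (⋃ k ∈ Finset.range m, g k) ∪ g m := by
  ext x
  simp only [Finset.mem_range, Nat.lt_succ_iff_lt_or_eq, mem_iUnion, mem_union]
  constructor
  · rintro ⟨i, hi | rfl, hx⟩
    exacts [Or.inl ⟨i, hi, hx⟩, Or.inr hx]
  · rintro (⟨i, hi, hx⟩ | hx)
    exacts [⟨i, Or.inl hi, hx⟩, ⟨m, Or.inr rfl, hx⟩]

lemma gam_superadd_fin (hP : IsFAPm P) {f : ℕ → Set Ω} (hf : ∀ i, MeasurableSet (f i))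
    (hd : Pairwise (Function.onFun Disjoint f)) (m : ℕ) :
    ∑ i ∈ Finset.range m, gam P (f i) ≤ gam P (⋃ i ∈ Finset.range m, f i) := by
  induction m with
  | zero => simp [gam_empty hP]
  | succ m ih =>
      rw [Finset.sum_range_succ, biUnion_range_succ]
      have hmeas : MeasurableSet (⋃ k ∈ Finset.range m, f k) :=
        MeasurableSet.biUnion (Finset.range m).countable_toSet (fun k _ => hf k)
      have hdisj : Disjoint (⋃ k ∈ Finset.range m, f k) (f m) := by
        refine Set.disjoint_iUnion_left.2 fun i => Set.disjoint_iUnion_left.2 fun hi => ?_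
        exact hd (by simp at hi; omega)
      exact le_trans (add_le_add ih le_rfl) (gam_superadd_pair hP hmeas (hf m) hdisj)

lemma exists_adm_lt {s : Set Ω} {c : ℝ≥0∞} (h : gam P s < c) :
    ∃ A : ℕ → Set Ω, Adm s A ∧ (⨆ n, ENNReal.ofReal (P (A n))) < c := by
  simpa [gam, iInf_lt_iff] using h

lemma gam_ne_top {s : Set Ω} (hs : MeasurableSet s) : gam P s ≠ ∞ :=
  fun h => by simpa [h] using gam_le (P := P) hs

lemma gam_iUnion (hP : IsFAPm P) {f : ℕ → Set Ω} (hf : ∀ i, MeasurableSet (f i))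
    (hd : Pairwise (Function.onFun Disjoint f)) :
    gam P (⋃ i, f i) = ∑' i, gam P (f i) := by
  have hU : MeasurableSet (⋃ i, f i) := MeasurableSet.iUnion hf
  refine le_antisymm ?_ ?_
  · -- ≤ : countable subadditivity via diagonal sequences
    refine ENNReal.le_of_forall_pos_le_add fun ε hε hfin => ?_
    have hex : ∀ k : ℕ, ∃ A : ℕ → Set Ω, Adm (f k) A ∧
        (⨆ n, ENNReal.ofReal (P (A n))) < gam P (f k) + (ε : ℝ≥0∞) * 2⁻¹ ^ (k + 1) := by
      intro k
      refine exists_adm_lt (ENNReal.lt_add_right (gam_ne_top (hf k)) ?_)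
      exact mul_ne_zero (ENNReal.coe_ne_zero.2 hε.ne') (pow_ne_zero _ (by norm_num))
    choose AA hAA hAAlt using hex
    set C : ℕ → Set Ω := fun n => ⋃ k ∈ Finset.range (n + 1), AA k n
    have hgeo : ∑' k : ℕ, (2⁻¹ : ℝ≥0∞) ^ (k + 1) = 1 := by
      simp only [pow_succ, ENNReal.tsum_mul_right]
      rw [ENNReal.tsum_geometric, ENNReal.one_sub_inv_two, inv_inv]
      simp [ENNReal.mul_inv_cancel]
    have hCadm : Adm (⋃ i, f i) C := by
      refine ⟨fun n => MeasurableSet.biUnion (Finset.range (n + 1)).countable_toSet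
        (fun k _ => (hAA k).1 n), ?_, ?_⟩
      · refine monotone_nat_of_le_succ fun n x hx => ?_
        simp only [C, mem_iUnion, Finset.mem_range] at hx ⊢
        obtain ⟨k, hk, hx⟩ := hx
        exact ⟨k, by omega, (hAA k).2.1 (Nat.le_succ n) hx⟩
      · refine subset_antisymm (iUnion_subset fun n => iUnion₂_subset fun k _ => ?_)
          (iUnion_subset fun k x hx => ?_)
        · exact (adm_subset (hAA k) n).trans (subset_iUnion f k)
        · have : x ∈ ⋃ n, AA k n := by rw [(hAA k).2.2]; exact hx
          obtain ⟨n, hn⟩ := mem_iUnion.1 this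
          refine mem_iUnion.2 ⟨max k n, ?_⟩
          simp only [C, mem_iUnion, Finset.mem_range]
          exact ⟨k, by omega, (hAA k).2.1 (le_max_right k n) hn⟩
    refine le_trans (gam_le_of_adm hCadm) (iSup_le fun n => ?_)
    have hPsum : P (C n) = ∑ k ∈ Finset.range (n + 1), P (AA k n) :=
      P_biUnion hP (fun k => (hAA k).1 n)
        (fun i j hij => ((hd hij).mono (adm_subset (hAA i) n) (adm_subset (hAA j) n)))
    rw [hPsum, ENNReal.ofReal_sum_of_nonneg (fun i _ => hP.2.1 _ ((hAA i).1 n))]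
    have hterm : ∀ k ∈ Finset.range (n + 1), ENNReal.ofReal (P (AA k n)) ≤
        gam P (f k) + (ε : ℝ≥0∞) * 2⁻¹ ^ (k + 1) := fun k _ =>
      le_trans (le_iSup (fun n => ENNReal.ofReal (P (AA k n))) n) (hAAlt k).le
    refine le_trans (Finset.sum_le_sum hterm) ?_
    rw [Finset.sum_add_distrib, ← Finset.mul_sum]
    refine add_le_add (ENNReal.sum_le_tsum _) ?_
    calc (ε : ℝ≥0∞) * ∑ k ∈ Finset.range (n + 1), 2⁻¹ ^ (k + 1)
        ≤ (ε : ℝ≥0∞) * ∑' k : ℕ, (2⁻¹ : ℝ≥0∞) ^ (k + 1) :=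
          mul_le_mul_right (ENNReal.sum_le_tsum _) _
      _ = ε := by rw [hgeo, mul_one]
  · rw [ENNReal.tsum_eq_iSup_sum' (fun m => Finset.range m)
      (fun t => Finset.exists_nat_subset_range t)]
    refine iSup_le fun m => le_trans (gam_superadd_fin hP hf hd m) ?_
    exact gam_mono hP
      (MeasurableSet.biUnion (Finset.range m).countable_toSet (fun k _ => hf k)) hU
      (Set.iUnion₂_subset fun i _ => subset_iUnion f i)


/-- The countably additive minorant measure built from `gam`. -/
noncomputable def gamMeasure (hP : IsFAPm P) : MeasureTheory.Measure Ω :=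
  MeasureTheory.Measure.ofMeasurable (fun s _ => gam P s) (gam_empty hP)
    (fun _ hf hd => gam_iUnion hP hf hd)

lemma gamMeasure_apply (hP : IsFAPm P) {s : Set Ω} (hs : MeasurableSet s) :
    gamMeasure hP s = gam P s :=
  MeasureTheory.Measure.ofMeasurable_apply s hs

lemma real_null {x : ℝ} (h0 : 0 ≤ x) (h : ∀ m : ℕ, x < 1 / (m + 1)) : x = 0 := by
  rcases h0.eq_or_lt with h' | h'
  · exact h'.symm
  · exfalso
    obtain ⟨n, hn⟩ := exists_nat_gt (1 / x)
    have h2 := h n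
    have h3 : (0:ℝ) < (n:ℝ) + 1 := by positivity
    rw [div_lt_iff₀ h'] at hn
    rw [lt_div_iff₀ h3] at h2
    nlinarith


end FAP2


open FAP
open FAP2
open scoped ENNReal

/-- a finitely additive probability P ≪ P₀ is pure iff there is a
countable measurable partition of Ω whose members are all P-null. -/
theorem stmt3 {Ω : Type*} [MeasurableSpace Ω] (P₀ : Measure Ω) [IsProbabilityMeasure P₀]
    (P : Set Ω → ℝ) (hP : FAP.IsFAPm P) (hac : FAP.AC P P₀) :
    FAP.IsPure P ↔
      ∃ H : ℕ → Set Ω, (∀ n, MeasurableSet (H n)) ∧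
        Pairwise (Function.onFun Disjoint H) ∧ (⋃ n, H n) = univ ∧
        ∀ n, P (H n) = 0 := by
  constructor
  · intro hpure
    -- the canonical countably additive minorant vanishes
    have hΓ0 : gamMeasure hP = 0 := by
      refine hpure _ fun A hA => ?_
      rw [gamMeasure_apply hP hA]
      exact gam_le hA
    have huniv : gam P (Set.univ : Set Ω) = 0 := by
      rw [← gamMeasure_apply hP MeasurableSet.univ, hΓ0]
      rfl
    -- extract, for each m, an admissible sequence with P-values below 1/(m+1)
    have hex : ∀ m : ℕ, ∃ A : ℕ → Set Ω, Adm Set.univ A ∧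
        ∀ n, P (A n) < 1 / (m + 1) := by
      intro m
      have hpos : (0 : ℝ≥0∞) < ENNReal.ofReal (1 / (m + 1)) :=
        ENNReal.ofReal_pos.2 (by positivity)
      obtain ⟨A, hA, hlt⟩ := exists_adm_lt (P := P) (huniv ▸ hpos)
      refine ⟨A, hA, fun n => ?_⟩
      have := lt_of_le_of_lt (le_iSup (fun n => ENNReal.ofReal (P (A n))) n) hlt
      exact (ENNReal.ofReal_lt_ofReal_iff (by positivity)).1 this
    choose A hadm hsmall using hex
    -- choose large indices using countable additivity of P₀
    have hex2 : ∀ m : ℕ, ∃ k : ℕ, P₀ ((A m k)ᶜ) < 2⁻¹ ^ (m + 1) := by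
      intro m
      have htend : Filter.Tendsto (fun k => P₀ ((A m k)ᶜ)) Filter.atTop (nhds 0) := by
        have h1 : Filter.Tendsto (P₀ ∘ fun k => (A m k)ᶜ) Filter.atTop
            (nhds (P₀ (⋂ k, (A m k)ᶜ))) :=
          MeasureTheory.tendsto_measure_iInter_atTop
            (fun k => ((hadm m).1 k).compl.nullMeasurableSet)
            (fun i j hij => Set.compl_subset_compl.2 ((hadm m).2.1 hij))
            ⟨0, MeasureTheory.measure_ne_top _ _⟩
        have h2 : (⋂ k, (A m k)ᶜ) = (∅ : Set Ω) := by
          rw [← Set.compl_iUnion, (hadm m).2.2, Set.compl_univ]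
        rw [h2] at h1
        simpa [Function.comp_def] using h1
      have hpos : (0 : ℝ≥0∞) < 2⁻¹ ^ (m + 1) :=
        ENNReal.pow_pos (by norm_num) _
      exact ((htend.eventually_lt_const hpos).exists)
    choose nn hnn using hex2
    set s : ℕ → Set Ω := fun m => (A m (nn m))ᶜ with hs_def
    -- Borel–Cantelli
    have hsum : ∑' m, P₀ (s m) ≠ ∞ := by
      have hgeo : ∑' k : ℕ, (2⁻¹ : ℝ≥0∞) ^ (k + 1) = 1 := by
        simp only [pow_succ, ENNReal.tsum_mul_right]
        rw [ENNReal.tsum_geometric, ENNReal.one_sub_inv_two, inv_inv]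
        simp [ENNReal.mul_inv_cancel]
      have : ∑' m, P₀ (s m) ≤ 1 := hgeo ▸ ENNReal.tsum_le_tsum fun m => (hnn m).le
      exact (this.trans_lt (by norm_num)).ne
    set D : Set Ω := Filter.limsup s Filter.atTop with hD_def
    have hDmeas : MeasurableSet D :=
      MeasurableSet.measurableSet_limsup fun m => ((hadm m).1 (nn m)).compl
    have hD0 : P₀ D = 0 := MeasureTheory.measure_limsup_atTop_eq_zero hsum
    have hPD : P D = 0 := hac D hDmeas hD0
    -- the null increasing sets
    set G : ℕ → Set Ω := fun r => ⋂ m, A (m + r) (nn (m + r)) with hG_def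
    have hGmeas : ∀ r, MeasurableSet (G r) :=
      fun r => MeasurableSet.iInter fun m => (hadm (m + r)).1 (nn (m + r))
    have hPG : ∀ r, P (G r) = 0 := by
      intro r
      refine real_null (hP.2.1 _ (hGmeas r)) fun m => ?_
      have h1 : P (G r) ≤ P (A (m + r) (nn (m + r))) :=
        P_mono hP (hGmeas r) ((hadm (m + r)).1 (nn (m + r))) (Set.iInter_subset _ m)
      have h2 := hsmall (m + r) (nn (m + r))
      have h3 : 1 / ((m : ℝ) + r + 1) ≤ 1 / (m + 1) := by
        apply one_div_le_one_div_of_le (by positivity)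
        push_cast
        linarith [Nat.cast_nonneg (α := ℝ) r]
      calc P (G r) ≤ P (A (m + r) (nn (m + r))) := h1
        _ < 1 / ((m : ℝ) + r + 1) := by push_cast at h2 ⊢; linarith
        _ ≤ 1 / (m + 1) := h3
    -- the countable null cover
    set K : ℕ → Set Ω := fun k => Nat.casesOn k D G with hK_def
    have hKmeas : ∀ k, MeasurableSet (K k) := by
      rintro (_ | k)
      exacts [hDmeas, hGmeas k]
    have hKnull : ∀ k, P (K k) = 0 := by
      rintro (_ | k)
      exacts [hPD, hPG k]
    have hKcover : (⋃ k, K k) = Set.univ := by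
      refine Set.eq_univ_of_forall fun ω => ?_
      by_cases hω : ω ∈ D
      · exact Set.mem_iUnion.2 ⟨0, hω⟩
      · rw [hD_def, Filter.mem_limsup_iff_frequently_mem, Filter.not_frequently] at hω
        obtain ⟨r, hr⟩ := (Filter.eventually_atTop).1 hω
        refine Set.mem_iUnion.2 ⟨r + 1, ?_⟩
        show ω ∈ G r
        refine Set.mem_iInter.2 fun m => ?_
        have := hr (m + r) (by omega)
        simpa [hs_def] using this
    refine ⟨disjointed K, fun n => MeasurableSet.disjointed hKmeas n,
      disjoint_disjointed K, by rw [iUnion_disjointed, hKcover], fun n => ?_⟩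
    have h1 : P (disjointed K n) ≤ P (K n) :=
      P_mono hP (MeasurableSet.disjointed hKmeas n) (hKmeas n) (disjointed_subset K n)
    have h2 := hP.2.1 _ (MeasurableSet.disjointed hKmeas n)
    rw [hKnull n] at h1
    linarith
  · rintro ⟨H, hmeas, hdisj, hcover, hnull⟩ Γ hΓ
    have hHnull : ∀ n, Γ (H n) = 0 := by
      intro n
      have := hΓ (H n) (hmeas n)
      rw [hnull n, ENNReal.ofReal_zero] at this
      exact le_antisymm this zero_le
    have : Γ Set.univ = 0 := by
      rw [← hcover]
      refine le_antisymm (le_trans (MeasureTheory.measure_iUnion_le H) ?_) zero_le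
      simp [hHnull]
    exact MeasureTheory.Measure.measure_univ_eq_zero.1 this
end

section
/- Let $P$ be a pure finitely additive probability on $\mathcal{A}$ with $P \ll P_0$. Then for every $\epsilon > 0$ there exists $A \in \mathcal{A}$ with $P(A) = 0$ and $P_0(A^c) < \epsilon$. -/
open MeasureTheory Set

namespace FAP

variable {Ω : Type*}

section Aux
variable {Ω : Type*} [MeasurableSpace Ω] {P : Set Ω → ℝ}

lemma fap_empty (hP : IsFAPm P) : P ∅ = 0 := by
  have := hP.2.2 ∅ ∅ .empty .empty disjoint_bot_left
  simp at this; linarith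

lemma fap_mono (hP : IsFAPm P) {A B : Set Ω} (hA : MeasurableSet A) (hB : MeasurableSet B)
    (h : A ⊆ B) : P A ≤ P B := by
  have := hP.2.2 A (B \ A) hA (hB.diff hA) disjoint_sdiff_right
  rw [union_diff_cancel h] at this
  have h0 := hP.2.1 (B \ A) (hB.diff hA)
  linarith

lemma fap_union_le (hP : IsFAPm P) {A B : Set Ω} (hA : MeasurableSet A) (hB : MeasurableSet B) :
    P (A ∪ B) ≤ P A + P B := by
  have h1 := hP.2.2 A (B \ A) hA (hB.diff hA) disjoint_sdiff_right
  rw [union_diff_self] at h1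
  have h2 := fap_mono hP (hB.diff hA) hB diff_subset
  linarith

lemma fap_finset_subadd (hP : IsFAPm P) (B : ℕ → Set Ω) (hB : ∀ n, MeasurableSet (B n)) :
    ∀ N : ℕ, P (⋃ i ∈ Finset.range N, B i) ≤ ∑ i ∈ Finset.range N, P (B i) := by
  intro N
  induction N with
  | zero => simp [fap_empty hP]
  | succ n ih =>
    rw [Finset.sum_range_succ]
    have h1 : (⋃ i ∈ Finset.range (n+1), B i) = (⋃ i ∈ Finset.range n, B i) ∪ B n := by
      rw [Finset.range_add_one, Finset.set_biUnion_insert, union_comm]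
    rw [h1]
    have hm : MeasurableSet (⋃ i ∈ Finset.range n, B i) :=
      MeasurableSet.biUnion (Finset.range n).countable_toSet (fun i _ => hB i)
    have := fap_union_le hP hm (hB n)
    linarith

/-- Key step: from purity, for every `r > 0` and `η > 0` there is a measurable set `C`
with `P C < r` and `P₀ Cᶜ < η`. -/
lemma pure_key (P₀ : Measure Ω) [IsProbabilityMeasure P₀] (hP : IsFAPm P)
    (hpure : IsPure P) {r : ℝ} (hr : 0 < r) {η : ENNReal} (hη : 0 < η) :
    ∃ C : Set Ω, MeasurableSet C ∧ P C < r ∧ P₀ Cᶜ < η := by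
  classical
  set m : Set Ω → ENNReal := fun s => if MeasurableSet s then ENNReal.ofReal (P s) else ⊤ with hm
  have hm0 : m ∅ = 0 := by simp [hm, MeasurableSet.empty, fap_empty hP]
  set ν : OuterMeasure Ω := OuterMeasure.ofFunction m hm0 with hν
  have hcar : ∀ s : Set Ω, MeasurableSet s → MeasurableSet[ν.caratheodory] s := by
    intro s hs
    refine OuterMeasure.ofFunction_caratheodory (fun t => ?_)
    by_cases ht : MeasurableSet t
    · have h1 : MeasurableSet (t ∩ s) := ht.inter hs
      have h2 : MeasurableSet (t \ s) := ht.diff hs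
      simp only [hm, if_pos ht, if_pos h1, if_pos h2]
      rw [← ENNReal.ofReal_add (hP.2.1 _ h1) (hP.2.1 _ h2)]
      apply ENNReal.ofReal_le_ofReal
      have := hP.2.2 (t ∩ s) (t \ s) h1 h2
        (disjoint_sdiff_right.mono_left inter_subset_right)
      rw [inter_union_diff] at this
      linarith
    · simp [hm, if_neg ht]
  have hle : ‹MeasurableSpace Ω› ≤ ν.caratheodory := fun s hs => hcar s hs
  set μ : Measure Ω := ν.toMeasure hle with hμ
  have hμ0 : μ = 0 := by
    refine hpure μ (fun A hA => ?_)
    rw [hμ, toMeasure_apply ν hle hA]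
    exact (OuterMeasure.ofFunction_le A).trans_eq (by simp [hm, if_pos hA])
  have hν0 : ν univ = 0 := by
    have := toMeasure_apply ν hle MeasurableSet.univ
    rw [← hμ, hμ0] at this
    simpa using this.symm
  -- extract a cover with small total mass
  have hlt : ν univ < ENNReal.ofReal r := by
    rw [hν0]; exact ENNReal.ofReal_pos.2 hr
  rw [hν, OuterMeasure.ofFunction_apply] at hlt
  simp only [iInf_lt_iff] at hlt
  obtain ⟨t, ht, hsum⟩ := hlt
  have hmeas : ∀ i, MeasurableSet (t i) := by
    intro i
    by_contra h
    have h1 : m (t i) = ⊤ := if_neg h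
    have h2 : (⊤ : ENNReal) ≤ ∑' i, m (t i) := h1 ▸ ENNReal.le_tsum i
    exact absurd (h2.trans_lt hsum) (by simp)
  -- the partial unions
  set C : ℕ → Set Ω := fun N => ⋃ i ∈ Finset.range N, t i with hC
  have hCmeas : ∀ N, MeasurableSet (C N) := fun N =>
    MeasurableSet.biUnion (Finset.range N).countable_toSet (fun i _ => hmeas i)
  have hCP : ∀ N, P (C N) < r := by
    intro N
    have h1 : ENNReal.ofReal (P (C N)) ≤ ∑' i, m (t i) := by
      calc ENNReal.ofReal (P (C N)) ≤ ENNReal.ofReal (∑ i ∈ Finset.range N, P (t i)) :=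
            ENNReal.ofReal_le_ofReal (fap_finset_subadd hP t hmeas N)
        _ = ∑ i ∈ Finset.range N, ENNReal.ofReal (P (t i)) :=
            ENNReal.ofReal_sum_of_nonneg (fun i _ => hP.2.1 _ (hmeas i))
        _ = ∑ i ∈ Finset.range N, m (t i) := by
            refine Finset.sum_congr rfl (fun i _ => ?_); simp [hm, if_pos (hmeas i)]
        _ ≤ ∑' i, m (t i) := ENNReal.sum_le_tsum _
    exact (ENNReal.ofReal_lt_ofReal_iff hr).mp (h1.trans_lt hsum)
  -- the complements shrink to ∅ in P₀-measure
  have hCun : (⋃ N, C N) = univ := by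
    apply eq_univ_of_univ_subset
    refine ht.trans (iUnion_subset fun i => ?_)
    exact subset_iUnion_of_subset (i + 1)
      (subset_biUnion_of_mem (Finset.self_mem_range_succ i))
  have hanti : Antitone (fun N => (C N)ᶜ) := by
    intro a b hab
    have hsub : C a ⊆ C b := by
      intro x hx
      simp only [hC, mem_iUnion, Finset.mem_range] at hx ⊢
      obtain ⟨i, hi, hxi⟩ := hx
      exact ⟨i, lt_of_lt_of_le hi hab, hxi⟩
    exact compl_subset_compl.2 hsub
  have htend : Filter.Tendsto (fun N => P₀ ((C N)ᶜ)) Filter.atTop (nhds 0) := by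
    have h1 : (⋂ N, (C N)ᶜ) = ∅ := by
      rw [← compl_iUnion, hCun, compl_univ]
    have := tendsto_measure_iInter_atTop (μ := P₀)
      (fun N => ((hCmeas N).compl).nullMeasurableSet) hanti
      ⟨0, measure_ne_top _ _⟩
    rw [h1] at this
    simpa [Function.comp_def] using this
  have hev : ∀ᶠ N in Filter.atTop, P₀ ((C N)ᶜ) < η :=
    htend.eventually_lt_const hη
  obtain ⟨N, hN⟩ := hev.exists
  exact ⟨C N, hCmeas N, hCP N, hN⟩

end Aux

end FAP

open FAP

/-- if P is pure and P ≪ P₀, for every ε > 0 there is a measurable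
set A with P(A) = 0 and P₀(complement of A) < ε. -/
theorem stmt4 {Ω : Type*} [MeasurableSpace Ω] (P₀ : Measure Ω) [IsProbabilityMeasure P₀]
    (P : Set Ω → ℝ) (hP : FAP.IsFAPm P) (hac : FAP.AC P P₀) (hpure : FAP.IsPure P) :
    ∀ ε : ℝ, 0 < ε → ∃ A : Set Ω, MeasurableSet A ∧ P A = 0 ∧
      P₀ Aᶜ < ENNReal.ofReal ε := by
  intro ε hε
  have key : ∀ k : ℕ, ∃ C : Set Ω, MeasurableSet C ∧ P C < (1/2 : ℝ)^k ∧
      P₀ Cᶜ < ENNReal.ofReal (ε / 2 ^ (k + 2)) := by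
    intro k
    exact FAP.pure_key P₀ hP hpure (by positivity)
      (ENNReal.ofReal_pos.2 (by positivity))
  choose C hCm hCP hC0 using key
  have measA : MeasurableSet (⋂ k, C k) := MeasurableSet.iInter (fun k => hCm k)
  refine ⟨⋂ k, C k, measA, ?_, ?_⟩
  · have hle : ∀ k, P (⋂ k, C k) ≤ (1/2 : ℝ)^k := fun k =>
      (FAP.fap_mono hP measA (hCm k) (iInter_subset _ k)).trans (hCP k).le
    have h0 : P (⋂ k, C k) ≤ 0 :=
      ge_of_tendsto (tendsto_pow_atTop_nhds_zero_of_lt_one (by norm_num) (by norm_num))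
        (Filter.Eventually.of_forall hle)
    exact le_antisymm h0 (hP.2.1 _ measA)
  · have hsummable : Summable (fun k : ℕ => ε / 2 ^ (k + 2)) := by
      have : (fun k : ℕ => ε / 2 ^ (k + 2)) = fun k : ℕ => (ε / 4) * (1/2)^k := by
        funext k; rw [one_div_pow]; ring
      rw [this]
      exact summable_geometric_two.mul_left _
    have hsum : ∑' k : ℕ, (ε / 2 ^ (k + 2) : ℝ) = ε / 2 := by
      have h1 : ∑' k : ℕ, (ε / 2 ^ (k + 2) : ℝ) = ∑' k : ℕ, (ε / 2) / 2 / 2 ^ k :=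
        tsum_congr fun k => by ring
      rw [h1, tsum_geometric_two' (ε / 2)]
    calc P₀ (⋂ k, C k)ᶜ ≤ ∑' k, P₀ (C k)ᶜ := by
          rw [compl_iInter]; exact measure_iUnion_le _
      _ ≤ ∑' k, ENNReal.ofReal (ε / 2 ^ (k + 2)) :=
          ENNReal.tsum_le_tsum fun k => (hC0 k).le
      _ = ENNReal.ofReal (∑' k : ℕ, (ε / 2 ^ (k + 2) : ℝ)) :=
          (ENNReal.ofReal_tsum_of_nonneg (fun k => by positivity) hsummable).symm
      _ = ENNReal.ofReal (ε / 2) := by rw [hsum]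
      _ < ENNReal.ofReal ε := by
          rw [ENNReal.ofReal_lt_ofReal_iff hε]; linarith
end

section
/- Let $P$ be a finitely additive probability on $\mathcal{A}$ with $P \ll P_0$, and define $\Gamma(A) = \inf\{ P(B) + P_0(A \setminus B) : B \in \mathcal{A},\, B \subset A \}$ for $A \in \mathcal{A}$. Then $\Gamma$ is a finitely additive measure on $\mathcal{A}$ satisfying $0 \le \Gamma \le P_0$, and hence $\Gamma$ is countably additive. -/
open MeasureTheory Set

open FAP

/-- Γ(A) = inf over measurable B ⊆ A of P(B) + P₀(A minus B) is a
finitely additive measure with 0 ≤ Γ ≤ P₀, hence countably additive. -/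
theorem stmt5 {Ω : Type*} [MeasurableSpace Ω] (P₀ : Measure Ω) [IsProbabilityMeasure P₀]
    (P : Set Ω → ℝ) (hP : FAP.IsFAPm P) (hac : FAP.AC P P₀)
    (Γ : Set Ω → ℝ)
    (hΓ : ∀ A : Set Ω, Γ A =
      sInf {x : ℝ | ∃ B : Set Ω, MeasurableSet B ∧ B ⊆ A ∧
        x = P B + (P₀ (A \ B)).toReal}) :
    (∀ A B : Set Ω, MeasurableSet A → MeasurableSet B → Disjoint A B →
      Γ (A ∪ B) = Γ A + Γ B) ∧
    (∀ A : Set Ω, MeasurableSet A → 0 ≤ Γ A ∧ Γ A ≤ (P₀ A).toReal) ∧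
    (∀ H : ℕ → Set Ω, (∀ n, MeasurableSet (H n)) → Pairwise (Function.onFun Disjoint H) →
      HasSum (fun n => Γ (H n)) (Γ (⋃ n, H n))) := by
  obtain ⟨hP1, hPnn, hPadd⟩ := hP
  have hPempty : P ∅ = 0 := by
    have := hPadd ∅ ∅ MeasurableSet.empty MeasurableSet.empty (disjoint_bot_left)
    simp at this; linarith
  set S : Set Ω → Set ℝ := fun A => {x : ℝ | ∃ B : Set Ω, MeasurableSet B ∧ B ⊆ A ∧
        x = P B + (P₀ (A \ B)).toReal} with hS
  have hmem : ∀ A, (P ∅ + (P₀ (A \ ∅)).toReal) ∈ S A := fun A =>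
    ⟨∅, MeasurableSet.empty, empty_subset A, rfl⟩
  have hne : ∀ A, (S A).Nonempty := fun A => ⟨_, hmem A⟩
  have hbdd : ∀ A, BddBelow (S A) := by
    intro A
    refine ⟨0, fun x hx => ?_⟩
    obtain ⟨B, hB, _, rfl⟩ := hx
    have := hPnn B hB
    positivity
  -- nonneg and ≤ P₀
  have hnn : ∀ A : Set Ω, 0 ≤ Γ A := by
    intro A
    rw [hΓ]
    refine le_csInf (hne A) ?_
    rintro x ⟨B, hB, _, rfl⟩
    have := hPnn B hB
    positivity
  have hle : ∀ A : Set Ω, Γ A ≤ (P₀ A).toReal := by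
    intro A
    rw [hΓ]
    refine csInf_le_of_le (hbdd A) (hmem A) ?_
    rw [hPempty, diff_empty, zero_add]
  -- finite additivity
  have hfinadd : ∀ A B : Set Ω, MeasurableSet A → MeasurableSet B → Disjoint A B →
      Γ (A ∪ B) = Γ A + Γ B := by
    intro A B hA hB hAB
    have h1 : Γ (A ∪ B) ≤ Γ A + Γ B := by
      have hstep2 : ∀ x ∈ S A, Γ (A ∪ B) - x ≤ Γ B := by
        rintro x ⟨C, hC, hCA, rfl⟩
        rw [hΓ B]
        refine le_csInf (hne B) ?_
        rintro y ⟨D, hD, hDB, rfl⟩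
        have hgoal : Γ (A ∪ B) ≤ (P C + (P₀ (A \ C)).toReal) + (P D + (P₀ (B \ D)).toReal) := by
          have hkey : Γ (A ∪ B) ≤ P (C ∪ D) + (P₀ ((A ∪ B) \ (C ∪ D))).toReal := by
            rw [hΓ]
            exact csInf_le (hbdd _) ⟨C ∪ D, hC.union hD,
              union_subset_union hCA hDB, rfl⟩
          have hCD : Disjoint C D :=
            hAB.mono hCA hDB
          have hPeq : P (C ∪ D) = P C + P D := hPadd C D hC hD hCD
          have hset : (A ∪ B) \ (C ∪ D) = (A \ C) ∪ (B \ D) := by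
            ext x
            simp only [mem_diff, mem_union]
            constructor
            · rintro ⟨hx | hx, hnx⟩
              · exact Or.inl ⟨hx, fun h => hnx (Or.inl h)⟩
              · exact Or.inr ⟨hx, fun h => hnx (Or.inr h)⟩
            · rintro (⟨hx, hnx⟩ | ⟨hx, hnx⟩)
              · refine ⟨Or.inl hx, ?_⟩
                rintro (h | h)
                · exact hnx h
                · exact (disjoint_left.mp hAB hx (hDB h)).elim
              · refine ⟨Or.inr hx, ?_⟩
                rintro (h | h)
                · exact (disjoint_left.mp hAB (hCA h) hx).elim
                · exact hnx h
          have hdisj2 : Disjoint (A \ C) (B \ D) :=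
            hAB.mono diff_subset diff_subset
          have hmeas : (P₀ ((A ∪ B) \ (C ∪ D))).toReal
              = (P₀ (A \ C)).toReal + (P₀ (B \ D)).toReal := by
            rw [hset, measure_union hdisj2 (hB.diff hD),
              ENNReal.toReal_add (measure_ne_top _ _) (measure_ne_top _ _)]
          rw [hPeq, hmeas] at hkey
          linarith
        linarith
      have : Γ (A ∪ B) - Γ B ≤ Γ A := by
        rw [hΓ A]
        refine le_csInf (hne A) ?_
        intro x hx
        have := hstep2 x hx
        linarith
      linarith
    have h2 : Γ A + Γ B ≤ Γ (A ∪ B) := by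
      rw [hΓ (A ∪ B)]
      refine le_csInf (hne _) ?_
      rintro x ⟨E, hE, hEAB, rfl⟩
      have hGA : Γ A ≤ P (E ∩ A) + (P₀ (A \ (E ∩ A))).toReal := by
        rw [hΓ]
        exact csInf_le (hbdd _) ⟨E ∩ A, hE.inter hA, inter_subset_right, rfl⟩
      have hGB : Γ B ≤ P (E ∩ B) + (P₀ (B \ (E ∩ B))).toReal := by
        rw [hΓ]
        exact csInf_le (hbdd _) ⟨E ∩ B, hE.inter hB, inter_subset_right, rfl⟩
      have hEeq : E = (E ∩ A) ∪ (E ∩ B) := by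
        rw [← inter_union_distrib_left]
        exact (inter_eq_left.mpr hEAB).symm
      have hPE : P E = P (E ∩ A) + P (E ∩ B) := by
        calc P E = P ((E ∩ A) ∪ (E ∩ B)) := by rw [← hEeq]
        _ = P (E ∩ A) + P (E ∩ B) := hPadd _ _ (hE.inter hA) (hE.inter hB)
          (hAB.mono inter_subset_right inter_subset_right)
      have hAd : A \ (E ∩ A) = A \ E := by ext x; simp [mem_diff]
      have hBd : B \ (E ∩ B) = B \ E := by ext x; simp [mem_diff]
      have hset : (A ∪ B) \ E = (A \ E) ∪ (B \ E) := union_diff_distrib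
      have hmeas : (P₀ ((A ∪ B) \ E)).toReal
          = (P₀ (A \ E)).toReal + (P₀ (B \ E)).toReal := by
        rw [hset, measure_union (hAB.mono diff_subset diff_subset) (hB.diff hE),
          ENNReal.toReal_add (measure_ne_top _ _) (measure_ne_top _ _)]
      rw [hAd] at hGA
      rw [hBd] at hGB
      rw [hPE, hmeas]
      linarith
    linarith
  refine ⟨hfinadd, fun A _ => ⟨hnn A, hle A⟩, ?_⟩
  -- countable additivity
  intro H hHmeas hHdisj
  have hGempty : Γ ∅ = 0 := le_antisymm (by simpa using hle ∅) (hnn ∅)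
  set U : Set Ω := ⋃ n, H n with hU
  have hUmeas : MeasurableSet U := MeasurableSet.iUnion hHmeas
  set K : ℕ → Set Ω := fun N => ⋃ n ∈ Finset.range N, H n with hK
  have hKmeas : ∀ N, MeasurableSet (K N) := fun N =>
    MeasurableSet.biUnion (Finset.range N).countable_toSet (fun n _ => hHmeas n)
  have hKU : ∀ N, K N ⊆ U := fun N => iUnion₂_subset fun n _ => subset_iUnion H n
  have hsum : ∀ N, Γ (K N) = ∑ n ∈ Finset.range N, Γ (H n) := by
    intro N
    induction N with
    | zero => simpa [hK] using hGempty
    | succ N ih =>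
      have hKN : K (N + 1) = K N ∪ H N := by
        ext x
        simp only [hK, mem_iUnion, Finset.mem_range, mem_union, exists_prop]
        constructor
        · rintro ⟨n, hn, hx⟩
          rcases Nat.lt_succ_iff_lt_or_eq.mp hn with h | h
          · exact Or.inl ⟨n, h, hx⟩
          · exact Or.inr (h ▸ hx)
        · rintro (⟨n, hn, hx⟩ | hx)
          · exact ⟨n, hn.trans (Nat.lt_succ_self N), hx⟩
          · exact ⟨N, Nat.lt_succ_self N, hx⟩
      have hdisj : Disjoint (K N) (H N) := by
        refine disjoint_left.mpr fun x hx hxH => ?_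
        simp only [hK, mem_iUnion, Finset.mem_range, exists_prop] at hx
        obtain ⟨n, hn, hxn⟩ := hx
        exact disjoint_left.mp (hHdisj (Nat.ne_of_lt hn)) hxn hxH
      rw [hKN, hfinadd _ _ (hKmeas N) (hHmeas N) hdisj, ih, Finset.sum_range_succ]
  have hsplit : ∀ N, Γ U = (∑ n ∈ Finset.range N, Γ (H n)) + Γ (U \ K N) := by
    intro N
    rw [← hsum N, ← hfinadd _ _ (hKmeas N) (hUmeas.diff (hKmeas N)) disjoint_sdiff_right,
      union_diff_cancel (hKU N)]
  -- tail measure tends to 0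
  have hanti : Antitone (fun N => U \ K N) := by
    intro m n hmn
    refine diff_subset_diff_right ?_
    refine iUnion₂_subset fun i hi => ?_
    exact subset_biUnion_of_mem
      (Finset.mem_range.mpr (lt_of_lt_of_le (Finset.mem_range.mp hi) hmn))
  have hiInter : ⋂ N, (U \ K N) = ∅ := by
    rw [← diff_iUnion]
    refine diff_eq_empty.mpr ?_
    refine iUnion_subset fun n => ?_
    refine subset_iUnion_of_subset (n + 1) ?_
    exact subset_biUnion_of_mem (Finset.mem_range.mpr (Nat.lt_succ_self n))
  have htail : Filter.Tendsto (fun N => (P₀ (U \ K N)).toReal) Filter.atTop (nhds 0) := by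
    have h := tendsto_measure_iInter_atTop (μ := P₀)
      (fun N => (hUmeas.diff (hKmeas N)).nullMeasurableSet) hanti ⟨0, measure_ne_top _ _⟩
    rw [hiInter, measure_empty] at h
    have := (ENNReal.tendsto_toReal (by simp)).comp h
    simpa [Function.comp_def] using this
  have hGtail : Filter.Tendsto (fun N => Γ (U \ K N)) Filter.atTop (nhds 0) := by
    refine squeeze_zero (fun N => hnn _) (fun N => hle _) htail
  have hT : Filter.Tendsto (fun N => ∑ n ∈ Finset.range N, Γ (H n)) Filter.atTop (nhds (Γ U)) := by
    have : (fun N => ∑ n ∈ Finset.range N, Γ (H n)) = fun N => Γ U - Γ (U \ K N) := by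
      funext N; have := hsplit N; linarith
    rw [this]
    simpa using Filter.Tendsto.const_sub (Γ U) hGtail
  exact (hasSum_iff_tendsto_nat_of_nonneg (fun n => hnn (H n)) _).mpr hT
end

section
/- Let $L$ be a linear space of bounded random variables on a probability space $(\Omega, \mathcal{A}, P_0)$. There exists a finitely additive probability $P$ on $\mathcal{A}$ with $P \ll P_0$ and $E_P(X) = 0$ for all $X \in L$ if and only if $\operatorname{ess\,sup}(X) \ge 0$ for every $X \in L$. -/
set_option linter.unusedSectionVars false
set_option maxHeartbeats 1000000
open scoped Classical


open MeasureTheory Set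

open FAP


namespace Stmt7Aux
open FAP

variable {Ω : Type*}

/-- The submodule of bounded functions. -/
def V (Ω : Type*) : Submodule ℝ (Ω → ℝ) where
  carrier := {X | ∃ M : ℝ, ∀ ω, |X ω| ≤ M}
  add_mem' := by
    rintro X Y ⟨M, hM⟩ ⟨N, hN⟩
    exact ⟨M + N, fun ω => (abs_add_le _ _).trans (add_le_add (hM ω) (hN ω))⟩
  zero_mem' := ⟨0, fun ω => by simp⟩
  smul_mem' := by
    rintro c X ⟨M, hM⟩
    exact ⟨|c| * M, fun ω => by
      simp only [Pi.smul_apply, smul_eq_mul, abs_mul]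
      exact mul_le_mul_of_nonneg_left (hM ω) (abs_nonneg c)⟩

section ess
variable [MeasurableSpace Ω] (P₀ : Measure Ω) [IsProbabilityMeasure P₀]

variable [MeasurableSpace Ω] (P₀ : Measure Ω) [IsProbabilityMeasure P₀]

def S (X : Ω → ℝ) : Set ℝ := {a : ℝ | P₀ {ω | a < X ω} = 0}

lemma mem_S {X : Ω → ℝ} {M : ℝ} (hM : ∀ ω, X ω ≤ M) : M ∈ S P₀ X := by
  have : {ω | M < X ω} = (∅ : Set Ω) := by
    ext ω; simp only [mem_setOf_eq, mem_empty_iff_false, iff_false, not_lt]; exact hM ω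
  simp [S, this]

lemma bddBelow_S {X : Ω → ℝ} {M : ℝ} (hM : ∀ ω, -M ≤ X ω) : BddBelow (S P₀ X) := by
  refine ⟨-M, fun a ha => ?_⟩
  by_contra h
  push_neg at h
  have : {ω | a < X ω} = (univ : Set Ω) := by
    ext ω; simp only [mem_setOf_eq, mem_univ, iff_true]
    exact lt_of_lt_of_le h (hM ω)
  rw [S, mem_setOf_eq, this, measure_univ] at ha
  exact one_ne_zero ha

lemma essSup_le {X : Ω → ℝ} {M a : ℝ} (hM : ∀ ω, -M ≤ X ω) (ha : a ∈ S P₀ X) :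
    essSupR P₀ X ≤ a := csInf_le (bddBelow_S P₀ hM) ha

lemma le_essSup {X : Ω → ℝ} {M a : ℝ} (hM : ∀ ω, X ω ≤ M) (ha : ∀ b ∈ S P₀ X, a ≤ b) :
    a ≤ essSupR P₀ X := le_csInf ⟨M, mem_S P₀ hM⟩ ha

lemma essSup_const (c : ℝ) : essSupR P₀ (fun _ => c) = c := by
  have : S P₀ (fun _ => c) = Ici c := by
    ext a
    simp only [S, mem_setOf_eq, mem_Ici]
    constructor
    · intro h
      by_contra hac
      push_neg at hac
      have : {ω : Ω | a < c} = univ := eq_univ_of_forall fun ω => hac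
      rw [this, measure_univ] at h
      exact one_ne_zero h
    · intro h
      have : {ω : Ω | a < c} = ∅ := by
        ext ω; simp only [mem_setOf_eq, mem_empty_iff_false, iff_false, not_lt]; exact h
      simp [this]
  rw [essSupR, S] at *
  rw [this]
  exact csInf_Ici

lemma essSup_nonpos {X : Ω → ℝ} {M : ℝ} (hM : ∀ ω, -M ≤ X ω) (hX : ∀ ω, X ω ≤ 0) :
    essSupR P₀ X ≤ 0 := essSup_le P₀ hM (mem_S P₀ hX)

lemma essSup_add_le {X Y : Ω → ℝ} {MX MY : ℝ} (hMX : ∀ ω, |X ω| ≤ MX) (hMY : ∀ ω, |Y ω| ≤ MY) :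
    essSupR P₀ (X + Y) ≤ essSupR P₀ X + essSupR P₀ Y := by
  have hXlo : ∀ ω, -MX ≤ X ω := fun ω => neg_le_of_abs_le (hMX ω)
  have hYlo : ∀ ω, -MY ≤ Y ω := fun ω => neg_le_of_abs_le (hMY ω)
  have key : ∀ a ∈ S P₀ X, ∀ b ∈ S P₀ Y, essSupR P₀ (X + Y) ≤ a + b := by
    intro a ha b hb
    refine essSup_le (M := MX + MY) P₀ (fun ω => ?_) ?_
    · have := add_le_add (hXlo ω) (hYlo ω); simp only [Pi.add_apply]; linarith
    · have hsub : {ω | a + b < X ω + Y ω} ⊆ {ω | a < X ω} ∪ {ω | b < Y ω} := by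
        intro ω hω
        by_contra h
        simp only [mem_union, mem_setOf_eq, not_or, not_lt] at h
        exact absurd hω (by simp only [mem_setOf_eq, not_lt]; exact add_le_add h.1 h.2)
      exact measure_mono_null hsub (measure_union_null ha hb)
  have h1 : ∀ a ∈ S P₀ X, essSupR P₀ (X + Y) - essSupR P₀ Y ≤ a := by
    intro a ha
    have h2 : ∀ b ∈ S P₀ Y, essSupR P₀ (X + Y) - a ≤ b := fun b hb => by
      linarith [key a ha b hb]
    have := le_essSup (M := MY) P₀ (fun ω => le_of_abs_le (hMY ω)) h2
    linarith
  have := le_essSup (M := MX) P₀ (fun ω => le_of_abs_le (hMX ω)) h1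
  linarith

lemma essSup_smul {X : Ω → ℝ} {M c : ℝ} (hc : 0 < c) (hM : ∀ ω, |X ω| ≤ M) :
    essSupR P₀ (c • X) = c * essSupR P₀ X := by
  have hXlo : ∀ ω, -M ≤ X ω := fun ω => neg_le_of_abs_le (hM ω)
  have hXhi : ∀ ω, X ω ≤ M := fun ω => le_of_abs_le (hM ω)
  have hmem : ∀ a : ℝ, a ∈ S P₀ (c • X) ↔ a / c ∈ S P₀ X := by
    intro a
    have : {ω | a < (c • X) ω} = {ω | a / c < X ω} := by
      ext ω
      simp only [Pi.smul_apply, smul_eq_mul, mem_setOf_eq]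
      rw [div_lt_iff₀ hc, mul_comm]
    simp only [S, mem_setOf_eq, this]
  have hlo' : ∀ ω, -(c * M) ≤ (c • X) ω := fun ω => by
    simp only [Pi.smul_apply, smul_eq_mul]
    nlinarith [hXlo ω]
  have hhi' : ∀ ω, (c • X) ω ≤ c * M := fun ω => by
    simp only [Pi.smul_apply, smul_eq_mul]
    nlinarith [hXhi ω]
  apply le_antisymm
  · have h1 : ∀ a ∈ S P₀ X, essSupR P₀ (c • X) ≤ c * a := by
      intro a ha
      refine essSup_le (M := c * M) P₀ hlo' ?_
      rw [hmem]
      rwa [mul_comm, mul_div_assoc, div_self (ne_of_gt hc), mul_one]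
    have h2 : ∀ a ∈ S P₀ X, essSupR P₀ (c • X) / c ≤ a := fun a ha => by
      rw [div_le_iff₀ hc, mul_comm]; exact h1 a ha
    have := le_essSup (M := M) P₀ hXhi h2
    calc essSupR P₀ (c • X) = c * (essSupR P₀ (c • X) / c) := by field_simp
    _ ≤ c * essSupR P₀ X := by nlinarith
  · have h1 : ∀ b ∈ S P₀ (c • X), c * essSupR P₀ X ≤ b := by
      intro b hb
      rw [hmem] at hb
      have := essSup_le (M := M) P₀ hXlo hb
      rw [← le_div_iff₀' hc]
      exact this
    exact le_essSup (M := c * M) P₀ hhi' h1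


end ess

noncomputable def indV (A : Set Ω) : V Ω :=
  ⟨A.indicator (fun _ => (1:ℝ)), 1, fun ω => by
    rw [Set.indicator_apply]; split <;> norm_num⟩

noncomputable def oneV : V Ω := ⟨fun _ => 1, 1, fun ω => by simp⟩

lemma oneV_coe (ω : Ω) : ((oneV : V Ω) : Ω → ℝ) ω = 1 := rfl

lemma indV_coe (A : Set Ω) (ω : Ω) :
    ((indV A : V Ω) : Ω → ℝ) ω = if ω ∈ A then 1 else 0 := by
  simp [indV, Set.indicator_apply]

lemma indV_univ : (indV univ : V Ω) = oneV := by
  apply Subtype.ext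
  simp [indV, oneV, Set.indicator_univ]

lemma indV_empty : (indV ∅ : V Ω) = 0 := by
  apply Subtype.ext
  funext ω
  simp [indV]

lemma layercake (g : (V Ω) →ₗ[ℝ] ℝ)
    (hmono : ∀ x y : V Ω, (∀ ω, (x : Ω → ℝ) ω ≤ (y : Ω → ℝ) ω) → g x ≤ g y)
    (hone : g oneV = 1)
    (X : Ω → ℝ) (M : ℝ) (hM : ∀ ω, |X ω| ≤ M) :
    faIntegral (fun A => g (indV A)) X = g ⟨X, M, hM⟩ := by
  set F : ℝ → ℝ := fun t => g (indV {ω | t < X ω}) with hF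
  have hFanti : Antitone F := by
    intro s t hst
    refine hmono _ _ (fun ω => ?_)
    rw [indV_coe, indV_coe]
    by_cases h : ω ∈ {ω' | t < X ω'}
    · rw [if_pos h, if_pos (show ω ∈ {ω' | s < X ω'} from lt_of_le_of_lt hst h)]
    · rw [if_neg h]
      split <;> norm_num
  have hF0 : ∀ t, 0 ≤ F t := by
    intro t
    have := hmono 0 (indV {ω | t < X ω}) (fun ω => by
      rw [indV_coe]
      show (0:ℝ) ≤ _
      split <;> norm_num)
    simpa using this
  have hF1 : ∀ t, F t ≤ 1 := by
    intro t
    have := hmono (indV {ω | t < X ω}) oneV (fun ω => by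
      rw [indV_coe, oneV_coe]
      split <;> norm_num)
    rwa [hone] at this
  have hFhi : ∀ t, M ≤ t → F t = 0 := by
    intro t ht
    have hset : {ω | t < X ω} = (∅ : Set Ω) := by
      ext ω
      simp only [mem_setOf_eq, mem_empty_iff_false, iff_false, not_lt]
      exact le_trans (le_of_abs_le (hM ω)) ht
    rw [hF]
    simp only [hset, indV_empty, map_zero]
  have hFlo : ∀ t, t < -M → F t = 1 := by
    intro t ht
    have hset : {ω | t < X ω} = (univ : Set Ω) := by
      refine eq_univ_of_forall fun ω => ?_
      exact lt_of_lt_of_le ht (neg_le_of_abs_le (hM ω))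
    rw [hF]
    simp only [hset, indV_univ, hone]
  have hFii : ∀ a b : ℝ, IntervalIntegrable F volume a b :=
    fun a b => (hFanti.antitoneOn _).intervalIntegrable
  set M' : ℝ := |M| + 1 with hM'def
  set t0 : ℝ := -M' with ht0def
  have hM'pos : 0 < M' := by positivity
  have hMM' : M < M' := lt_of_le_of_lt (le_abs_self M) (by rw [hM'def]; linarith)
  have htM : t0 < -M := by
    rw [ht0def, hM'def]
    have := neg_abs_le M
    linarith
  have ht00 : t0 < 0 := by linarith
  -- Step A : faIntegral = ∫ t0..M' F + t0
  have key1 : (∫ t in Ioi (0:ℝ), F t) = ∫ t in (0:ℝ)..M', F t := by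
    have hIoc : IntegrableOn F (Ioc 0 M') volume := (hFii 0 M').1
    have hEq : EqOn F (fun _ => (0:ℝ)) (Ioi M') :=
      fun t ht => hFhi t (le_of_lt (lt_trans hMM' ht))
    have hIoiM' : IntegrableOn F (Ioi M') volume :=
      (integrableOn_congr_fun hEq measurableSet_Ioi).mpr (integrableOn_zero)
    rw [← Ioc_union_Ioi_eq_Ioi (le_of_lt hM'pos),
      setIntegral_union (Ioc_disjoint_Ioi le_rfl) measurableSet_Ioi hIoc hIoiM',
      intervalIntegral.integral_of_le (le_of_lt hM'pos),
      setIntegral_congr_fun measurableSet_Ioi hEq]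
    simp
  have key2 : (∫ t in Iio (0:ℝ), (1 - F t)) = -t0 - ∫ t in t0..(0:ℝ), F t := by
    have hEq : EqOn (fun t => 1 - F t) (fun _ => (0:ℝ)) (Iio t0) := by
      intro t ht
      simp only
      rw [hFlo t (lt_trans ht htM)]
      ring
    have hIio : IntegrableOn (fun t => 1 - F t) (Iio t0) volume :=
      (integrableOn_congr_fun hEq measurableSet_Iio).mpr (integrableOn_zero)
    have hFIoo : IntegrableOn F (Ioo t0 0) volume :=
      ((hFii t0 0).1).mono_set Ioo_subset_Ioc_self
    have h1Ioo : IntegrableOn (fun _ => (1:ℝ)) (Ioo t0 0) volume :=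
      integrableOn_const (measure_Ioo_lt_top.ne)
    have hIco : IntegrableOn (fun t => 1 - F t) (Ico t0 0) volume := by
      have h : IntegrableOn (fun t => 1 - F t) (Ioo t0 0) volume := h1Ioo.sub hFIoo
      exact (integrableOn_Ico_iff_integrableOn_Ioo).mpr h
    have hdisj : Disjoint (Iio t0) (Ico t0 (0:ℝ)) := by
      rw [Set.disjoint_left]
      intro x hx hx2
      exact absurd hx2.1 (not_le.mpr hx)
    have hz : (∫ t in Iio t0, (1 - F t)) = 0 := by
      rw [setIntegral_congr_fun measurableSet_Iio hEq]
      simp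
    have hone' : (∫ t in Ioo t0 (0:ℝ), (1:ℝ)) = -t0 := by
      rw [setIntegral_const, Real.volume_real_Ioo_of_le (by linarith),
        smul_eq_mul, mul_one]
      ring
    have hsub : (∫ t in Ioo t0 (0:ℝ), (1 - F t)) =
        (∫ t in Ioo t0 (0:ℝ), (1:ℝ)) - ∫ t in Ioo t0 (0:ℝ), F t := integral_sub h1Ioo hFIoo
    rw [← Iio_union_Ico_eq_Iio (le_of_lt ht00),
      setIntegral_union hdisj measurableSet_Ico hIio hIco, hz,
      integral_Ico_eq_integral_Ioo, hsub, hone',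
      intervalIntegral.integral_of_le (le_of_lt ht00), integral_Ioc_eq_integral_Ioo]
    ring
  have keyA : faIntegral (fun A => g (indV A)) X = (∫ t in t0..M', F t) + t0 := by
    have : faIntegral (fun A => g (indV A)) X =
        (∫ t in Ioi (0:ℝ), F t) - ∫ t in Iio (0:ℝ), (1 - F t) := rfl
    rw [this, key1, key2, ← intervalIntegral.integral_add_adjacent_intervals (hFii t0 0) (hFii 0 M')]
    ring
  -- Step B : the estimate
  have est : ∀ n : ℕ, 0 < n →
      |g ⟨X, M, hM⟩ - ((∫ t in t0..M', F t) + t0)| ≤ 2 * M' / n := by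
    intro n hn
    have hnR : (0:ℝ) < n := by exact_mod_cast hn
    set δ : ℝ := 2 * M' / n with hδdef
    have hδ : 0 < δ := by positivity
    have hδn : δ * n = 2 * M' := by rw [hδdef]; field_simp
    set sV : V Ω := (t0 + δ) • oneV +
      δ • (∑ i ∈ Finset.Ico 1 n, indV {ω | t0 + δ * i < X ω}) with hsVdef
    have hgs : g sV = (t0 + δ) + δ * ∑ i ∈ Finset.Ico 1 n, F (t0 + δ * i) := by
      rw [hsVdef, map_add, LinearMap.map_smul, LinearMap.map_smul, map_sum, hone]
      simp only [smul_eq_mul, mul_one]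
      rfl
    have hsVcoe : ∀ ω, (sV : Ω → ℝ) ω = (t0 + δ) + δ *
        ∑ i ∈ Finset.Ico 1 n,
          ({ω' | t0 + δ * i < X ω'}.indicator (fun _ => (1:ℝ)) ω) := by
      intro ω
      rw [hsVdef]
      have hcs : ((∑ i ∈ Finset.Ico 1 n, indV {ω' | t0 + δ * i < X ω'} : V Ω) : Ω → ℝ)
          = ∑ i ∈ Finset.Ico 1 n, (((indV {ω' | t0 + δ * i < X ω'}) : V Ω) : Ω → ℝ) :=
        Submodule.coe_sum _ _ _
      simp only [Submodule.coe_add, Submodule.coe_smul, Pi.add_apply, Pi.smul_apply,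
        smul_eq_mul, hcs, Finset.sum_apply, oneV_coe, mul_one]
      rfl
    have hpt : ∀ ω, X ω ≤ (sV : Ω → ℝ) ω ∧ (sV : Ω → ℝ) ω ≤ X ω + δ := by
      intro ω
      set c : ℝ := (X ω - t0) / δ with hcdef
      have hXlo : -M ≤ X ω := neg_le_of_abs_le (hM ω)
      have hXhi : X ω ≤ M := le_of_abs_le (hM ω)
      have hc0 : 0 < c := div_pos (by linarith) hδ
      have hcn : c ≤ (n:ℝ) := by
        rw [hcdef, div_le_iff₀ hδ]
        have h2 : (n:ℝ) * δ = 2 * M' := by rw [mul_comm]; exact hδn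
        have h3 : X ω ≤ M' := by linarith
        have ht0v : t0 = -M' := ht0def
        linarith
      have hXc : δ * c = X ω - t0 := by
        rw [hcdef]; field_simp
      set k : ℤ := ⌈c⌉ with hkdef
      have hk1 : 1 ≤ k := by
        have : (0:ℤ) < k := Int.lt_ceil.mpr (by exact_mod_cast hc0)
        omega
      have hkn : k ≤ (n:ℤ) := Int.ceil_le.mpr (by exact_mod_cast hcn)
      have hck : c ≤ (k:ℝ) := Int.le_ceil c
      have hkc : (k:ℝ) < c + 1 := Int.ceil_lt_add_one c
      set m : ℕ := k.toNat with hmdef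
      have hmk : (m : ℤ) = k := Int.toNat_of_nonneg (by omega)
      have hmkR : (m : ℝ) = (k : ℝ) := by exact_mod_cast congrArg (Int.cast : ℤ → ℝ) hmk
      have hm1 : 1 ≤ m := by omega
      have hmn : m ≤ n := by omega
      have hterm : ∀ i : ℕ, ({ω' | t0 + δ * i < X ω'}.indicator (fun _ => (1:ℝ)) ω)
          = if i < m then 1 else 0 := by
        intro i
        rw [Set.indicator_apply]
        refine if_congr ?_ rfl rfl
        rw [mem_setOf_eq]
        have h1 : t0 + δ * i < X ω ↔ (i:ℝ) < c := by
          rw [hcdef, lt_div_iff₀ hδ]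
          constructor <;> intro h <;> nlinarith
        have h2 : (i:ℝ) < c ↔ (i:ℤ) < k := by
          rw [hkdef, Int.lt_ceil]
          norm_num
        rw [h1, h2]
        omega
      have hsum : (∑ i ∈ Finset.Ico 1 n,
          ({ω' | t0 + δ * i < X ω'}.indicator (fun _ => (1:ℝ)) ω)) = (m : ℝ) - 1 := by
        rw [Finset.sum_congr rfl (fun i _ => hterm i)]
        have h2 : ∀ i ∈ Finset.Ico 1 n,
            (if i < m then (1:ℝ) else 0) = if i ∈ Finset.Ico 1 m then 1 else 0 := by
          intro i hi
          rcases Finset.mem_Ico.mp hi with ⟨h1i, hin⟩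
          by_cases h : i < m
          · rw [if_pos h, if_pos (Finset.mem_Ico.mpr ⟨h1i, h⟩)]
          · rw [if_neg h, if_neg (fun hh => h (Finset.mem_Ico.mp hh).2)]
        rw [Finset.sum_congr rfl h2, Finset.sum_ite_mem, Finset.Ico_inter_Ico]
        rw [max_self, min_eq_right hmn, Finset.sum_const, Nat.card_Ico, nsmul_eq_mul, mul_one]
        rw [Nat.cast_sub hm1, Nat.cast_one]
      have hsval : (sV : Ω → ℝ) ω = t0 + δ * m := by
        rw [hsVcoe ω, hsum]; ring
      constructor
      · rw [hsval, hmkR]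
        nlinarith
      · rw [hsval, hmkR]
        nlinarith
    have hgle1 : g ⟨X, M, hM⟩ ≤ g sV := hmono _ _ (fun ω => (hpt ω).1)
    have hgle2 : g sV ≤ g ⟨X, M, hM⟩ + δ := by
      calc g sV ≤ g (⟨X, M, hM⟩ + δ • oneV) := hmono _ _ (fun ω => by
            simp only [Submodule.coe_add, Submodule.coe_smul, Pi.add_apply, Pi.smul_apply,
              smul_eq_mul, oneV_coe, mul_one]
            exact (hpt ω).2)
        _ = g ⟨X, M, hM⟩ + δ := by
            rw [map_add, LinearMap.map_smul, hone, smul_eq_mul, mul_one]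
    -- Riemann sums
    set G : ℝ → ℝ := fun u => F (δ * u + t0) with hGdef
    have hGanti : Antitone G := by
      intro u v huv
      exact hFanti (by nlinarith)
    have h1 := (hGanti.antitoneOn (Icc (0:ℝ) ((0:ℝ) + n))).integral_le_sum
    have h2 := (hGanti.antitoneOn (Icc (0:ℝ) ((0:ℝ) + n))).sum_le_integral
    have hcv : (∫ u in (0:ℝ)..((0:ℝ)+n), G u) = δ⁻¹ * ∫ t in t0..M', F t := by
      have hcmp := intervalIntegral.integral_comp_mul_add (a := (0:ℝ)) (b := (0:ℝ)+n)
        F (ne_of_gt hδ) t0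
      have e1 : δ * 0 + t0 = t0 := by ring
      have e2 : δ * ((0:ℝ) + n) + t0 = M' := by
        rw [zero_add]
        have : t0 = -M' := ht0def
        linarith
      rw [e1, e2] at hcmp
      rw [hGdef]
      rw [hcmp, smul_eq_mul]
    set Sig : ℝ := ∑ i ∈ Finset.Ico 1 n, F (t0 + δ * i) with hSdef
    have hsum1 : (∑ i ∈ Finset.range n, G ((0:ℝ) + i)) = 1 + Sig := by
      have hGi : ∀ i : ℕ, G ((0:ℝ) + i) = F (t0 + δ * i) := by
        intro i
        rw [hGdef]
        exact congrArg F (by ring)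
      rw [Finset.sum_congr rfl (fun i _ => hGi i), Finset.range_eq_Ico,
        Finset.sum_eq_sum_Ico_succ_bot hn, hSdef]
      congr 1
      have : t0 + δ * (0:ℕ) = t0 := by norm_num
      rw [this]
      exact hFlo t0 htM
    have hsum2 : (∑ i ∈ Finset.range n, G ((0:ℝ) + ((i:ℕ) + 1 : ℕ))) = Sig := by
      have hGi : ∀ i : ℕ, G ((0:ℝ) + ((i + 1 : ℕ):ℝ)) = F (t0 + δ * ((1 + i:ℕ):ℝ)) := by
        intro i
        rw [hGdef]
        refine congrArg F ?_
        push_cast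
        ring
      rw [Finset.sum_congr rfl (fun i _ => hGi i)]
      have := (Finset.sum_Ico_eq_sum_range (fun j => F (t0 + δ * (j:ℝ))) 1 (n+1)).symm
      simp only [Nat.add_sub_cancel] at this
      rw [this, Finset.sum_Ico_succ_top (by omega : 1 ≤ n), hSdef]
      have hFn : F (t0 + δ * (n:ℝ)) = 0 := by
        refine hFhi _ ?_
        have : t0 = -M' := ht0def
        nlinarith
      rw [hFn, add_zero]
    have hJ2 : δ * Sig ≤ ∫ t in t0..M', F t := by
      rw [hsum2] at h2
      rw [hcv] at h2
      have := mul_le_mul_of_nonneg_left h2 (le_of_lt hδ)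
      calc δ * Sig ≤ δ * (δ⁻¹ * ∫ t in t0..M', F t) := this
        _ = ∫ t in t0..M', F t := by field_simp
    have hJ1 : (∫ t in t0..M', F t) ≤ δ * (1 + Sig) := by
      rw [hsum1, hcv] at h1
      have := mul_le_mul_of_nonneg_left h1 (le_of_lt hδ)
      calc (∫ t in t0..M', F t) = δ * (δ⁻¹ * ∫ t in t0..M', F t) := by field_simp
        _ ≤ δ * (1 + Sig) := this
    rw [abs_le]
    have hgsS : g sV = t0 + δ + δ * Sig := hgs
    constructor <;> [skip; skip] <;> nlinarith [hgle1, hgle2, hgsS, hJ1, hJ2]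
  -- conclusion
  have habs : ∀ ε : ℝ, 0 < ε → |g ⟨X, M, hM⟩ - ((∫ t in t0..M', F t) + t0)| ≤ ε := by
    intro ε hε
    obtain ⟨n, hnε⟩ := exists_nat_gt (2 * M' / ε)
    have hn0R : (0:ℝ) < n := lt_trans (div_pos (by linarith) hε) hnε
    have hn0 : 0 < n := by exact_mod_cast hn0R
    refine le_trans (est n hn0) ?_
    rw [div_le_iff₀ hn0R]
    have := (div_lt_iff₀ hε).mp hnε
    nlinarith
  have hzero : |g ⟨X, M, hM⟩ - ((∫ t in t0..M', F t) + t0)| = 0 := by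
    by_contra h
    have hpos : 0 < |g ⟨X, M, hM⟩ - ((∫ t in t0..M', F t) + t0)| :=
      lt_of_le_of_ne (abs_nonneg _) (Ne.symm h)
    have := habs (|g ⟨X, M, hM⟩ - ((∫ t in t0..M', F t) + t0)| / 2) (by linarith)
    linarith
  rw [keyA]
  have := abs_eq_zero.mp hzero
  linarith

end Stmt7Aux

open Stmt7Aux in
/-- there is a finitely additive probability P ≪ P₀ with E_P(X) = 0
for all X ∈ L iff ess sup X ≥ 0 for every X ∈ L. -/
theorem stmt7 {Ω : Type*} [MeasurableSpace Ω] (P₀ : Measure Ω) [IsProbabilityMeasure P₀]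
    (L : Submodule ℝ (Ω → ℝ))
    (hL : ∀ X ∈ L, Measurable X ∧ ∃ M : ℝ, ∀ ω, |X ω| ≤ M) :
    (∃ P : Set Ω → ℝ, FAP.IsFAPm P ∧ FAP.AC P P₀ ∧
        ∀ X ∈ L, FAP.faIntegral P X = 0)
    ↔ ∀ X ∈ L, 0 ≤ FAP.essSupR P₀ X := by
  constructor
  · rintro ⟨P, ⟨hP1, hPnn, hPadd⟩, hAC, hInt⟩ X hX
    obtain ⟨hmeas, M, hM⟩ := hL X hX
    refine Stmt7Aux.le_essSup (M := M) P₀ (fun ω => le_of_abs_le (hM ω)) ?_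
    intro b hb
    by_contra hb0
    push_neg at hb0
    have hPmono : ∀ A B : Set Ω, MeasurableSet A → MeasurableSet B → A ⊆ B → P A ≤ P B := by
      intro A B hA hB hAB
      have hBd : B = A ∪ (B \ A) := (union_diff_cancel hAB).symm
      have h1 := hPadd A (B \ A) hA (hB.diff hA) disjoint_sdiff_right
      rw [← hBd] at h1
      linarith [hPnn (B \ A) (hB.diff hA)]
    have hPle1 : ∀ A : Set Ω, MeasurableSet A → P A ≤ 1 := by
      intro A hA
      have h1 := hPadd A Aᶜ hA hA.compl disjoint_compl_right
      rw [union_compl_self, hP1] at h1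
      linarith [hPnn Aᶜ hA.compl]
    have hmeasA : ∀ t : ℝ, MeasurableSet {ω | t < X ω} := fun t => hmeas measurableSet_Ioi
    set F : ℝ → ℝ := fun t => P {ω | t < X ω} with hFdef
    have hFanti : Antitone F := fun s t hst =>
      hPmono _ _ (hmeasA t) (hmeasA s) (fun ω hω => lt_of_le_of_lt hst hω)
    have hF0 : ∀ t, 0 ≤ F t := fun t => hPnn _ (hmeasA t)
    have hF1 : ∀ t, F t ≤ 1 := fun t => hPle1 _ (hmeasA t)
    have hFb : ∀ t, b ≤ t → F t = 0 := by
      intro t hbt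
      have h0 : P {ω | b < X ω} = 0 := hAC _ (hmeasA b) hb
      have h2 := hPmono _ _ (hmeasA t) (hmeasA b) (fun ω hω => lt_of_le_of_lt hbt hω)
      have h3 := hF0 t
      rw [h0] at h2
      exact le_antisymm h2 h3
    have hFlo : ∀ t : ℝ, t < -M → F t = 1 := by
      intro t ht
      have huniv : {ω | t < X ω} = univ :=
        eq_univ_of_forall fun ω => lt_of_lt_of_le ht (neg_le_of_abs_le (hM ω))
      rw [hFdef]
      simp only [huniv, hP1]
    have hI1 : (∫ t in Ioi (0:ℝ), F t) = 0 := by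
      rw [setIntegral_congr_fun measurableSet_Ioi
        (fun t ht => hFb t (le_of_lt (lt_trans hb0 ht)))]
      simp
    set a0 : ℝ := -(|M| + 1) with ha0def
    have ha0M : a0 < -M := by
      have := le_abs_self M
      rw [ha0def]
      linarith
    have ha00 : a0 < 0 := by
      have := abs_nonneg M
      rw [ha0def]
      linarith
    have hEq0 : EqOn (fun t => 1 - F t) (fun _ => (0:ℝ)) (Iio a0) := by
      intro t ht
      simp only
      rw [hFlo t (lt_trans ht ha0M)]
      ring
    have hFIoo : IntegrableOn F (Ioo a0 0) volume :=
      (((hFanti.antitoneOn _).intervalIntegrable (a := a0) (b := 0)).1).mono_set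
        Ioo_subset_Ioc_self
    have h1Ioo : IntegrableOn (fun _ => (1:ℝ)) (Ioo a0 0) volume :=
      integrableOn_const (measure_Ioo_lt_top.ne)
    have hii : IntegrableOn (fun t => 1 - F t) (Iio (0:ℝ)) volume := by
      rw [← Iio_union_Ico_eq_Iio (le_of_lt ha00)]
      refine IntegrableOn.union ?_ ?_
      · exact (integrableOn_congr_fun hEq0 measurableSet_Iio).mpr integrableOn_zero
      · exact (integrableOn_Ico_iff_integrableOn_Ioo).mpr (h1Ioo.sub hFIoo)
    have hIi0 : (∫ t in Iio (0:ℝ), (1 - F t)) = 0 := by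
      have h4 := hInt X hX
      rw [faIntegral] at h4
      have : (∫ t in Ioi (0:ℝ), P {ω | t < X ω}) = 0 := hI1
      linarith [this, h4]
    have hmonoint : (∫ t in Ioo b (0:ℝ), (1 - F t)) ≤ ∫ t in Iio (0:ℝ), (1 - F t) := by
      refine setIntegral_mono_set hii ?_ (HasSubset.Subset.eventuallyLE Ioo_subset_Iio_self)
      refine Filter.Eventually.of_forall (fun t => ?_)
      simp only [Pi.zero_apply]
      linarith [hF1 t]
    have hval : (∫ t in Ioo b (0:ℝ), (1 - F t)) = -b := by
      rw [setIntegral_congr_fun measurableSet_Ioo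
        (fun t ht => by simp only; rw [hFb t (le_of_lt ht.1)]; ring : EqOn _ (fun _ => (1:ℝ)) _)]
      rw [setIntegral_const, Real.volume_real_Ioo_of_le (by linarith),
        smul_eq_mul, mul_one]
      ring
    rw [hIi0] at hmonoint
    rw [hval] at hmonoint
    linarith
  · intro hess
    obtain ⟨g, hg0, hgle⟩ := exists_extension_of_le_sublinear
      (⟨L.comap (V Ω).subtype, 0⟩ : (V Ω) →ₗ.[ℝ] ℝ)
      (fun x => essSupR P₀ (x : Ω → ℝ))
      (by
        intro c hc x
        obtain ⟨M, hM⟩ := x.2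
        show essSupR P₀ ((c • x : V Ω) : Ω → ℝ) = c * essSupR P₀ (x : Ω → ℝ)
        have h : ((c • x : V Ω) : Ω → ℝ) = c • (x : Ω → ℝ) := rfl
        rw [h]
        exact Stmt7Aux.essSup_smul P₀ hc hM)
      (by
        intro x y
        obtain ⟨Mx, hMx⟩ := x.2
        obtain ⟨My, hMy⟩ := y.2
        show essSupR P₀ ((x + y : V Ω) : Ω → ℝ) ≤ _
        have h : ((x + y : V Ω) : Ω → ℝ) = (x : Ω → ℝ) + (y : Ω → ℝ) := rfl
        rw [h]
        exact Stmt7Aux.essSup_add_le P₀ hMx hMy)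
      (by
        intro x
        have hfx : (⟨L.comap (V Ω).subtype, 0⟩ : (V Ω) →ₗ.[ℝ] ℝ) x = 0 := rfl
        rw [hfx]
        exact hess _ x.2)
    have hmono : ∀ x y : V Ω, (∀ ω, (x : Ω → ℝ) ω ≤ (y : Ω → ℝ) ω) → g x ≤ g y := by
      intro x y hxy
      obtain ⟨Mx, hMx⟩ := x.2
      obtain ⟨My, hMy⟩ := y.2
      have h1 := hgle (x - y)
      have h2 : ((x - y : V Ω) : Ω → ℝ) = (x : Ω → ℝ) - (y : Ω → ℝ) := rfl
      have h3 : essSupR P₀ ((x - y : V Ω) : Ω → ℝ) ≤ 0 := by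
        rw [h2]
        refine Stmt7Aux.essSup_nonpos (M := Mx + My) P₀ (fun ω => ?_) (fun ω => ?_)
        · simp only [Pi.sub_apply]
          have := neg_le_of_abs_le (hMx ω)
          have := le_of_abs_le (hMy ω)
          linarith
        · simp only [Pi.sub_apply]
          linarith [hxy ω]
      have h4 : g (x - y) = g x - g y := map_sub g x y
      linarith
    have hone : g oneV = 1 := by
      have h1 := hgle oneV
      have h2 := hgle (-oneV)
      have e1 : ((oneV : V Ω) : Ω → ℝ) = fun _ => (1:ℝ) := rfl
      have e2 : (((-oneV : V Ω)) : Ω → ℝ) = fun _ => (-1:ℝ) := by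
        funext ω
        rfl
      rw [e1, Stmt7Aux.essSup_const P₀ 1] at h1
      rw [e2, Stmt7Aux.essSup_const P₀ (-1), map_neg] at h2
      linarith
    have hPnn : ∀ A : Set Ω, 0 ≤ g (indV A) := by
      intro A
      have := hmono 0 (indV A) (fun ω => by
        rw [indV_coe]
        show (0:ℝ) ≤ _
        split <;> norm_num)
      simpa using this
    refine ⟨fun A => g (indV A), ⟨?_, ?_, ?_⟩, ?_, ?_⟩
    · show g (indV univ) = 1
      rw [indV_univ]
      exact hone
    · exact fun A _ => hPnn A
    · intro A B _ _ hAB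
      have : (indV (A ∪ B) : V Ω) = indV A + indV B := by
        apply Subtype.ext
        have := Set.indicator_union_of_disjoint hAB (fun _ => (1:ℝ))
        simp only [indV, Submodule.coe_add]
        exact this
      show g (indV (A ∪ B)) = g (indV A) + g (indV B)
      rw [this, map_add]
    · intro A hA h0
      refine le_antisymm ?_ (hPnn A)
      refine le_trans (hgle (indV A)) ?_
      refine Stmt7Aux.essSup_le (M := 1) P₀ (fun ω => ?_) ?_
      · rw [indV_coe]
        split <;> norm_num
      · show P₀ {ω | 0 < ((indV A : V Ω) : Ω → ℝ) ω} = 0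
        have : {ω | 0 < ((indV A : V Ω) : Ω → ℝ) ω} = A := by
          ext ω
          rw [mem_setOf_eq, indV_coe]
          constructor
          · intro h
            by_contra hA'
            rw [if_neg hA'] at h
            exact lt_irrefl _ h
          · intro h
            rw [if_pos h]
            norm_num
        rw [this]
        exact h0
    · intro X hX
      obtain ⟨_, M, hM⟩ := hL X hX
      rw [Stmt7Aux.layercake g hmono hone X M hM]
      have hmem : (⟨X, M, hM⟩ : V Ω) ∈ L.comap (V Ω).subtype := hX
      have := hg0 ⟨⟨X, M, hM⟩, hmem⟩
      rw [this]
      rfl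
end

section
/- Every finitely additive probability $P$ on $\mathcal{A}$ with $P \sim P_0$ can be written as $P = \alpha P_1 + (1-\alpha) Q$ where $\alpha \in [0,1)$, $P_1$ is a finitely additive probability that is pure unless $\alpha = 0$, $Q$ is a countably additive probability on $\mathcal{A}$, and $Q \sim P_0$. -/
open MeasureTheory Set

open FAP

namespace FAPaux

variable {Ω : Type*} [MeasurableSpace Ω]

lemma fap_empty {P : Set Ω → ℝ} (hP : FAP.IsFAPm P) : P ∅ = 0 := by
  have := hP.2.2 ∅ ∅ .empty .empty (disjoint_bot_left)
  simp at this; linarith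

lemma fap_mono {P : Set Ω → ℝ} (hP : FAP.IsFAPm P) {A B : Set Ω} (hA : MeasurableSet A)
    (hB : MeasurableSet B) (hAB : A ⊆ B) : P A ≤ P B := by
  have h := hP.2.2 A (B \ A) hA (hB.diff hA) disjoint_sdiff_right
  rw [union_diff_cancel hAB] at h
  have := hP.2.1 (B \ A) (hB.diff hA)
  linarith

lemma fap_le_one {P : Set Ω → ℝ} (hP : FAP.IsFAPm P) {A : Set Ω} (hA : MeasurableSet A) :
    P A ≤ 1 := hP.1 ▸ fap_mono hP hA .univ (subset_univ A)

lemma fap_sum {P : Set Ω → ℝ} (hP : FAP.IsFAPm P) {g : ℕ → Set Ω}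
    (hm : ∀ n, MeasurableSet (g n)) (hd : Pairwise (Function.onFun Disjoint g))
    (s : Finset ℕ) : P (⋃ n ∈ s, g n) = ∑ n ∈ s, P (g n) := by
  classical
  induction s using Finset.induction with
  | empty => simpa using fap_empty hP
  | @insert a s ha ih =>
    rw [Finset.set_biUnion_insert, Finset.sum_insert ha, ← ih]
    exact hP.2.2 _ _ (hm a) (.biUnion s.countable_toSet fun n _ => hm n)
      (Set.disjoint_iUnion₂_right.2 fun n hn => hd (fun h => ha (h ▸ hn)))


def part (A : Set Ω) : Set (ℕ → Set Ω) :=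
  {g | (∀ n, MeasurableSet (g n)) ∧ Pairwise (Function.onFun Disjoint g) ∧ (⋃ n, g n) = A}

noncomputable def mc (P : Set Ω → ℝ) (A : Set Ω) : ENNReal :=
  ⨅ g ∈ part A, ∑' n, ENNReal.ofReal (P (g n))

lemma trivPart {A : Set Ω} (hA : MeasurableSet A) :
    (fun n => if n = 0 then A else ∅) ∈ part A := by
  refine ⟨fun n => by dsimp only; split <;> simp [hA], ?_, ?_⟩
  · intro i j hij
    rcases eq_or_ne i 0 with rfl | hi
    · simp [Function.onFun, Ne.symm hij]
    · simp [Function.onFun, hi]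
  · apply Set.eq_of_subset_of_subset
    · exact Set.iUnion_subset fun n => by split <;> simp
    · exact Set.subset_iUnion_of_subset 0 (by simp)

lemma part_inter {A B : Set Ω} (hB : MeasurableSet B) (hBA : B ⊆ A) {g : ℕ → Set Ω}
    (hg : g ∈ part A) : (fun n => g n ∩ B) ∈ part B := by
  refine ⟨fun n => (hg.1 n).inter hB, fun i j hij =>
    (hg.2.1 hij).mono inter_subset_left inter_subset_left, ?_⟩
  rw [← Set.iUnion_inter, hg.2.2, inter_eq_right.2 hBA]

lemma tsum_le_of_subsets {P : Set Ω → ℝ} (hP : FAP.IsFAPm P) {g : ℕ → Set Ω}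
    (hm : ∀ n, MeasurableSet (g n)) (hd : Pairwise (Function.onFun Disjoint g))
    {B : Set Ω} (hB : MeasurableSet B) (hsub : ∀ n, g n ⊆ B) :
    ∑' n, ENNReal.ofReal (P (g n)) ≤ ENNReal.ofReal (P B) := by
  rw [ENNReal.tsum_eq_iSup_sum]
  refine iSup_le fun s => ?_
  rw [← ENNReal.ofReal_sum_of_nonneg (fun n _ => hP.2.1 _ (hm n)), ← fap_sum hP hm hd s]
  exact ENNReal.ofReal_le_ofReal (fap_mono hP (.biUnion s.countable_toSet fun n _ => hm n)
    hB (Set.iUnion₂_subset fun n _ => hsub n))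

lemma mc_le {P : Set Ω → ℝ} (hP : FAP.IsFAPm P) {A : Set Ω} (hA : MeasurableSet A) :
    mc P A ≤ ENNReal.ofReal (P A) := by
  refine iInf₂_le_of_le _ (trivPart hA) ?_
  rw [tsum_eq_single 0 (fun n hn => by simp [hn, fap_empty hP])]
  simp

lemma mc_empty {P : Set Ω → ℝ} (hP : FAP.IsFAPm P) : mc P ∅ = 0 := by
  have := mc_le hP MeasurableSet.empty
  simpa [fap_empty hP] using this


lemma tsum_mc_le {P : Set Ω → ℝ} (hP : FAP.IsFAPm P) {f : ℕ → Set Ω}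
    (hm : ∀ i, MeasurableSet (f i)) (hd : Pairwise (Function.onFun Disjoint f)) :
    ∑' i, mc P (f i) ≤ mc P (⋃ i, f i) := by
  refine le_iInf₂ fun g hg => ?_
  calc ∑' i, mc P (f i) ≤ ∑' i, ∑' m, ENNReal.ofReal (P (g m ∩ f i)) :=
        ENNReal.tsum_le_tsum fun i =>
          iInf₂_le _ (part_inter (hm i) (hg.2.2 ▸ Set.subset_iUnion f i) hg)
    _ = ∑' m, ∑' i, ENNReal.ofReal (P (g m ∩ f i)) := ENNReal.tsum_comm
    _ ≤ ∑' m, ENNReal.ofReal (P (g m)) :=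
        ENNReal.tsum_le_tsum fun m =>
          tsum_le_of_subsets hP (fun i => (hg.1 m).inter (hm i))
            (fun i j hij => (hd hij).mono inter_subset_right inter_subset_right)
            (hg.1 m) (fun i => inter_subset_left)

lemma mc_iUnion_le {P : Set Ω → ℝ} (hP : FAP.IsFAPm P) {f : ℕ → Set Ω}
    (hm : ∀ i, MeasurableSet (f i)) (hd : Pairwise (Function.onFun Disjoint f)) :
    mc P (⋃ i, f i) ≤ ∑' i, mc P (f i) := by
  refine ENNReal.le_of_forall_pos_le_add fun ε hε hlt => ?_
  have hne : ∀ i : ℕ, (ε : ENNReal) / 2 / 2 ^ i ≠ 0 := by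
    intro i
    simp [ENNReal.div_eq_top, ENNReal.div_ne_zero, (by exact_mod_cast hε.ne' : (ε:ENNReal) ≠ 0),
      ENNReal.pow_ne_top (by norm_num : (2:ENNReal) ≠ ⊤)]
  have h : ∀ i : ℕ, ∃ g ∈ part (f i),
      ∑' n, ENNReal.ofReal (P (g n)) < mc P (f i) + ε / 2 / 2 ^ i := by
    intro i
    have hfin : mc P (f i) < mc P (f i) + ε / 2 / 2 ^ i :=
      ENNReal.lt_add_right ((mc_le hP (hm i)).trans_lt ENNReal.ofReal_lt_top).ne (hne i)
    have := hfin
    nth_rewrite 1 [mc] at this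
    simpa only [iInf_lt_iff, exists_prop] using this
  choose g hg hsum using h
  set e : ℕ ≃ ℕ × ℕ := (Denumerable.eqv (ℕ × ℕ)).symm with he
  set h1 : ℕ → Set Ω := fun k => g (e k).1 (e k).2 with hh1
  have hsub : ∀ a b, g a b ⊆ f a := fun a b => (hg a).2.2 ▸ Set.subset_iUnion (g a) b
  have hmem : h1 ∈ part (⋃ i, f i) := by
    refine ⟨fun k => (hg (e k).1).1 _, ?_, ?_⟩
    · intro i j hij
      show Disjoint (g (e i).1 (e i).2) (g (e j).1 (e j).2)
      rcases eq_or_ne (e i).1 (e j).1 with h' | h'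
      · have h2 : (e i).2 ≠ (e j).2 := fun h2 => hij (e.injective (Prod.ext h' h2))
        rw [← h']
        exact (hg (e i).1).2.1 h2
      · exact (hd h').mono (hsub _ _) (hsub _ _)
    · ext x
      simp only [hh1, Set.mem_iUnion]
      constructor
      · rintro ⟨k, hk⟩
        exact ⟨(e k).1, hsub _ _ hk⟩
      · rintro ⟨a, ha⟩
        rw [← (hg a).2.2] at ha
        obtain ⟨b, hb⟩ := Set.mem_iUnion.1 ha
        exact ⟨e.symm (a, b), by simpa using hb⟩
  calc mc P (⋃ i, f i) ≤ ∑' k, ENNReal.ofReal (P (h1 k)) := iInf₂_le _ hmem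
    _ = ∑' p : ℕ × ℕ, ENNReal.ofReal (P (g p.1 p.2)) :=
        e.tsum_eq (fun p => ENNReal.ofReal (P (g p.1 p.2)))
    _ = ∑' a, ∑' b, ENNReal.ofReal (P (g a b)) := ENNReal.tsum_prod (f := fun a b => ENNReal.ofReal (P (g a b)))
    _ ≤ ∑' a, (mc P (f a) + ε / 2 / 2 ^ a) := ENNReal.tsum_le_tsum fun a => (hsum a).le
    _ = (∑' a, mc P (f a)) + ∑' a : ℕ, (ε : ENNReal) / 2 / 2 ^ a := ENNReal.tsum_add
    _ ≤ (∑' a, mc P (f a)) + ε := by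
        refine add_le_add_right ?_ _
        have : ∑' a : ℕ, (ε : ENNReal) / 2 / 2 ^ a = (ε / 2) * ∑' a : ℕ, (2 : ENNReal)⁻¹ ^ a := by
          rw [ENNReal.tsum_mul_left.symm]
          congr 1 with a
          rw [div_eq_mul_inv, ENNReal.inv_pow]
        rw [this, ENNReal.tsum_geometric, ENNReal.one_sub_inv_two, inv_inv,
          ENNReal.div_mul_cancel two_ne_zero ENNReal.ofNat_ne_top]

lemma mc_iUnion {P : Set Ω → ℝ} (hP : FAP.IsFAPm P) {f : ℕ → Set Ω}
    (hm : ∀ i, MeasurableSet (f i)) (hd : Pairwise (Function.onFun Disjoint f)) :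
    mc P (⋃ i, f i) = ∑' i, mc P (f i) :=
  le_antisymm (mc_iUnion_le hP hm hd) (tsum_mc_le hP hm hd)


lemma measure_le_mc {P : Set Ω → ℝ} (ν : Measure Ω)
    (hν : ∀ A : Set Ω, MeasurableSet A → ν A ≤ ENNReal.ofReal (P A))
    {A : Set Ω} : ν A ≤ mc P A := by
  refine le_iInf₂ fun g hg => ?_
  calc ν A = ν (⋃ n, g n) := by rw [hg.2.2]
    _ = ∑' n, ν (g n) := measure_iUnion hg.2.1 hg.1
    _ ≤ ∑' n, ENNReal.ofReal (P (g n)) := ENNReal.tsum_le_tsum fun n => hν _ (hg.1 n)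

lemma tsum_eps (ε : ENNReal) : ∑' a : ℕ, ε / 2 / 2 ^ a = ε := by
  have : ∑' a : ℕ, ε / 2 / 2 ^ a = (ε / 2) * ∑' a : ℕ, (2 : ENNReal)⁻¹ ^ a := by
    rw [ENNReal.tsum_mul_left.symm]
    congr 1 with a
    rw [div_eq_mul_inv, ENNReal.inv_pow]
  rw [this, ENNReal.tsum_geometric, ENNReal.one_sub_inv_two, inv_inv,
    ENNReal.div_mul_cancel two_ne_zero ENNReal.ofNat_ne_top]

lemma mc_null {P : Set Ω → ℝ} (hP : FAP.IsFAPm P) (P₀ : Measure Ω) [IsFiniteMeasure P₀]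
    (heq : ∀ A : Set Ω, MeasurableSet A → (P A = 0 ↔ P₀ A = 0))
    {A : Set Ω} (hA : MeasurableSet A) (h0 : mc P A = 0) : P₀ A = 0 := by
  by_contra hcon
  set δ : ℕ → ENNReal := fun k => P₀ A / 2 / 2 / 2 ^ k with hδ
  have hδ0 : ∀ k, δ k ≠ 0 := by
    intro k
    simp [hδ, ENNReal.div_eq_top, ENNReal.div_ne_zero, hcon, (measure_ne_top P₀ A),
      ENNReal.pow_ne_top (by norm_num : (2:ENNReal) ≠ ⊤)]
  have key : ∀ k : ℕ, ∃ B : Set Ω, MeasurableSet B ∧ B ⊆ A ∧ P B ≤ (1/2 : ℝ) ^ k ∧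
      P₀ (A \ B) ≤ δ k := by
    intro k
    have hpos : (0 : ENNReal) < ENNReal.ofReal ((1/2 : ℝ) ^ k) :=
      ENNReal.ofReal_pos.2 (by positivity)
    have : mc P A < ENNReal.ofReal ((1/2 : ℝ) ^ k) := h0 ▸ hpos
    rw [mc] at this
    simp only [iInf_lt_iff, exists_prop] at this
    obtain ⟨g, hg, hgsum⟩ := this
    have hP0A : P₀ A = ∑' n, P₀ (g n) := by
      rw [← hg.2.2, measure_iUnion hg.2.1 hg.1]
    have hsub' : P₀ A - δ k < ∑' n, P₀ (g n) :=
      hP0A ▸ ENNReal.sub_lt_self (measure_ne_top P₀ A) hcon (hδ0 k)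
    rw [ENNReal.tsum_eq_iSup_sum, lt_iSup_iff] at hsub'
    obtain ⟨s, hs⟩ := hsub'
    refine ⟨⋃ n ∈ s, g n, .biUnion s.countable_toSet fun n _ => hg.1 n,
      Set.iUnion₂_subset fun n _ => hg.2.2 ▸ Set.subset_iUnion g n, ?_, ?_⟩
    · have h1 : ENNReal.ofReal (P (⋃ n ∈ s, g n)) < ENNReal.ofReal ((1/2 : ℝ) ^ k) := by
        rw [fap_sum hP hg.1 hg.2.1 s,
          ENNReal.ofReal_sum_of_nonneg (fun n _ => hP.2.1 _ (hg.1 n))]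
        exact lt_of_le_of_lt (ENNReal.sum_le_tsum s) hgsum
      have := (ENNReal.ofReal_lt_ofReal_iff (by positivity)).1 h1
      exact this.le
    · have hB : P₀ (⋃ n ∈ s, g n) = ∑ n ∈ s, P₀ (g n) :=
        measure_biUnion_finset (fun i _ j _ hij => hg.2.1 hij) (fun n _ => hg.1 n)
      have h2 : P₀ A ≤ P₀ (⋃ n ∈ s, g n) + δ k := by
        rw [hB]; exact tsub_le_iff_right.1 hs.le
      have hd2 : P₀ (A \ ⋃ n ∈ s, g n) = P₀ A - P₀ (⋃ n ∈ s, g n) :=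
        measure_diff (Set.iUnion₂_subset fun n _ => hg.2.2 ▸ Set.subset_iUnion g n)
          (MeasurableSet.biUnion s.countable_toSet fun n _ => hg.1 n).nullMeasurableSet
          (measure_ne_top P₀ _)
      rw [hd2]
      exact tsub_le_iff_left.2 h2
  choose B hBm hBA hPB hP0B using key
  set C : Set Ω := ⋂ k, B k with hC
  have hCm : MeasurableSet C := MeasurableSet.iInter fun k => hBm k
  have hPC : P C = 0 := by
    have h1 : ∀ k, P C ≤ (1/2 : ℝ) ^ k := fun k =>
      (fap_mono hP hCm (hBm k) (Set.iInter_subset B k)).trans (hPB k)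
    have h2 : P C ≤ 0 := ge_of_tendsto
      (tendsto_pow_atTop_nhds_zero_of_lt_one (by norm_num) (by norm_num))
      (Filter.Eventually.of_forall h1)
    exact le_antisymm h2 (hP.2.1 C hCm)
  have hP0C : P₀ C = 0 := (heq C hCm).1 hPC
  have hdiff : P₀ (A \ C) ≤ P₀ A / 2 := by
    have : A \ C = ⋃ k, A \ B k := by
      rw [hC, Set.diff_iInter]
    rw [this]
    calc P₀ (⋃ k, A \ B k) ≤ ∑' k, P₀ (A \ B k) := measure_iUnion_le _
      _ ≤ ∑' k, δ k := ENNReal.tsum_le_tsum hP0B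
      _ = P₀ A / 2 := tsum_eps _
  have : P₀ A ≤ P₀ A / 2 := by
    have hsplit : P₀ A ≤ P₀ (A \ C) + P₀ C :=
      (measure_mono (fun x hx => by
        by_cases h : x ∈ C
        exacts [Or.inr h, Or.inl ⟨hx, h⟩])).trans (measure_union_le _ _)
    rw [hP0C, add_zero] at hsplit
    exact hsplit.trans hdiff
  exact absurd this (not_le.2 (ENNReal.half_lt_self hcon (measure_ne_top P₀ A)))

end FAPaux

open FAPaux


/-- every finitely additive probability P ∼ P₀ decomposes as
P = α P₁ + (1 - α) Q with α ∈ [0,1), P₁ finitely additive (pure unless α = 0),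
and Q a countably additive probability with Q ∼ P₀. -/
theorem stmt9 {Ω : Type*} [MeasurableSpace Ω] (P₀ : Measure Ω) [IsProbabilityMeasure P₀]
    (P : Set Ω → ℝ) (hP : FAP.IsFAPm P) (heq : FAP.EquivP P P₀) :
    ∃ α : ℝ, 0 ≤ α ∧ α < 1 ∧
      ∃ P₁ : Set Ω → ℝ, FAP.IsFAPm P₁ ∧ (α ≠ 0 → FAP.IsPure P₁) ∧
        ∃ Q : Measure Ω, IsProbabilityMeasure Q ∧
          (∀ A : Set Ω, MeasurableSet A → (Q A = 0 ↔ P₀ A = 0)) ∧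
          ∀ A : Set Ω, MeasurableSet A →
            P A = α * P₁ A + (1 - α) * (Q A).toReal := by
  classical
  have hmle : ∀ {A : Set Ω}, MeasurableSet A → mc P A ≤ ENNReal.ofReal (P A) :=
    fun hA => mc_le hP hA
  set QM : Measure Ω := Measure.ofMeasurable (fun s _ => mc P s) (mc_empty hP)
    (fun f hf hd => mc_iUnion hP hf hd) with hQMdef
  have hQM : ∀ {A : Set Ω}, MeasurableSet A → QM A = mc P A :=
    fun hA => Measure.ofMeasurable_apply _ hA
  have hP0eq : ∀ {A : Set Ω}, MeasurableSet A → (mc P A = 0 ↔ P₀ A = 0) := by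
    intro A hA
    constructor
    · exact mc_null hP P₀ heq hA
    · intro h
      have hPA : P A = 0 := (heq A hA).2 h
      have h2 := hmle hA
      rw [hPA, ENNReal.ofReal_zero] at h2
      exact le_antisymm h2 zero_le
  have huniv_ne : mc P univ ≠ 0 := fun h => by
    have := (hP0eq MeasurableSet.univ).1 h
    simp [measure_univ] at this
  have huniv_le : mc P univ ≤ 1 := by
    have := hmle MeasurableSet.univ
    rwa [hP.1, ENNReal.ofReal_one] at this
  have huniv_top : mc P univ ≠ ⊤ := (huniv_le.trans_lt (by norm_num)).ne
  have hQMfin : ∀ {A : Set Ω}, MeasurableSet A → QM A ≠ ⊤ := fun {A} hA => by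
    rw [hQM hA]
    exact ((hmle hA).trans_lt ENNReal.ofReal_lt_top).ne
  set c : ℝ := (mc P univ).toReal with hcdef
  have hc0 : 0 < c := ENNReal.toReal_pos huniv_ne huniv_top
  have hc1 : c ≤ 1 := by
    calc c ≤ (1 : ENNReal).toReal := ENNReal.toReal_mono (by norm_num) huniv_le
      _ = 1 := by simp
  have htle : ∀ {A : Set Ω}, MeasurableSet A → (mc P A).toReal ≤ P A := fun {A} hA => by
    calc (mc P A).toReal ≤ (ENNReal.ofReal (P A)).toReal :=
          ENNReal.toReal_mono ENNReal.ofReal_ne_top (hmle hA)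
      _ = P A := ENNReal.toReal_ofReal (hP.2.1 A hA)
  set Q : Measure Ω := (mc P univ)⁻¹ • QM with hQdef
  have hQapp : ∀ {A : Set Ω}, MeasurableSet A → Q A = (mc P univ)⁻¹ * mc P A :=
    fun {A} hA => by rw [hQdef, Measure.smul_apply, smul_eq_mul, hQM hA]
  have hQprob : IsProbabilityMeasure Q :=
    ⟨by rw [hQapp MeasurableSet.univ, ENNReal.inv_mul_cancel huniv_ne huniv_top]⟩
  have hQnull : ∀ A : Set Ω, MeasurableSet A → (Q A = 0 ↔ P₀ A = 0) := by
    intro A hA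
    rw [hQapp hA, mul_eq_zero]
    have hinv0 : (mc P univ)⁻¹ ≠ 0 := ENNReal.inv_ne_zero.2 huniv_top
    constructor
    · rintro (h | h)
      · exact absurd h hinv0
      · exact (hP0eq hA).1 h
    · intro h; exact Or.inr ((hP0eq hA).2 h)
  have hQtoReal : ∀ {A : Set Ω}, MeasurableSet A → (Q A).toReal = c⁻¹ * (mc P A).toReal :=
    fun {A} hA => by rw [hQapp hA, ENNReal.toReal_mul, ENNReal.toReal_inv]
  refine ⟨1 - c, by linarith, by linarith, ?_⟩
  by_cases hc : c = 1
  · refine ⟨P, hP, fun h => absurd (by rw [hc, sub_self]) h, Q, hQprob, hQnull, ?_⟩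
    intro A hA
    have hcompl : mc P A + mc P Aᶜ = mc P univ := by
      rw [← hQM hA, ← hQM hA.compl, measure_add_measure_compl hA, hQM MeasurableSet.univ]
    have hPadd : P A + P Aᶜ = 1 := by
      have := hP.2.2 A Aᶜ hA hA.compl disjoint_compl_right
      rw [union_compl_self, hP.1] at this
      linarith
    have hone : mc P univ = 1 := by
      rw [← ENNReal.ofReal_toReal huniv_top, ← hcdef, hc, ENNReal.ofReal_one]
    have hsum : ENNReal.ofReal (P A) + ENNReal.ofReal (P Aᶜ) = 1 := by
      rw [← ENNReal.ofReal_add (hP.2.1 A hA) (hP.2.1 Aᶜ hA.compl), hPadd, ENNReal.ofReal_one]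
    have hmA : mc P A = ENNReal.ofReal (P A) := by
      by_contra hne
      have hlt : mc P A < ENNReal.ofReal (P A) := (hmle hA).lt_of_ne hne
      have : mc P A + mc P Aᶜ < ENNReal.ofReal (P A) + ENNReal.ofReal (P Aᶜ) :=
        ENNReal.add_lt_add_of_lt_of_le
          (((hmle hA.compl).trans_lt ENNReal.ofReal_lt_top).ne) hlt (hmle hA.compl)
      rw [hcompl, hone, hsum] at this
      exact lt_irrefl _ this
    have hQA : (Q A).toReal = P A := by
      rw [hQtoReal hA, hmA, ENNReal.toReal_ofReal (hP.2.1 A hA), hc]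
      simp
    rw [hc, sub_self, hQA]
    ring
  · have hα : 0 < 1 - c := by
      rcases lt_of_le_of_ne hc1 hc with h
      linarith
    set P₁ : Set Ω → ℝ := fun A => (P A - (QM A).toReal) / (1 - c) with hP₁def
    have hQMle : ∀ {A : Set Ω}, MeasurableSet A → (QM A).toReal ≤ P A := fun {A} hA => by
      rw [hQM hA]; exact htle hA
    have hP₁ : FAP.IsFAPm P₁ := by
      refine ⟨?_, ?_, ?_⟩
      · show (P univ - (QM univ).toReal) / (1 - c) = 1
        rw [hQM MeasurableSet.univ, hP.1, ← hcdef, div_self hα.ne']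
      · intro A hA
        exact div_nonneg (by have := hQMle hA; linarith) hα.le
      · intro A B hA hB hd
        show (P (A ∪ B) - (QM (A ∪ B)).toReal) / (1 - c) =
          (P A - (QM A).toReal) / (1 - c) + (P B - (QM B).toReal) / (1 - c)
        rw [hP.2.2 A B hA hB hd, measure_union hd hB,
          ENNReal.toReal_add (hQMfin hA) (hQMfin hB)]
        ring
    refine ⟨P₁, hP₁, fun _ => ?_, Q, hQprob, hQnull, ?_⟩
    · intro Γ hΓ
      have key : ∀ A : Set Ω, MeasurableSet A →
          ENNReal.ofReal (1 - c) * Γ A + QM A ≤ ENNReal.ofReal (P A) := by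
        intro A hA
        have hsub : 0 ≤ P A - (QM A).toReal := by have := hQMle hA; linarith
        have h1 : ENNReal.ofReal (1 - c) * Γ A ≤ ENNReal.ofReal (P A - (QM A).toReal) := by
          calc ENNReal.ofReal (1 - c) * Γ A
              ≤ ENNReal.ofReal (1 - c) * ENNReal.ofReal (P₁ A) := mul_le_mul_right (hΓ A hA) _
            _ = ENNReal.ofReal ((1 - c) * P₁ A) := (ENNReal.ofReal_mul hα.le).symm
            _ = ENNReal.ofReal (P A - (QM A).toReal) := by
                congr 1
                show (1 - c) * ((P A - (QM A).toReal) / (1 - c)) = _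
                field_simp
        calc ENNReal.ofReal (1 - c) * Γ A + QM A
            ≤ ENNReal.ofReal (P A - (QM A).toReal) + ENNReal.ofReal ((QM A).toReal) := by
              rw [ENNReal.ofReal_toReal (hQMfin hA)]
              exact add_le_add_left h1 _
          _ = ENNReal.ofReal (P A) := by
              rw [← ENNReal.ofReal_add hsub ENNReal.toReal_nonneg, sub_add_cancel]
      have hν : ∀ A : Set Ω, (ENNReal.ofReal (1 - c) • Γ + QM) A ≤ mc P A :=
        fun A => measure_le_mc _ (fun B hB => by
          simpa [Measure.add_apply, Measure.smul_apply, smul_eq_mul] using key B hB)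
      have hzero : ∀ A : Set Ω, MeasurableSet A → Γ A = 0 := by
        intro A hA
        have h := hν A
        rw [Measure.add_apply, Measure.smul_apply, smul_eq_mul, ← hQM hA] at h
        have hfin := hQMfin hA
        have hmul0 : ENNReal.ofReal (1 - c) * Γ A = 0 := by
          by_contra hne
          exact absurd h (not_le.2 (by
            rw [add_comm]
            exact ENNReal.lt_add_right hfin hne))
        rcases mul_eq_zero.1 hmul0 with h' | h'
        · rw [ENNReal.ofReal_eq_zero] at h'
          linarith
        · exact h'
      exact Measure.ext fun s hs => by simp [hzero s hs]
    · intro A hA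
      have ht := htle hA
      rw [hQtoReal hA]
      show P A = (1 - c) * ((P A - (QM A).toReal) / (1 - c)) + _
      rw [hQM hA]
      have h1 : (1 : ℝ) - c ≠ 0 := hα.ne'
      have h2 : c ≠ 0 := hc0.ne'
      field_simp
      ring
end

section
/- Suppose $L$ is a finite-dimensional linear subspace of bounded random variables satisfying the no-arbitrage condition: for every $X \in L$, $P_0(X > 0) > 0$ iff $P_0(X < 0) > 0$. Then there exists a constant $c^* > 0$ such that $\operatorname{ess\,sup}(X) \le c^* \operatorname{ess\,sup}(-X)$ for every $X \in L$ with $\|X\|_\infty = 1$. -/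
open MeasureTheory Set

open FAP

namespace Stmt12Aux

variable {Ω : Type*} [MeasurableSpace Ω] {P₀ : MeasureTheory.Measure Ω} [IsProbabilityMeasure P₀]

noncomputable def E (P₀ : MeasureTheory.Measure Ω) (X : Ω → ℝ) : ℝ :=
  sInf {a : ℝ | P₀ {ω | a < X ω} = 0}

lemma mem_top {X : Ω → ℝ} {M : ℝ} (hM : ∀ ω, X ω ≤ M) :
    P₀ {ω | M < X ω} = 0 := by
  have h : {ω | M < X ω} = (∅ : Set Ω) := by
    ext ω; simp only [mem_setOf_eq, mem_empty_iff_false, iff_false, not_lt]; exact hM ω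
  simp [h]

lemma bdd {X : Ω → ℝ} {M : ℝ} (hM : ∀ ω, |X ω| ≤ M) :
    BddBelow {a : ℝ | P₀ {ω | a < X ω} = 0} := by
  refine ⟨-(M+1), fun a ha => ?_⟩
  simp only [mem_setOf_eq] at ha
  by_contra h
  push_neg at h
  have hu : {ω | a < X ω} = univ := by
    ext ω; simp only [mem_setOf_eq, mem_univ, iff_true]
    have := neg_le_of_abs_le (hM ω); linarith
  rw [hu, measure_univ] at ha
  exact one_ne_zero ha

lemma ne_sSet {X : Ω → ℝ} {M : ℝ} (hM : ∀ ω, |X ω| ≤ M) :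
    Set.Nonempty {a : ℝ | P₀ {ω | a < X ω} = 0} :=
  ⟨M, mem_top fun ω => (abs_le.1 (hM ω)).2⟩

lemma E_le {X : Ω → ℝ} {M b : ℝ} (hM : ∀ ω, |X ω| ≤ M)
    (hb : P₀ {ω | b < X ω} = 0) : E P₀ X ≤ b :=
  csInf_le (bdd hM) hb

lemma E_le_of_forall {X : Ω → ℝ} {M b : ℝ} (hM : ∀ ω, |X ω| ≤ M)
    (hb : ∀ ω, X ω ≤ b) : E P₀ X ≤ b :=
  E_le hM (mem_top hb)

lemma ae_le_E {X : Ω → ℝ} {M : ℝ} (hM : ∀ ω, |X ω| ≤ M) :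
    P₀ {ω | E P₀ X < X ω} = 0 := by
  have hcover : {ω | E P₀ X < X ω} ⊆ ⋃ n : ℕ, {ω | E P₀ X + 1/((n:ℝ)+1) < X ω} := by
    intro ω hω
    rw [mem_setOf_eq] at hω
    obtain ⟨n, hn⟩ := exists_nat_one_div_lt (sub_pos.2 hω)
    exact mem_iUnion.2 ⟨n, by simp only [mem_setOf_eq]; linarith⟩
  refine measure_mono_null hcover (measure_iUnion_null fun n => ?_)
  have hlt : sInf {a : ℝ | P₀ {ω | a < X ω} = 0} < E P₀ X + 1/((n:ℝ)+1) := by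
    have h0 : (0:ℝ) < 1/((n:ℝ)+1) := by positivity
    have : sInf {a : ℝ | P₀ {ω | a < X ω} = 0} = E P₀ X := rfl
    linarith
  obtain ⟨a, ha, halt⟩ := exists_lt_of_csInf_lt (ne_sSet hM) hlt
  exact measure_mono_null (fun ω hω => lt_trans halt hω) ha

lemma le_E {X : Ω → ℝ} {M b : ℝ} (hM : ∀ ω, |X ω| ≤ M)
    (hb : P₀ {ω | b < X ω} ≠ 0) : b ≤ E P₀ X := by
  apply le_csInf (ne_sSet hM)
  intro a ha
  by_contra h
  push_neg at h
  exact hb (measure_mono_null (fun ω hω => h.trans hω) ha)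

lemma E_zero : E P₀ (fun _ : Ω => (0:ℝ)) = 0 := by
  apply le_antisymm
  · exact E_le_of_forall (M := 1) (fun ω => by norm_num) (fun ω => le_rfl)
  · apply le_csInf (ne_sSet (M := 1) (fun ω => by norm_num))
    intro a ha
    simp only [mem_setOf_eq] at ha
    by_contra h
    push_neg at h
    have hu : {ω : Ω | a < (0:ℝ)} = univ := by
      ext ω; simp only [mem_setOf_eq, mem_univ, iff_true]; exact h
    rw [hu, measure_univ] at ha
    exact one_ne_zero ha

lemma E_add_le {X Y : Ω → ℝ} {M₁ M₂ : ℝ} (hM1 : ∀ ω, |X ω| ≤ M₁) (hM2 : ∀ ω, |Y ω| ≤ M₂) :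
    E P₀ (fun ω => X ω + Y ω) ≤ E P₀ X + E P₀ Y := by
  apply E_le (M := M₁ + M₂) (fun ω => (abs_add_le _ _).trans (add_le_add (hM1 ω) (hM2 ω)))
  apply measure_mono_null (t := {ω | E P₀ X < X ω} ∪ {ω | E P₀ Y < Y ω})
  · intro ω hω
    by_contra hc
    simp only [mem_union, mem_setOf_eq, not_or, not_lt] at hc
    simp only [mem_setOf_eq] at hω
    linarith [hc.1, hc.2]
  · exact measure_union_null (ae_le_E hM1) (ae_le_E hM2)

lemma E_smul {X : Ω → ℝ} {M t : ℝ} (hM : ∀ ω, |X ω| ≤ M) (ht : 0 < t) :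
    E P₀ (fun ω => t * X ω) = t * E P₀ X := by
  have hMt : ∀ ω, |t * X ω| ≤ t * M := fun ω => by
    rw [abs_mul, abs_of_pos ht]; exact mul_le_mul_of_nonneg_left (hM ω) ht.le
  apply le_antisymm
  · apply E_le hMt
    have hset : {ω | t * E P₀ X < t * X ω} = {ω | E P₀ X < X ω} := by
      ext ω; simp only [mem_setOf_eq, mul_lt_mul_iff_right₀ ht]
    rw [hset]; exact ae_le_E hM
  · have h1 : E P₀ X ≤ E P₀ (fun ω => t * X ω) / t := by
      apply E_le hM
      have hset : {ω | E P₀ (fun ω => t * X ω) / t < X ω}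
          = {ω | E P₀ (fun ω => t * X ω) < t * X ω} := by
        ext ω; rw [mem_setOf_eq, mem_setOf_eq, div_lt_iff₀ ht, mul_comm]
      rw [hset]; exact ae_le_E hMt
    have := mul_le_mul_of_nonneg_left h1 ht.le
    rwa [mul_div_cancel₀ _ ht.ne'] at this

lemma meas_pos_of_E_pos {X : Ω → ℝ} {M : ℝ} (hM : ∀ ω, |X ω| ≤ M)
    (h : 0 < E P₀ X) : P₀ {ω | 0 < X ω} ≠ 0 := by
  intro h0
  exact absurd (E_le hM h0) (not_le.2 h)

lemma E_neg_pos {X : Ω → ℝ} {M : ℝ} (hM : ∀ ω, |X ω| ≤ M)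
    (h : P₀ {ω | X ω < 0} ≠ 0) : 0 < E P₀ (fun ω => -X ω) := by
  have hMn : ∀ ω, |(fun ω => -X ω) ω| ≤ M := fun ω => by
    simp only [abs_neg]; exact hM ω
  have hcover : {ω | X ω < 0} ⊆ ⋃ n : ℕ, {ω | 1/((n:ℝ)+1) < -X ω} := by
    intro ω hω
    rw [mem_setOf_eq] at hω
    obtain ⟨n, hn⟩ := exists_nat_one_div_lt (neg_pos.2 hω)
    exact mem_iUnion.2 ⟨n, hn⟩
  have hex : ∃ n : ℕ, P₀ {ω | 1/((n:ℝ)+1) < -X ω} ≠ 0 := by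
    by_contra hc
    push_neg at hc
    exact h (measure_mono_null hcover (measure_iUnion_null fun n => hc n))
  obtain ⟨n, hn⟩ := hex
  have h0 : (0:ℝ) < 1/((n:ℝ)+1) := by positivity
  exact lt_of_lt_of_le h0 (le_E hMn hn)

end Stmt12Aux


/-- if L is finite-dimensional and satisfies no-arbitrage, then
there is c* > 0 with ess sup(X) ≤ c* ess sup(-X) for every X ∈ L of unit norm. -/
theorem stmt12 {Ω : Type*} [MeasurableSpace Ω] (P₀ : Measure Ω) [IsProbabilityMeasure P₀]
    (L : Submodule ℝ (Ω → ℝ)) (hfin : FiniteDimensional ℝ L)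
    (hL : ∀ X ∈ L, Measurable X ∧ ∃ M : ℝ, ∀ ω, |X ω| ≤ M)
    (hna : ∀ X ∈ L, (0 < P₀ {ω | 0 < X ω} ↔ 0 < P₀ {ω | X ω < 0})) :
    ∃ cstar : ℝ, 0 < cstar ∧ ∀ X ∈ L,
      max (FAP.essSupR P₀ X) (FAP.essSupR P₀ (fun ω => -X ω)) = 1 →
      FAP.essSupR P₀ X ≤ cstar * FAP.essSupR P₀ (fun ω => -X ω) := by
  classical
  obtain ⟨k, ⟨b⟩⟩ : ∃ n, Nonempty (Module.Basis (Fin n) ℝ L) := ⟨_, ⟨Module.finBasis ℝ L⟩⟩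
  have hbnd : ∀ i : Fin k, ∃ M : ℝ, ∀ ω, |((b i : Ω → ℝ)) ω| ≤ M := fun i =>
    (hL (b i) (b i).2).2
  choose Mb hMb using hbnd
  set Mb' : Fin k → ℝ := fun i => max (Mb i) 0 with hMb'def
  have hMb'nn : ∀ i, 0 ≤ Mb' i := fun i => le_max_right _ _
  have hMb'b : ∀ i ω, |((b i : Ω → ℝ)) ω| ≤ Mb' i := fun i ω => (hMb i ω).trans (le_max_left _ _)
  set K : ℝ := ∑ i, Mb' i with hK
  have hKnn : 0 ≤ K := Finset.sum_nonneg fun i _ => hMb'nn i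
  set D : (Fin k → ℝ) → Ω → ℝ := fun c ω => ∑ i, c i * (b i : Ω → ℝ) ω with hD
  have hDcoe : ∀ c, D c = ((∑ i, c i • b i : L) : Ω → ℝ) := by
    intro c; funext ω
    simp [hD, AddSubmonoidClass.coe_finset_sum, Finset.sum_apply]
  have hDL : ∀ c, D c ∈ L := fun c => by rw [hDcoe c]; exact (∑ i, c i • b i : L).2
  have hDadd : ∀ c d, D (c + d) = fun ω => D c ω + D d ω := by
    intro c d; funext ω
    simp [hD, add_mul, Finset.sum_add_distrib]
  have hDsmul : ∀ (t : ℝ) (c : Fin k → ℝ), D (t • c) = fun ω => t * D c ω := by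
    intro t c; funext ω
    simp [hD, Finset.mul_sum, mul_assoc]
  have hDneg : ∀ c, D (-c) = fun ω => -(D c ω) := by
    intro c; funext ω
    simp [hD]
  have hDb : ∀ c ω, |D c ω| ≤ K * ‖c‖ := by
    intro c ω
    calc |D c ω| ≤ ∑ i, |c i * (b i : Ω → ℝ) ω| := by
          simp only [hD]; exact Finset.abs_sum_le_sum_abs _ _
      _ ≤ ∑ i, Mb' i * ‖c‖ := Finset.sum_le_sum (fun i _ => by
          rw [abs_mul, mul_comm]
          exact mul_le_mul (hMb'b i ω) ((Real.norm_eq_abs (c i)) ▸ norm_le_pi_norm c i)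
            (abs_nonneg _) (hMb'nn i))
      _ = K * ‖c‖ := by rw [← Finset.sum_mul]
  set f : (Fin k → ℝ) → ℝ := fun c => Stmt12Aux.E P₀ (D c) with hfdef
  have hfeq : ∀ c, f c = Stmt12Aux.E P₀ (D c) := fun c => by rw [hfdef]
  have hfbound : ∀ c, f c ≤ K * ‖c‖ := fun c => by
    rw [hfeq c]
    exact Stmt12Aux.E_le_of_forall (hDb c) (fun ω => (abs_le.1 (hDb c ω)).2)
  have hfsub : ∀ c d, f (c + d) ≤ f c + f d := by
    intro c d
    rw [hfeq (c+d), hfeq c, hfeq d, hDadd c d]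
    exact Stmt12Aux.E_add_le (hDb c) (hDb d)
  have hfsmul : ∀ t : ℝ, 0 < t → ∀ c, f (t • c) = t * f c := by
    intro t ht c
    rw [hfeq (t • c), hfeq c, hDsmul t c]
    exact Stmt12Aux.E_smul (hDb c) ht
  have hf0 : f 0 = 0 := by
    have h : D 0 = fun _ : Ω => (0:ℝ) := by funext ω; simp [hD]
    rw [hfeq 0, h, Stmt12Aux.E_zero]
  have hfsumnn : ∀ c, 0 ≤ f c + f (-c) := by
    intro c
    rw [hfeq c, hfeq (-c)]
    have h1 : Stmt12Aux.E P₀ (fun ω => D c ω + D (-c) ω)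
        ≤ Stmt12Aux.E P₀ (D c) + Stmt12Aux.E P₀ (D (-c)) :=
      Stmt12Aux.E_add_le (hDb c) (hDb (-c))
    have he : (fun ω => D c ω + D (-c) ω) = fun _ : Ω => (0:ℝ) := by
      funext ω; rw [hDneg c]; simp
    rw [he, Stmt12Aux.E_zero] at h1
    exact h1
  have hflip : ∀ c d, f c - f d ≤ K * dist c d := by
    intro c d
    have h1 : f c ≤ f d + f (c - d) := by
      have h : f c = f (d + (c - d)) := by rw [add_sub_cancel]
      rw [h]; exact hfsub d (c - d)
    have h2 : f (c - d) ≤ K * ‖c - d‖ := hfbound _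
    rw [dist_eq_norm]; linarith
  have hfcont : Continuous f := by
    have hlip : LipschitzWith (Real.toNNReal K) f := by
      apply LipschitzWith.of_dist_le_mul
      intro x y
      rw [Real.dist_eq, abs_sub_le_iff, Real.coe_toNNReal K hKnn]
      exact ⟨hflip x y, by have := hflip y x; rwa [dist_comm] at this⟩
    exact hlip.continuous
  set p : (Fin k → ℝ) → ℝ := fun c => max (f c) (f (-c)) with hpdef
  have hpeq : ∀ c, p c = max (f c) (f (-c)) := fun c => by rw [hpdef]
  have hpcont : Continuous p := by
    rw [hpdef]; exact Continuous.max hfcont (hfcont.comp continuous_neg)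
  have hpnn : ∀ c, 0 ≤ p c := by
    intro c
    have h0 := hfsumnn c
    rw [hpeq c]
    rcases le_total (f c) (f (-c)) with h | h
    · rw [max_eq_right h]; linarith
    · rw [max_eq_left h]; linarith
  have hpneg : ∀ c, p (-c) = p c := by
    intro c
    rw [hpeq (-c), hpeq c, neg_neg, max_comm]
  have hpsub : ∀ c d, p (c + d) ≤ p c + p d := by
    intro c d
    rw [hpeq (c+d), hpeq c, hpeq d]
    apply max_le
    · exact (hfsub c d).trans (add_le_add (le_max_left _ _) (le_max_left _ _))
    · have h : f (-(c+d)) ≤ f (-c) + f (-d) := by rw [neg_add]; exact hfsub (-c) (-d)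
      exact h.trans (add_le_add (le_max_right _ _) (le_max_right _ _))
  have hp0 : p 0 = 0 := by
    rw [hpeq 0, neg_zero, hf0]; simp
  have hpsmul : ∀ (t : ℝ) (c : Fin k → ℝ), p (t • c) = |t| * p c := by
    intro t c
    rcases lt_trichotomy t 0 with ht | ht | ht
    · have h1 : t • c = (-t) • (-c) := by rw [smul_neg, neg_smul, neg_neg]
      rw [h1, hpeq ((-t) • (-c)),
        show -((-t) • (-c)) = (-t) • c from by rw [smul_neg, neg_neg],
        hfsmul (-t) (by linarith) (-c), hfsmul (-t) (by linarith) c, abs_of_neg ht,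
        ← mul_max_of_nonneg _ _ (by linarith : (0:ℝ) ≤ -t), hpeq c,
        max_comm (f (-c)) (f c)]
    · rw [ht, zero_smul, hp0, abs_zero, zero_mul]
    · rw [hpeq (t • c), show -(t • c) = t • (-c) from (smul_neg t c).symm,
        hfsmul t ht c, hfsmul t ht (-c), abs_of_pos ht, mul_max_of_nonneg _ _ ht.le]
  obtain ⟨N, hNmem⟩ : ∃ N : Submodule ℝ (Fin k → ℝ), ∀ c, c ∈ N ↔ p c = 0 := by
    refine ⟨{ carrier := {c | p c = 0}
              add_mem' := ?_
              zero_mem' := hp0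
              smul_mem' := ?_ }, fun c => Iff.rfl⟩
    · intro c d hc hd
      simp only [Set.mem_setOf_eq] at *
      refine le_antisymm ?_ (hpnn _)
      calc p (c+d) ≤ p c + p d := hpsub c d
        _ = 0 := by rw [hc, hd]; ring
    · intro t c hc
      simp only [Set.mem_setOf_eq] at *
      rw [hpsmul t c, hc, mul_zero]
  obtain ⟨W, hW⟩ := Submodule.exists_isCompl N
  have hdecomp : ∀ c : Fin k → ℝ, ∃ n ∈ N, ∃ w ∈ W, n + w = c := by
    intro c
    have hc : c ∈ N ⊔ W := by rw [hW.sup_eq_top]; trivial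
    exact Submodule.mem_sup.1 hc
  have hfker : ∀ n ∈ N, f n = 0 ∧ f (-n) = 0 := by
    intro n hn
    have h0 : p n = 0 := (hNmem n).1 hn
    rw [hpeq n] at h0
    have h1 : f n ≤ 0 := le_of_le_of_eq (le_max_left _ (f (-n))) h0
    have h2 : f (-n) ≤ 0 := le_of_le_of_eq (le_max_right (f n) _) h0
    have h3 := hfsumnn n
    constructor <;> linarith
  have key : ∀ X, ∀ hX : X ∈ L, max (essSupR P₀ X) (essSupR P₀ (fun ω => -X ω)) = 1 →
      ∃ w, w ∈ W ∧ p w = 1 ∧ essSupR P₀ X ≤ 1 ∧ essSupR P₀ (fun ω => -X ω) = f (-w) := by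
    intro X hX hmax
    set c : Fin k → ℝ := fun i => b.repr ⟨X, hX⟩ i with hc
    have hDcX : D c = X := by
      rw [hDcoe c]
      have h : (∑ i, c i • b i) = (⟨X, hX⟩ : L) := by
        simp only [hc]; exact b.sum_repr ⟨X, hX⟩
      rw [h]
    have hfcE : f c = essSupR P₀ X := by rw [hfeq c, hDcX]; rfl
    have hfnegcE : f (-c) = essSupR P₀ (fun ω => -X ω) := by
      rw [hfeq (-c), hDneg c, hDcX]; rfl
    have hpc : p c = 1 := by rw [hpeq c, hfcE, hfnegcE]; exact hmax
    obtain ⟨n, hn, w, hw, hnwc⟩ := hdecomp c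
    obtain ⟨hfn, hfnegn⟩ := hfker n hn
    have hpn : p n = 0 := (hNmem n).1 hn
    have hpw : p w = 1 := by
      have h1 : p w ≤ p c := by
        have hwe : w = c + (-n) := by rw [← hnwc]; abel
        rw [hwe]
        calc p (c + (-n)) ≤ p c + p (-n) := hpsub _ _
          _ = p c := by rw [hpneg, hpn, add_zero]
      have h2 : p c ≤ p w := by
        rw [← hnwc]
        calc p (n + w) ≤ p n + p w := hpsub _ _
          _ = p w := by rw [hpn, zero_add]
      rw [← hpc]; exact le_antisymm h1 h2
    have hfnegeq : f (-c) = f (-w) := by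
      have h1 : f (-c) ≤ f (-w) := by
        have he : -c = -n + -w := by rw [← hnwc]; abel
        rw [he]
        calc f (-n + -w) ≤ f (-n) + f (-w) := hfsub _ _
          _ = f (-w) := by rw [hfnegn, zero_add]
      have h2 : f (-w) ≤ f (-c) := by
        have he : -w = -c + n := by rw [← hnwc]; abel
        rw [he]
        calc f (-c + n) ≤ f (-c) + f n := hfsub _ _
          _ = f (-c) := by rw [hfn, add_zero]
      exact le_antisymm h1 h2
    refine ⟨w, hw, hpw, ?_, ?_⟩
    · rw [← hfcE]
      calc f c ≤ p c := by rw [hpeq c]; exact le_max_left _ _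
        _ = 1 := hpc
    · rw [← hfnegcE]; exact hfnegeq
  rcases Set.eq_empty_or_nonempty {c : Fin k → ℝ | c ∈ W ∧ p c = 1} with hSe | hSne
  · refine ⟨1, one_pos, ?_⟩
    intro X hX hmax
    obtain ⟨w, hwW, hpw, _, _⟩ := key X hX hmax
    exact absurd (show w ∈ {c : Fin k → ℝ | c ∈ W ∧ p c = 1} from ⟨hwW, hpw⟩)
      (by rw [hSe]; exact Set.notMem_empty w)
  · obtain ⟨w₁, hw₁W, hw₁p⟩ := hSne
    have hw₁ne : w₁ ≠ 0 := by
      intro h; rw [h, hp0] at hw₁p; exact one_ne_zero hw₁p.symm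
    have hTne : Set.Nonempty {c : Fin k → ℝ | c ∈ W ∧ ‖c‖ = 1} := by
      refine ⟨‖w₁‖⁻¹ • w₁, W.smul_mem _ hw₁W, ?_⟩
      rw [norm_smul, norm_inv, norm_norm, inv_mul_cancel₀ (norm_ne_zero_iff.2 hw₁ne)]
    have hWclosed : IsClosed (W : Set (Fin k → ℝ)) := Submodule.closed_of_finiteDimensional W
    have hTcomp : IsCompact {c : Fin k → ℝ | c ∈ W ∧ ‖c‖ = 1} := by
      apply Metric.isCompact_of_isClosed_isBounded
      · have h : {c : Fin k → ℝ | c ∈ W ∧ ‖c‖ = 1}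
            = (W : Set _) ∩ (fun c : Fin k → ℝ => ‖c‖) ⁻¹' {1} := by
          ext c; simp [Set.mem_setOf_eq]
        rw [h]
        exact hWclosed.inter (isClosed_singleton.preimage continuous_norm)
      · apply Bornology.IsBounded.subset (Metric.isBounded_closedBall (x := (0 : Fin k → ℝ)) (r := 1))
        intro c hc
        rw [Metric.mem_closedBall, dist_zero_right]
        exact le_of_eq hc.2
    obtain ⟨c₀, hc₀T, hc₀min⟩ := hTcomp.exists_isMinOn hTne hpcont.continuousOn
    have hmpos : 0 < p c₀ := by
      rcases (hpnn c₀).lt_or_eq with h | h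
      · exact h
      · exfalso
        have hc₀N : c₀ ∈ N := (hNmem c₀).2 h.symm
        have h0 : c₀ = 0 := (Submodule.disjoint_def.1 hW.disjoint) c₀ hc₀N hc₀T.1
        rw [h0] at hc₀T
        simp at hc₀T
    have hplow : ∀ c ∈ W, p c₀ * ‖c‖ ≤ p c := by
      intro c hcW
      rcases eq_or_ne c 0 with h | h
      · rw [h]; simp [hp0, hpnn 0]
      · have hn0 : ‖c‖ ≠ 0 := norm_ne_zero_iff.2 h
        have hnpos : 0 < ‖c‖ := lt_of_le_of_ne (norm_nonneg c) (Ne.symm hn0)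
        have hu : (‖c‖⁻¹ • c) ∈ {c : Fin k → ℝ | c ∈ W ∧ ‖c‖ = 1} := ⟨W.smul_mem _ hcW, by
          rw [norm_smul, norm_inv, norm_norm, inv_mul_cancel₀ hn0]⟩
        have hmin := (isMinOn_iff.1 hc₀min) _ hu
        rw [hpsmul, abs_inv, abs_norm] at hmin
        calc p c₀ * ‖c‖ ≤ (‖c‖⁻¹ * p c) * ‖c‖ := by nlinarith [hmin, hnpos]
          _ = p c := by field_simp
    have hScomp : IsCompact {c : Fin k → ℝ | c ∈ W ∧ p c = 1} := by
      apply Metric.isCompact_of_isClosed_isBounded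
      · have h : {c : Fin k → ℝ | c ∈ W ∧ p c = 1} = (W : Set _) ∩ p ⁻¹' {1} := by
          ext c; simp [Set.mem_setOf_eq]
        rw [h]
        exact hWclosed.inter (isClosed_singleton.preimage hpcont)
      · apply Bornology.IsBounded.subset
          (Metric.isBounded_closedBall (x := (0 : Fin k → ℝ)) (r := (p c₀)⁻¹))
        intro c hc
        rw [Metric.mem_closedBall, dist_zero_right]
        have h1 := hplow c hc.1
        rw [hc.2] at h1
        rw [← one_div, le_div_iff₀ hmpos]
        linarith [h1]
    have hgcont : Continuous (fun c : Fin k → ℝ => f (-c)) := hfcont.comp continuous_neg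
    obtain ⟨w₀, hw₀S, hw₀min⟩ := hScomp.exists_isMinOn ⟨w₁, hw₁W, hw₁p⟩ hgcont.continuousOn
    have hδpos : 0 < f (-w₀) := by
      rcases max_cases (f w₀) (f (-w₀)) with ⟨heq, _⟩ | ⟨heq, _⟩
      · have hf1 : f w₀ = 1 := by rw [← heq, ← hpeq w₀]; exact hw₀S.2
        have hpos : 0 < Stmt12Aux.E P₀ (D w₀) := by rw [← hfeq w₀, hf1]; norm_num
        have h1 : P₀ {ω | 0 < D w₀ ω} ≠ 0 := Stmt12Aux.meas_pos_of_E_pos (hDb w₀) hpos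
        have h2 : 0 < P₀ {ω | D w₀ ω < 0} := (hna (D w₀) (hDL w₀)).1 (pos_iff_ne_zero.2 h1)
        have h3 : 0 < Stmt12Aux.E P₀ (fun ω => -(D w₀ ω)) :=
          Stmt12Aux.E_neg_pos (hDb w₀) (pos_iff_ne_zero.1 h2)
        have he : f (-w₀) = Stmt12Aux.E P₀ (fun ω => -(D w₀ ω)) := by
          rw [hfeq (-w₀), hDneg w₀]
        rw [he]; exact h3
      · have hf1 : f (-w₀) = 1 := by rw [← heq, ← hpeq w₀]; exact hw₀S.2
        rw [hf1]; norm_num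
    refine ⟨(f (-w₀))⁻¹, inv_pos.2 hδpos, ?_⟩
    intro X hX hmax
    obtain ⟨w, hwW, hpw, hle1, hEneg⟩ := key X hX hmax
    have hwS : w ∈ {c : Fin k → ℝ | c ∈ W ∧ p c = 1} := ⟨hwW, hpw⟩
    have hδle : f (-w₀) ≤ f (-w) := (isMinOn_iff.1 hw₀min) _ hwS
    have hEpos : f (-w₀) ≤ essSupR P₀ (fun ω => -X ω) := by rw [hEneg]; exact hδle
    calc essSupR P₀ X ≤ 1 := hle1
      _ = (f (-w₀))⁻¹ * f (-w₀) := by rw [inv_mul_cancel₀ hδpos.ne']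
      _ ≤ (f (-w₀))⁻¹ * essSupR P₀ (fun ω => -X ω) :=
        mul_le_mul_of_nonneg_left hEpos (inv_pos.2 hδpos).le
end

section
/- Suppose $P_0$ is atomic with infinitely many atoms $A_1, A_2, \dots$ forming a partition of $\Omega$, and suppose $\lim_n X|A_n = 0$ for every $X \in L$ (where $X|A_n$ is the a.s.-constant value of $X$ on $A_n$). If $P_1$ is a pure finitely additive probability with $P_1 \ll P_0$, then $P_1(A_n) = 0$ for all $n$ and $E_{P_1}(X) = 0$ for all $X \in L$. -/
open MeasureTheory Set

open FAP

/-- if P₀ is atomic with atoms (A n) and every X ∈ L has a.s.-constant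
values on the atoms tending to 0, then every pure finitely additive P₁ ≪ P₀ gives
each atom mass 0 and integrates every X ∈ L to 0. -/
theorem stmt14 {Ω : Type*} [MeasurableSpace Ω] (P₀ : Measure Ω) [IsProbabilityMeasure P₀]
    (A : ℕ → Set Ω) (hAm : ∀ n, MeasurableSet (A n))
    (hAdisj : Pairwise (Function.onFun Disjoint A)) (hAcover : (⋃ n, A n) = univ)
    (hatom : ∀ n, 0 < P₀ (A n) ∧
      ∀ B : Set Ω, MeasurableSet B → P₀ (B ∩ A n) = 0 ∨ P₀ (B ∩ A n) = P₀ (A n))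
    (L : Submodule ℝ (Ω → ℝ))
    (hL : ∀ X ∈ L, Measurable X ∧ ∃ M : ℝ, ∀ ω, |X ω| ≤ M)
    (hconst : ∀ X ∈ L, ∃ r : ℕ → ℝ,
      (∀ n, P₀ {ω | ω ∈ A n ∧ X ω ≠ r n} = 0) ∧
      Filter.Tendsto r Filter.atTop (nhds 0))
    (P₁ : Set Ω → ℝ) (hP₁ : FAP.IsFAPm P₁) (hpure : FAP.IsPure P₁)
    (hac : FAP.AC P₁ P₀) :
    (∀ n, P₁ (A n) = 0) ∧ ∀ X ∈ L, FAP.faIntegral P₁ X = 0 := by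
  obtain ⟨h1, hpos, hadd⟩ := hP₁
  -- P₁ ∅ = 0
  have hempty : P₁ ∅ = 0 := by
    have := hadd ∅ ∅ MeasurableSet.empty MeasurableSet.empty (disjoint_bot_left)
    simp at this
    linarith
  -- monotonicity
  have hmono : ∀ C D : Set Ω, MeasurableSet C → MeasurableSet D → C ⊆ D → P₁ C ≤ P₁ D := by
    intro C D hC hD hCD
    have hdm : MeasurableSet (D \ C) := hD.diff hC
    have : P₁ (C ∪ (D \ C)) = P₁ C + P₁ (D \ C) :=
      hadd C (D \ C) hC hdm disjoint_sdiff_self_right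
    rw [Set.union_diff_cancel hCD] at this
    have := hpos (D \ C) hdm
    linarith
  -- subadditivity
  have hsub : ∀ C D : Set Ω, MeasurableSet C → MeasurableSet D → P₁ (C ∪ D) ≤ P₁ C + P₁ D := by
    intro C D hC hD
    have hdm : MeasurableSet (D \ C) := hD.diff hC
    have h1' : P₁ (C ∪ (D \ C)) = P₁ C + P₁ (D \ C) :=
      hadd C (D \ C) hC hdm disjoint_sdiff_self_right
    rw [Set.union_diff_self] at h1'
    have h2' : P₁ (D \ C) ≤ P₁ D := hmono _ _ hdm hD diff_subset
    linarith
  -- Part 1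
  have part1 : ∀ n, P₁ (A n) = 0 := by
    intro n
    have hc0 : 0 ≤ P₁ (A n) := hpos _ (hAm n)
    set c := P₁ (A n) with hc
    by_contra hne
    have hcpos : 0 < c := lt_of_le_of_ne hc0 (Ne.symm hne)
    obtain ⟨hApos, hAatom⟩ := hatom n
    have hAfin : P₀ (A n) ≠ ⊤ := measure_ne_top _ _
    have hAne : P₀ (A n) ≠ 0 := ne_of_gt hApos
    set Γ : Measure Ω := (ENNReal.ofReal c / P₀ (A n)) • P₀.restrict (A n) with hΓ
    have hΓle : ∀ B : Set Ω, MeasurableSet B → Γ B ≤ ENNReal.ofReal (P₁ B) := by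
      intro B hB
      have hΓB : Γ B = ENNReal.ofReal c / P₀ (A n) * P₀ (B ∩ A n) := by
        rw [hΓ, Measure.smul_apply, Measure.restrict_apply hB, smul_eq_mul]
      rcases hAatom B hB with h0 | hfull
      · rw [hΓB, h0, mul_zero]; exact zero_le
      · have : Γ B = ENNReal.ofReal c := by
          rw [hΓB, hfull, ENNReal.div_mul_cancel hAne hAfin]
        rw [this]
        apply ENNReal.ofReal_le_ofReal
        -- P₀ (A n \ B) = 0
        have hsplit : P₀ (A n ∩ B) + P₀ (A n \ B) = P₀ (A n) :=
          measure_inter_add_diff (A n) hB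
        rw [Set.inter_comm] at hsplit
        rw [hfull] at hsplit
        have hdiff0 : P₀ (A n \ B) = 0 := by
          have h' : P₀ (A n) + P₀ (A n \ B) = P₀ (A n) + 0 := by
            rw [add_zero]; exact hsplit
          exact (ENNReal.add_right_inj hAfin).mp h'
        have hP₁diff : P₁ (A n \ B) = 0 := hac _ ((hAm n).diff hB) hdiff0
        have hsplit1 : P₁ ((A n ∩ B) ∪ (A n \ B)) = P₁ (A n ∩ B) + P₁ (A n \ B) :=
          hadd _ _ ((hAm n).inter hB) ((hAm n).diff hB)
            (disjoint_sdiff_self_right.mono_left Set.inter_subset_right)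
        rw [Set.inter_union_diff] at hsplit1
        have : c = P₁ (A n ∩ B) := by rw [hc, hsplit1, hP₁diff, add_zero]
        rw [this]
        exact hmono _ _ ((hAm n).inter hB) hB inter_subset_right
    have hΓ0 := hpure Γ hΓle
    have : Γ (A n) = ENNReal.ofReal c := by
      rw [hΓ, Measure.smul_apply, Measure.restrict_apply (hAm n), Set.inter_self,
        smul_eq_mul, ENNReal.div_mul_cancel hAne hAfin]
    rw [hΓ0] at this
    simp at this
    exact absurd this (not_le.mpr hcpos)
  refine ⟨part1, ?_⟩
  -- Part 2
  intro X hX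
  obtain ⟨hXm, -⟩ := hL X hX
  obtain ⟨r, hr0, hrlim⟩ := hconst X hX
  -- the bad set
  set N₀ : Set Ω := ⋃ n, (A n ∩ {ω | X ω ≠ r n}) with hN₀
  have hN₀m : MeasurableSet N₀ :=
    MeasurableSet.iUnion fun n => (hAm n).inter ((hXm (measurableSet_singleton (r n))).compl)
  have hN₀null : P₀ N₀ = 0 := by
    apply measure_iUnion_null
    intro n
    have : A n ∩ {ω | X ω ≠ r n} = {ω | ω ∈ A n ∧ X ω ≠ r n} := rfl
    rw [this]; exact hr0 n
  have hP₁N₀ : P₁ N₀ = 0 := hac _ hN₀m hN₀null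
  -- finite unions of atoms have P₁-measure 0
  have hSm : ∀ N : ℕ, MeasurableSet (⋃ i ∈ Finset.range N, A i) := by
    intro N; exact MeasurableSet.biUnion (Finset.range N).countable_toSet fun i _ => hAm i
  have hS0 : ∀ N : ℕ, P₁ (⋃ i ∈ Finset.range N, A i) = 0 := by
    intro N
    induction N with
    | zero => simpa using hempty
    | succ N ih =>
      have hun : (⋃ i ∈ Finset.range (N + 1), A i) =
          (⋃ i ∈ Finset.range N, A i) ∪ A N := by
        rw [Finset.range_add_one]
        simp [Set.biUnion_insert, Set.union_comm]
      rw [hun]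
      have hle := hsub _ _ (hSm N) (hAm N)
      rw [ih, part1 N, add_zero] at hle
      have hge := hpos _ ((hSm N).union (hAm N))
      linarith
  -- key: big/small sets
  have hkey : ∀ C : Set Ω, MeasurableSet C →
      (∀ ω n, ω ∈ C → ω ∈ A n → X ω ≠ r n) → P₁ C = 0 := by
    intro C hCm hC
    have hsubset : C ⊆ N₀ := by
      intro ω hω
      have : ω ∈ ⋃ n, A n := by rw [hAcover]; trivial
      obtain ⟨n, hn⟩ := Set.mem_iUnion.mp this
      exact Set.mem_iUnion.mpr ⟨n, hn, hC ω n hω hn⟩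
    have h1' := hmono C N₀ hCm hN₀m hsubset
    have h2' := hpos C hCm
    linarith
  -- for t > 0 : P₁ {X > t} = 0
  have hposT : ∀ t : ℝ, 0 < t → P₁ {ω | t < X ω} = 0 := by
    intro t ht
    obtain ⟨N, hN⟩ := Metric.tendsto_atTop.mp hrlim t ht
    set C : Set Ω := {ω | t < X ω} \ (⋃ i ∈ Finset.range N, A i) with hC
    have hCm : MeasurableSet C := (measurableSet_lt measurable_const hXm).diff (hSm N)
    have hC0 : P₁ C = 0 := by
      apply hkey C hCm
      intro ω n hω hn hXr
      rcases lt_or_ge n N with h | h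
      · exact hω.2 (Set.mem_biUnion (Finset.mem_range.mpr h) hn)
      · have := hN n h
        rw [Real.dist_eq, sub_zero] at this
        have hlt : t < X ω := hω.1
        rw [hXr] at hlt
        have : r n < t := lt_of_abs_lt this
        linarith
    have hcup : {ω | t < X ω} ⊆ C ∪ (⋃ i ∈ Finset.range N, A i) := by
      intro ω hω
      by_cases h : ω ∈ ⋃ i ∈ Finset.range N, A i
      · exact Or.inr h
      · exact Or.inl ⟨hω, h⟩
    have h1' := hmono _ _ (measurableSet_lt measurable_const hXm)
      (hCm.union (hSm N)) hcup
    have h2' := hsub _ _ hCm (hSm N)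
    have h3' := hpos {ω | t < X ω} (measurableSet_lt measurable_const hXm)
    rw [hC0, hS0 N] at h2'
    linarith
  -- for t < 0 : P₁ {X > t} = 1
  have hnegT : ∀ t : ℝ, t < 0 → P₁ {ω | t < X ω} = 1 := by
    intro t ht
    obtain ⟨N, hN⟩ := Metric.tendsto_atTop.mp hrlim (-t) (by linarith)
    set D : Set Ω := {ω | X ω ≤ t} with hD
    have hDm : MeasurableSet D := measurableSet_le hXm measurable_const
    set C : Set Ω := D \ (⋃ i ∈ Finset.range N, A i) with hC
    have hCm : MeasurableSet C := hDm.diff (hSm N)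
    have hC0 : P₁ C = 0 := by
      apply hkey C hCm
      intro ω n hω hn hXr
      rcases lt_or_ge n N with h | h
      · exact hω.2 (Set.mem_biUnion (Finset.mem_range.mpr h) hn)
      · have := hN n h
        rw [Real.dist_eq, sub_zero] at this
        have hle : X ω ≤ t := hω.1
        rw [hXr] at hle
        have : -(-t) < r n := neg_lt_of_abs_lt this
        simp at this
        linarith
    have hcup : D ⊆ C ∪ (⋃ i ∈ Finset.range N, A i) := by
      intro ω hω
      by_cases h : ω ∈ ⋃ i ∈ Finset.range N, A i
      · exact Or.inr h
      · exact Or.inl ⟨hω, h⟩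
    have hD0 : P₁ D = 0 := by
      have h1' := hmono _ _ hDm (hCm.union (hSm N)) hcup
      have h2' := hsub _ _ hCm (hSm N)
      have h3' := hpos _ hDm
      rw [hC0, hS0 N] at h2'
      linarith
    have hsplit : P₁ ({ω | t < X ω} ∪ D) = P₁ {ω | t < X ω} + P₁ D := by
      apply hadd _ _ (measurableSet_lt measurable_const hXm) hDm
      rw [Set.disjoint_left]
      intro ω h1'' h2''
      simp only [hD, Set.mem_setOf_eq] at h1'' h2''
      linarith
    have huniv : ({ω | t < X ω} ∪ D) = univ := by
      ext ω; simp [hD, le_or_gt, or_comm, lt_or_ge]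
    rw [huniv, h1, hD0, add_zero] at hsplit
    linarith
  -- conclude
  unfold FAP.faIntegral
  have hI1 : (∫ t in Ioi (0 : ℝ), P₁ {ω | t < X ω}) = 0 := by
    rw [setIntegral_congr_fun (g := fun _ => (0:ℝ)) measurableSet_Ioi
      (fun t ht => hposT t ht)]
    simp
  have hI2 : (∫ t in Iio (0 : ℝ), (1 - P₁ {ω | t < X ω})) = 0 := by
    rw [setIntegral_congr_fun (g := fun _ => (0:ℝ)) measurableSet_Iio
      (fun t ht => by simp [hnegT t ht])]
    simp
  rw [hI1, hI2, sub_zero]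
end
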